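/- arXiv:1412.5746 — 8 statements merged into one kernel-verified Lean document; each statement's English description precedes it below -/
import Mathlib

section
/- Let A be a complex Banach algebra and let K, L ∈ A. Then for every r ≥ 0 one has ‖exp(rL)·K − K·exp(rL)‖ ≤ r·exp(r‖L‖)·‖[K,L]‖, where [K,L] = KL − LK. -/
open NormedSpace

section Aux
open Nat

variable {A : Type*} [NormedRing A] [NormedAlgebra ℂ A] [CompleteSpace A]

omit [NormedAlgebra ℂ A] [CompleteSpace A] in
lemma pow_mul_norm_le (a : A) : ∀ (n : ℕ) (y : A), ‖a ^ n * y‖ ≤ ‖a‖ ^ n * ‖y‖ := by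
  intro n
  induction n with
  | zero => simp
  | succ n ih =>
    intro y
    rw [pow_succ, mul_assoc, pow_succ, mul_assoc]
    calc ‖a ^ n * (a * y)‖ ≤ ‖a‖ ^ n * ‖a * y‖ := ih (a * y)
    _ ≤ ‖a‖ ^ n * (‖a‖ * ‖y‖) :=
        mul_le_mul_of_nonneg_left (norm_mul_le a y) (by positivity)

lemma norm_exp_mul_le (a y : A) : ‖exp a * y‖ ≤ Real.exp ‖a‖ * ‖y‖ := by
  have hs : Summable fun n : ℕ => ((n !⁻¹ : ℂ) • a ^ n) := expSeries_summable' a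
  have h1 : exp a * y = ∑' n : ℕ, ((n !⁻¹ : ℂ) • a ^ n) * y := by
    rw [exp_eq_tsum ℂ, hs.tsum_mul_right]
  have hbound : ∀ n : ℕ, ‖((n !⁻¹ : ℂ) • a ^ n) * y‖ ≤ ‖a‖ ^ n / n ! * ‖y‖ := by
    intro n
    rw [smul_mul_assoc, norm_smul]
    have hn : ‖(n !⁻¹ : ℂ)‖ = ((n ! : ℝ))⁻¹ := by simp
    rw [hn, show ‖a‖ ^ n / ↑n ! * ‖y‖ = (↑n ! : ℝ)⁻¹ * (‖a‖ ^ n * ‖y‖) by ring]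
    exact mul_le_mul_of_nonneg_left (pow_mul_norm_le a n y) (by positivity)
  have hs2 : Summable fun n : ℕ => ‖a‖ ^ n / n ! * ‖y‖ :=
    (Real.summable_pow_div_factorial ‖a‖).mul_right _
  have hsum : Summable fun n : ℕ => ‖((n !⁻¹ : ℂ) • a ^ n) * y‖ :=
    hs2.of_nonneg_of_le (fun n => norm_nonneg _) hbound
  have h2 : ∑' n : ℕ, ‖a‖ ^ n / n ! * ‖y‖ = Real.exp ‖a‖ * ‖y‖ := by
    rw [(Real.summable_pow_div_factorial ‖a‖).tsum_mul_right, Real.exp_eq_exp_ℝ,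
      exp_eq_tsum_div]
  calc ‖exp a * y‖ = ‖∑' n : ℕ, ((n !⁻¹ : ℂ) • a ^ n) * y‖ := by rw [h1]
  _ ≤ ∑' n : ℕ, ‖((n !⁻¹ : ℂ) • a ^ n) * y‖ := norm_tsum_le_tsum_norm hsum
  _ ≤ ∑' n : ℕ, ‖a‖ ^ n / n ! * ‖y‖ := Summable.tsum_le_tsum hbound hsum hs2
  _ = Real.exp ‖a‖ * ‖y‖ := h2

omit [NormedAlgebra ℂ A] [CompleteSpace A] in
lemma mul_pow_norm_le (b : A) : ∀ (n : ℕ) (y : A), ‖y * b ^ n‖ ≤ ‖y‖ * ‖b‖ ^ n := by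
  intro n
  induction n with
  | zero => simp
  | succ n ih =>
    intro y
    rw [pow_succ, ← mul_assoc, pow_succ, ← mul_assoc]
    calc ‖y * b ^ n * b‖ ≤ ‖y * b ^ n‖ * ‖b‖ := norm_mul_le _ _
    _ ≤ ‖y‖ * ‖b‖ ^ n * ‖b‖ :=
        mul_le_mul_of_nonneg_right (ih y) (norm_nonneg b)

lemma norm_mul_exp_le (y b : A) : ‖y * exp b‖ ≤ ‖y‖ * Real.exp ‖b‖ := by
  have hs : Summable fun n : ℕ => ((n !⁻¹ : ℂ) • b ^ n) := expSeries_summable' b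
  have h1 : y * exp b = ∑' n : ℕ, y * ((n !⁻¹ : ℂ) • b ^ n) := by
    rw [exp_eq_tsum ℂ, hs.tsum_mul_left]
  have hbound : ∀ n : ℕ, ‖y * ((n !⁻¹ : ℂ) • b ^ n)‖ ≤ ‖y‖ * (‖b‖ ^ n / n !) := by
    intro n
    rw [mul_smul_comm, norm_smul]
    have hn : ‖(n !⁻¹ : ℂ)‖ = ((n ! : ℝ))⁻¹ := by simp
    rw [hn, show ‖y‖ * (‖b‖ ^ n / ↑n !) = (↑n ! : ℝ)⁻¹ * (‖y‖ * ‖b‖ ^ n) by ring]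
    exact mul_le_mul_of_nonneg_left (mul_pow_norm_le b n y) (by positivity)
  have hs2 : Summable fun n : ℕ => ‖y‖ * (‖b‖ ^ n / n !) :=
    (Real.summable_pow_div_factorial ‖b‖).mul_left _
  have hsum : Summable fun n : ℕ => ‖y * ((n !⁻¹ : ℂ) • b ^ n)‖ :=
    hs2.of_nonneg_of_le (fun n => norm_nonneg _) hbound
  have h2 : ∑' n : ℕ, ‖y‖ * (‖b‖ ^ n / n !) = ‖y‖ * Real.exp ‖b‖ := by
    rw [(Real.summable_pow_div_factorial ‖b‖).tsum_mul_left, Real.exp_eq_exp_ℝ,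
      exp_eq_tsum_div]
  calc ‖y * exp b‖ = ‖∑' n : ℕ, y * ((n !⁻¹ : ℂ) • b ^ n)‖ := by rw [h1]
  _ ≤ ∑' n : ℕ, ‖y * ((n !⁻¹ : ℂ) • b ^ n)‖ := norm_tsum_le_tsum_norm hsum
  _ ≤ ∑' n : ℕ, ‖y‖ * (‖b‖ ^ n / n !) := Summable.tsum_le_tsum hbound hsum hs2
  _ = ‖y‖ * Real.exp ‖b‖ := h2

theorem commutator_exp_bound_aux (K L : A) :
    ∀ r : ℝ, 0 ≤ r →
      ‖exp (r • L) * K - K * exp (r • L)‖ ≤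
        r * Real.exp (r * ‖L‖) * ‖K * L - L * K‖ := by
  intro r hr
  have hexp : (exp : A → A) = exp := rfl
  set g : ℝ → A := fun t => exp (t • L) * K * exp ((r - t) • L) with hg_def
  set D : ℝ → A := fun s => exp (s • L) * (L * K - K * L) * exp ((r - s) • L)
    with hD_def
  have hg : ∀ s : ℝ, HasDerivAt g (D s) s := by
    intro s
    have h1 : HasDerivAt (fun u : ℝ => exp (u • L)) (exp (s • L) * L) s := by
      have := hasDerivAt_exp_smul_const (𝕂 := ℝ) L s
      simpa [hexp] using this
    have ha := hasDerivAt_exp_smul_const (𝕂 := ℝ) L (r - s)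
    have hb : HasDerivAt (fun u : ℝ => r - u) (-1) s := by
      simpa using (hasDerivAt_id s).const_sub r
    have h2 : HasDerivAt (fun u : ℝ => exp ((r - u) • L))
        (-(exp ((r - s) • L) * L)) s := by
      have := ha.scomp s hb
      simpa [Function.comp_def] using this
    have h3 := (h1.mul_const K).mul h2
    convert h3 using 1
    · rfl
    have hcomm : exp ((r - s) • L) * L = L * exp ((r - s) • L) :=
      (((Commute.refl L).smul_left (r - s)).exp_left).eq
    simp only [hD_def]
    rw [mul_neg, hcomm]
    noncomm_ring
  have hbound : ∀ s ∈ Set.Ico (0:ℝ) r,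
      ‖D s‖ ≤ Real.exp (r * ‖L‖) * ‖K * L - L * K‖ := by
    intro s hs
    obtain ⟨hs0, hsr⟩ := hs
    have hns : ‖s • L‖ = s * ‖L‖ := by
      rw [norm_smul, Real.norm_eq_abs, abs_of_nonneg hs0]
    have hnr : ‖(r - s) • L‖ = (r - s) * ‖L‖ := by
      rw [norm_smul, Real.norm_eq_abs, abs_of_nonneg (by linarith)]
    calc ‖D s‖ = ‖exp (s • L) * ((L * K - K * L) * exp ((r - s) • L))‖ := by
          simp only [hD_def]; rw [mul_assoc]
    _ ≤ Real.exp ‖s • L‖ * ‖(L * K - K * L) * exp ((r - s) • L)‖ :=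
          norm_exp_mul_le _ _
    _ ≤ Real.exp ‖s • L‖ * (‖L * K - K * L‖ * Real.exp ‖(r - s) • L‖) :=
          mul_le_mul_of_nonneg_left (norm_mul_exp_le _ _) (Real.exp_pos _).le
    _ = Real.exp (r * ‖L‖) * ‖K * L - L * K‖ := by
          rw [hns, hnr, norm_sub_rev,
            show Real.exp (s * ‖L‖) * (‖K * L - L * K‖ * Real.exp ((r - s) * ‖L‖))
              = Real.exp (s * ‖L‖) * Real.exp ((r - s) * ‖L‖) * ‖K * L - L * K‖ by ring,
            ← Real.exp_add, show s * ‖L‖ + (r - s) * ‖L‖ = r * ‖L‖ by ring]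
  have key := norm_image_sub_le_of_norm_deriv_le_segment'
    (f := g) (f' := D) (C := Real.exp (r * ‖L‖) * ‖K * L - L * K‖)
    (fun s _ => (hg s).hasDerivWithinAt) hbound r (Set.right_mem_Icc.2 hr)
  have hg0 : g 0 = K * exp (r • L) := by simp [hg_def, exp_zero]
  have hgr : g r = exp (r • L) * K := by simp [hg_def, exp_zero]
  rw [hg0, hgr] at key
  calc ‖exp (r • L) * K - K * exp (r • L)‖
      ≤ Real.exp (r * ‖L‖) * ‖K * L - L * K‖ * (r - 0) := key
  _ = r * Real.exp (r * ‖L‖) * ‖K * L - L * K‖ := by ring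

end Aux

/-- **Commutator bound with an exponential** (Banach-algebra form of Lemma 2).
For elements `K, L` of a complex Banach algebra and every `r ≥ 0`,
`‖exp(rL)·K − K·exp(rL)‖ ≤ r·exp(r‖L‖)·‖[K,L]‖` where `[K,L] = KL − LK`. -/
theorem commutator_exp_bound {A : Type*} [NormedRing A] [NormedAlgebra ℂ A]
    [CompleteSpace A] (K L : A) :
    ∀ r : ℝ, 0 ≤ r →
      ‖exp (r • L) * K - K * exp (r • L)‖ ≤
        r * Real.exp (r * ‖L‖) * ‖K * L - L * K‖ :=
  commutator_exp_bound_aux K L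
end

section
/- Let A be a complex Banach algebra, let K, L ∈ A, let t ≥ 0, and assume that ‖exp(sK)‖ ≤ 1, ‖exp(sL)‖ ≤ 1 and ‖exp(s(K+L))‖ ≤ 1 for all s ∈ [0,t]. If moreover t·‖K‖ ≤ 1, then ‖exp(t(K+L)) − exp(tK)·exp(tL)‖ ≤ t²·‖[K,L]‖. -/
open NormedSpace

/-- **Dissipative first-order Trotter–Suzuki product formula** (Lemma 3).
If `K, L` are elements of a complex Banach algebra whose exponentials
`exp(sK)`, `exp(sL)`, `exp(s(K+L))` are contractions for all `s ∈ [0,t]`, and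
`t·‖K‖ ≤ 1`, then `‖exp(t(K+L)) − exp(tK)·exp(tL)‖ ≤ t²·‖[K,L]‖`. -/
theorem trotter_first_order_bound {A : Type*} [NormedRing A] [NormedAlgebra ℂ A]
    [CompleteSpace A] (K L : A) (t : ℝ) (ht : 0 ≤ t)
    (hK : ∀ s ∈ Set.Icc (0:ℝ) t, ‖exp (s • K)‖ ≤ 1)
    (hL : ∀ s ∈ Set.Icc (0:ℝ) t, ‖exp (s • L)‖ ≤ 1)
    (hKL : ∀ s ∈ Set.Icc (0:ℝ) t, ‖exp (s • (K + L))‖ ≤ 1)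
    (htK : t * ‖K‖ ≤ 1) :
    ‖exp (t • (K + L)) - exp (t • K) * exp (t • L)‖ ≤
      t ^ 2 * ‖K * L - L * K‖ := by
  -- derivative of `s ↦ exp(s • X)`
  have expd : ∀ (X : A) (u : ℝ),
      HasDerivAt (fun v : ℝ => exp (v • X)) (exp (u • X) * X) u := by
    intro X u
    exact hasDerivAt_exp_smul_const X u
  -- `exp(u • X)` commutes with `X`
  have comm : ∀ (X : A) (u : ℝ), exp (u • X) * X = X * exp (u • X) := by
    intro X u
    exact (((Commute.refl X).smul_left u).exp_left).eq
  -- derivative of `v ↦ exp((c - v) • X)`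
  have expd' : ∀ (X : A) (c u : ℝ),
      HasDerivAt (fun v : ℝ => exp ((c - v) • X))
        ((-1 : ℝ) • (exp ((c - u) • X) * X)) u := by
    intro X c u
    have hh : HasDerivAt (fun v : ℝ => c - v) (-1 : ℝ) u := by
      simpa using (hasDerivAt_id u).const_sub c
    exact (expd X (c - u)).scomp_of_eq u hh rfl
  -- key commutator bound : ‖[exp(sK), L]‖ ≤ s ‖[K,L]‖
  have key : ∀ s ∈ Set.Icc (0:ℝ) t,
      ‖exp (s • K) * L - L * exp (s • K)‖ ≤ s * ‖K * L - L * K‖ := by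
    intro s hs
    obtain ⟨hs0, hst⟩ := hs
    have sub : Set.Icc (0:ℝ) s ⊆ Set.Icc 0 t := Set.Icc_subset_Icc le_rfl hst
    have hderiv : ∀ u ∈ Set.Icc (0:ℝ) s,
        HasDerivWithinAt (fun u => exp (u • K) * L * exp ((s - u) • K))
          (exp (u • K) * (K * L - L * K) * exp ((s - u) • K)) (Set.Icc 0 s) u := by
      intro u _
      have h3 := ((expd K u).mul_const L).mul (expd' K s u)
      refine HasDerivAt.hasDerivWithinAt ?_
      convert h3 using 1
      case e'_4 => rfl
      case e'_8 => rfl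
      rw [neg_one_smul, comm K (s - u)]
      noncomm_ring
    have bound : ∀ u ∈ Set.Icc (0:ℝ) s,
        ‖exp (u • K) * (K * L - L * K) * exp ((s - u) • K)‖ ≤ ‖K * L - L * K‖ := by
      intro u hu
      have ha := hK u (sub hu)
      have hc : ‖exp ((s - u) • K)‖ ≤ 1 := by
        refine hK (s - u) ⟨by linarith [hu.1, hu.2], by linarith [hu.1, hu.2]⟩
      calc ‖exp (u • K) * (K * L - L * K) * exp ((s - u) • K)‖
          ≤ ‖exp (u • K)‖ * ‖K * L - L * K‖ * ‖exp ((s - u) • K)‖ :=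
            (norm_mul_le _ _).trans
              (mul_le_mul_of_nonneg_right (norm_mul_le _ _) (norm_nonneg _))
        _ ≤ 1 * ‖K * L - L * K‖ * 1 :=
            mul_le_mul (mul_le_mul_of_nonneg_right ha (norm_nonneg _)) hc
              (norm_nonneg _) (by positivity)
        _ = ‖K * L - L * K‖ := by ring
    have hmv := (convex_Icc (0:ℝ) s).norm_image_sub_le_of_norm_hasDerivWithin_le
      hderiv bound (Set.left_mem_Icc.2 hs0) (Set.right_mem_Icc.2 hs0)
    have h0 : ((fun u => exp (u • K) * L * exp ((s - u) • K)) s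
        - (fun u => exp (u • K) * L * exp ((s - u) • K)) 0)
        = exp (s • K) * L - L * exp (s • K) := by
      simp [sub_self, zero_smul, exp_zero]
    rw [h0] at hmv
    have : ‖s - (0:ℝ)‖ = s := by
      rw [sub_zero, Real.norm_eq_abs, abs_of_nonneg hs0]
    rw [this] at hmv
    linarith [hmv, mul_comm (‖K * L - L * K‖) s]
  -- the interpolating function
  have hderiv : ∀ s ∈ Set.Icc (0:ℝ) t,
      HasDerivWithinAt (fun s => exp ((t - s) • (K + L)) * (exp (s • K) * exp (s • L)))
        (exp ((t - s) • (K + L)) *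
          ((exp (s • K) * L - L * exp (s • K)) * exp (s • L))) (Set.Icc 0 t) s := by
    intro s _
    have h3 := (expd' (K + L) t s).mul ((expd K s).mul (expd L s))
    refine HasDerivAt.hasDerivWithinAt ?_
    convert h3 using 1
    case e'_4 => rfl
    case e'_8 => rfl
    simp only [Pi.mul_apply]
    rw [neg_one_smul, comm K s, comm L s]
    noncomm_ring
  have bound : ∀ s ∈ Set.Icc (0:ℝ) t,
      ‖exp ((t - s) • (K + L)) *
        ((exp (s • K) * L - L * exp (s • K)) * exp (s • L))‖
        ≤ t * ‖K * L - L * K‖ := by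
    intro s hs
    have he : ‖exp ((t - s) • (K + L))‖ ≤ 1 :=
      hKL (t - s) ⟨by linarith [hs.1, hs.2], by linarith [hs.1, hs.2]⟩
    have hb : ‖exp (s • L)‖ ≤ 1 := hL s hs
    have hk := key s hs
    have hst : s * ‖K * L - L * K‖ ≤ t * ‖K * L - L * K‖ :=
      mul_le_mul_of_nonneg_right hs.2 (norm_nonneg _)
    calc ‖exp ((t - s) • (K + L)) *
          ((exp (s • K) * L - L * exp (s • K)) * exp (s • L))‖
        ≤ ‖exp ((t - s) • (K + L))‖ *
            (‖exp (s • K) * L - L * exp (s • K)‖ * ‖exp (s • L)‖) :=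
          (norm_mul_le _ _).trans
            (mul_le_mul_of_nonneg_left (norm_mul_le _ _) (norm_nonneg _))
      _ ≤ 1 * (t * ‖K * L - L * K‖ * 1) := by
          have hN : (0:ℝ) ≤ t * ‖K * L - L * K‖ := mul_nonneg ht (norm_nonneg _)
          have hk' : ‖exp (s • K) * L - L * exp (s • K)‖ ≤ t * ‖K * L - L * K‖ :=
            hk.trans hst
          exact mul_le_mul he
            (mul_le_mul hk' hb (norm_nonneg _) hN)
            (mul_nonneg (norm_nonneg _) (norm_nonneg _)) zero_le_one
      _ = t * ‖K * L - L * K‖ := by ring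
  have hmv := (convex_Icc (0:ℝ) t).norm_image_sub_le_of_norm_hasDerivWithin_le
    hderiv bound (Set.left_mem_Icc.2 ht) (Set.right_mem_Icc.2 ht)
  have h0 : ((fun s => exp ((t - s) • (K + L)) * (exp (s • K) * exp (s • L))) t
      - (fun s => exp ((t - s) • (K + L)) * (exp (s • K) * exp (s • L))) 0)
      = exp (t • K) * exp (t • L) - exp (t • (K + L)) := by
    simp [sub_self, zero_smul, exp_zero]
  rw [h0] at hmv
  have hnt : ‖t - (0:ℝ)‖ = t := by
    rw [sub_zero, Real.norm_eq_abs, abs_of_nonneg ht]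
  rw [hnt] at hmv
  rw [norm_sub_rev]
  calc ‖exp (t • K) * exp (t • L) - exp (t • (K + L))‖
      ≤ t * ‖K * L - L * K‖ * t := hmv
    _ = t ^ 2 * ‖K * L - L * K‖ := by ring
end

section
/- Let A be a complex Banach algebra, let K, L ∈ A with a := ‖K‖ > 0, let t ≥ 0, and assume that ‖exp(sK)‖ ≤ 1, ‖exp(sL)‖ ≤ 1 and ‖exp(s(K+L))‖ ≤ 1 for all s ∈ [0,t]. Then ‖exp(t(K+L)) − exp(tK)·exp(tL)‖ ≤ ((1 − e^{at}·(1 − at))/a²)·‖[K,L]‖. -/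
open NormedSpace

section Aux

variable {A : Type*} [NormedRing A] [NormedAlgebra ℂ A] [CompleteSpace A]

/-- commutator bound: `‖[exp(sK), L]‖ ≤ s ‖[K,L]‖` when all exponentials are contractions. -/
private lemma comm_exp_bound (K L : A) (t : ℝ)
    (hK : ∀ s ∈ Set.Icc (0:ℝ) t, ‖exp (s • K)‖ ≤ 1)
    (s : ℝ) (hs : s ∈ Set.Icc (0:ℝ) t) :
    ‖exp (s • K) * L - L * exp (s • K)‖ ≤ s * ‖K * L - L * K‖ := by
  obtain ⟨hs0, hst⟩ := hs
  set c : A := K * L - L * K with hc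
  -- the function g u = exp(uK) * L * exp((s-u)K)
  set g : ℝ → A := fun u => exp (u • K) * L * exp ((s - u) • K) with hg
  set D : ℝ → A := fun u => exp (u • K) * c * exp ((s - u) • K) with hD
  have hderiv : ∀ u : ℝ, HasDerivAt g (D u) u := by
    intro u
    have h1 : HasDerivAt (fun u : ℝ => exp (u • K)) (exp (u • K) * K) u :=
      hasDerivAt_exp_smul_const K u
    have hin : HasDerivAt (fun u : ℝ => s - u) (-1) u := by
      simpa using (hasDerivAt_id u).const_sub s
    have h2 : HasDerivAt (fun u : ℝ => exp ((s - u) • K))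
        ((-1 : ℝ) • (exp ((s - u) • K) * K)) u :=
      (hasDerivAt_exp_smul_const K (s - u)).scomp u hin
    have h3 := ((h1.mul_const L).mul h2)
    have hcomm : exp ((s - u) • K) * K = K * exp ((s - u) • K) :=
      (((Commute.refl K).smul_left (s - u)).exp_left).eq
    convert h3 using 1
    · rfl
    rw [neg_one_smul, hcomm]
    simp only [hD, hc]
    noncomm_ring
  have hbound : ∀ u ∈ Set.Icc (0:ℝ) s, ‖D u‖ ≤ ‖c‖ := by
    intro u hu
    obtain ⟨hu0, hus⟩ := hu
    have hu' : u ∈ Set.Icc (0:ℝ) t := ⟨hu0, hus.trans hst⟩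
    have hsu' : s - u ∈ Set.Icc (0:ℝ) t := ⟨by linarith, by linarith⟩
    calc ‖exp (u • K) * c * exp ((s - u) • K)‖
        ≤ ‖exp (u • K) * c‖ * ‖exp ((s - u) • K)‖ := norm_mul_le _ _
      _ ≤ ‖exp (u • K)‖ * ‖c‖ * ‖exp ((s - u) • K)‖ := by
          gcongr; exact norm_mul_le _ _
      _ ≤ 1 * ‖c‖ * 1 := by
          gcongr
          · exact hK u hu'
          · exact hK (s - u) hsu'
      _ = ‖c‖ := by ring
  have key : ‖g s - g 0‖ ≤ ‖c‖ * ‖s - 0‖ :=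
    (convex_Icc (0:ℝ) s).norm_image_sub_le_of_norm_hasDerivWithin_le
      (fun u hu => (hderiv u).hasDerivWithinAt) hbound
      (Set.left_mem_Icc.2 hs0) (Set.right_mem_Icc.2 hs0)
  have hgs : g s = exp (s • K) * L := by simp [hg]
  have hg0 : g 0 = L * exp (s • K) := by simp [hg]
  rw [hgs, hg0] at key
  calc ‖exp (s • K) * L - L * exp (s • K)‖ ≤ ‖c‖ * ‖s - 0‖ := key
    _ = s * ‖K * L - L * K‖ := by
        rw [sub_zero, Real.norm_eq_abs, abs_of_nonneg hs0, hc]; ring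

/-- The real scalar inequality `x²/2 ≤ 1 - eˣ(1-x)` for `x ≥ 0`. -/
private lemma real_ineq {x : ℝ} (hx : 0 ≤ x) :
    x ^ 2 / 2 ≤ 1 - Real.exp x * (1 - x) := by
  set g : ℝ → ℝ := fun y => 1 - Real.exp y * (1 - y) - y ^ 2 / 2 with hg
  have hderiv : ∀ y : ℝ, HasDerivAt g (y * (Real.exp y - 1)) y := by
    intro y
    have h1 : HasDerivAt (fun y : ℝ => Real.exp y * (1 - y))
        (Real.exp y * (1 - y) + Real.exp y * (0 - 1)) y :=
      (Real.hasDerivAt_exp y).mul ((hasDerivAt_const y 1).sub (hasDerivAt_id y))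
    have h2 : HasDerivAt (fun y : ℝ => y ^ 2 / 2) ((2 * y ^ 1) / 2) y :=
      (hasDerivAt_pow 2 y).div_const 2
    have h3 := ((hasDerivAt_const y (1:ℝ)).sub h1).sub h2
    exact h3.congr_deriv (by ring)
  have hmono : MonotoneOn g (Set.Ici 0) := by
    apply monotoneOn_of_deriv_nonneg (convex_Ici 0)
    · exact fun y _ => ((hderiv y).continuousAt).continuousWithinAt
    · intro y hy
      exact ((hderiv y).differentiableAt).differentiableWithinAt
    · intro y hy
      rw [(hderiv y).deriv]
      rw [interior_Ici] at hy
      have hy' : (0:ℝ) < y := hy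
      have : (1:ℝ) ≤ Real.exp y := Real.one_le_exp hy'.le
      nlinarith
  have h0 : g 0 = 0 := by simp [hg]
  have := hmono (Set.mem_Ici.2 le_rfl) (Set.mem_Ici.2 hx) hx
  rw [h0] at this
  simp only [hg] at this
  linarith

end Aux

/-- **Intermediate first-order Trotter–Suzuki bound** (proof of Lemma 3).
If `K, L` are elements of a complex Banach algebra with `a := ‖K‖ > 0` whose
exponentials `exp(sK)`, `exp(sL)`, `exp(s(K+L))` are contractions for all
`s ∈ [0,t]`, then
`‖exp(t(K+L)) − exp(tK)·exp(tL)‖ ≤ ((1 − e^{at}(1 − at))/a²)·‖[K,L]‖`. -/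
theorem trotter_first_order_intermediate_bound {A : Type*} [NormedRing A]
    [NormedAlgebra ℂ A] [CompleteSpace A] (K L : A) (a : ℝ) (ha : a = ‖K‖)
    (ha' : 0 < a) (t : ℝ) (ht : 0 ≤ t)
    (hK : ∀ s ∈ Set.Icc (0:ℝ) t, ‖exp (s • K)‖ ≤ 1)
    (hL : ∀ s ∈ Set.Icc (0:ℝ) t, ‖exp (s • L)‖ ≤ 1)
    (hKL : ∀ s ∈ Set.Icc (0:ℝ) t, ‖exp (s • (K + L))‖ ≤ 1) :
    ‖exp (t • (K + L)) - exp (t • K) * exp (t • L)‖ ≤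
      (1 - Real.exp (a * t) * (1 - a * t)) / a ^ 2 * ‖K * L - L * K‖ := by
  set c : A := K * L - L * K with hc
  set M : A := K + L with hM
  -- interpolating function
  set F : ℝ → A := fun s => exp ((t - s) • M) * (exp (s • K) * exp (s • L)) with hF
  set F' : ℝ → A := fun s =>
    exp ((t - s) • M) * ((exp (s • K) * L - L * exp (s • K)) * exp (s • L)) with hF'
  have hderiv : ∀ s : ℝ, HasDerivAt F (F' s) s := by
    intro s
    have hin : HasDerivAt (fun s : ℝ => t - s) (-1) s := by
      simpa using (hasDerivAt_id s).const_sub t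
    have h1 : HasDerivAt (fun s : ℝ => exp ((t - s) • M))
        ((-1 : ℝ) • (exp ((t - s) • M) * M)) s :=
      (hasDerivAt_exp_smul_const M (t - s)).scomp s hin
    have h2 : HasDerivAt (fun s : ℝ => exp (s • K) * exp (s • L))
        ((exp (s • K) * K) * exp (s • L) + exp (s • K) * (exp (s • L) * L)) s :=
      (hasDerivAt_exp_smul_const K s).mul (hasDerivAt_exp_smul_const L s)
    have h3 := h1.mul h2
    convert h3 using 1
    · rfl
    have hcK : exp (s • K) * K = K * exp (s • K) :=
      (((Commute.refl K).smul_left s).exp_left).eq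
    have hcL : exp (s • L) * L = L * exp (s • L) :=
      (((Commute.refl L).smul_left s).exp_left).eq
    have hcM : exp ((t - s) • M) * M = M * exp ((t - s) • M) :=
      (((Commute.refl M).smul_left (t - s)).exp_left).eq
    rw [neg_one_smul, hF', hcK, hcL, hM]
    noncomm_ring
  -- continuity of F'
  have hce : ∀ x : A, Continuous (fun s : ℝ => exp (s • x)) := by
    intro x
    rw [continuous_iff_continuousAt]
    exact fun s => (hasDerivAt_exp_smul_const x s).continuousAt
  have hcont : Continuous F' := by
    apply Continuous.mul
    · exact (hce M).comp (continuous_const.sub continuous_id)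
    · exact (((hce K).mul continuous_const).sub (continuous_const.mul (hce K))).mul (hce L)
  -- bound on F'
  have hbound : ∀ s ∈ Set.Icc (0:ℝ) t, ‖F' s‖ ≤ ‖c‖ * s := by
    intro s hs
    obtain ⟨hs0, hst⟩ := hs
    have hts : t - s ∈ Set.Icc (0:ℝ) t := ⟨by linarith, by linarith⟩
    have hcb := comm_exp_bound K L t hK s ⟨hs0, hst⟩
    calc ‖F' s‖
        ≤ ‖exp ((t - s) • M)‖ *
            (‖exp (s • K) * L - L * exp (s • K)‖ * ‖exp (s • L)‖) :=
          (norm_mul_le _ _).trans (by gcongr; exact norm_mul_le _ _)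
      _ ≤ 1 * ((s * ‖c‖) * 1) := by
          apply mul_le_mul (hKL (t - s) hts) _ (by positivity) (by norm_num)
          exact mul_le_mul hcb (hL s ⟨hs0, hst⟩) (norm_nonneg _)
            (mul_nonneg hs0 (norm_nonneg _))
      _ = ‖c‖ * s := by ring
  -- FTC
  have hFTC : ∫ s in (0:ℝ)..t, F' s = F t - F 0 :=
    intervalIntegral.integral_eq_sub_of_hasDerivAt
      (fun s _ => hderiv s) (hcont.intervalIntegrable 0 t)
  have hF0 : F 0 = exp (t • M) := by simp [hF]
  have hFt : F t = exp (t • K) * exp (t • L) := by simp [hF]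
  have hnorm : ‖exp (t • M) - exp (t • K) * exp (t • L)‖ ≤ ‖c‖ * (t ^ 2 / 2) := by
    have h1 : ‖exp (t • M) - exp (t • K) * exp (t • L)‖ = ‖∫ s in (0:ℝ)..t, F' s‖ := by
      rw [hFTC, hF0, hFt, norm_sub_rev]
    rw [h1]
    calc ‖∫ s in (0:ℝ)..t, F' s‖ ≤ ∫ s in (0:ℝ)..t, ‖F' s‖ :=
          intervalIntegral.norm_integral_le_integral_norm ht
      _ ≤ ∫ s in (0:ℝ)..t, ‖c‖ * s := by
          apply intervalIntegral.integral_mono_on ht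
          · exact (hcont.norm).intervalIntegrable 0 t
          · exact (continuous_const.mul continuous_id).intervalIntegrable 0 t
          · exact hbound
      _ = ‖c‖ * (t ^ 2 / 2) := by
          rw [intervalIntegral.integral_const_mul]
          congr 1
          simpa using intervalIntegral.integral_id (a := (0:ℝ)) (b := t)
  refine hnorm.trans ?_
  rw [mul_comm]
  apply mul_le_mul_of_nonneg_right _ (norm_nonneg c)
  rw [div_le_div_iff₀ (by norm_num : (0:ℝ) < 2) (by positivity)]
  have := real_ineq (x := a * t) (by positivity)
  nlinarith [sq_nonneg (a * t)]
end

section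
/- Let A be a complex Banach algebra, let K, L ∈ A, let t ≥ 0, and assume that ‖exp(sK)‖ ≤ 1, ‖exp(sL)‖ ≤ 1 and ‖exp(s(K+L))‖ ≤ 1 for all s ∈ [0,t]. If moreover t·(‖L‖ + ‖K‖/2) ≤ 1, then ‖exp(t(K+L)) − exp((t/2)K)·exp(tL)·exp((t/2)K)‖ ≤ (t³/3)·‖[K,L]‖·(‖L‖ + ‖K‖/2). -/
open NormedSpace MeasureTheory intervalIntegral

section TrotterHelpers

variable {A : Type*} [NormedRing A] [NormedAlgebra ℂ A] [CompleteSpace A]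

private lemma comm_exp' (B : A) (s : ℝ) : Commute B (exp (s • B)) :=
  ((Commute.refl B).smul_right s).exp_right

private lemma hd_exp (B : A) (s : ℝ) :
    HasDerivAt (fun u : ℝ => exp (u • B)) (exp (s • B) * B) s := by
  have h := (hasFDerivAt_exp_smul_const (𝕂 := ℝ) (𝕊 := ℝ) B s).hasDerivAt
  simpa [smul_eq_mul] using h

private lemma hd_exp' (B : A) (s : ℝ) :
    HasDerivAt (fun u : ℝ => exp (u • B)) (B * exp (s • B)) s := by
  rw [(comm_exp' B s).eq]; exact hd_exp B s

private lemma exp_cont' (B : A) : Continuous fun u : ℝ => exp (u • B) :=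
  continuous_iff_continuousAt.2 fun u => (hd_exp B u).continuousAt

private lemma norm_exp_sub_one_le' {B : A} {a : ℝ} (ha : 0 ≤ a)
    (h1 : ∀ u ∈ Set.Icc (0:ℝ) a, ‖exp (u • B)‖ ≤ 1) : ‖exp (a • B) - 1‖ ≤ a * ‖B‖ := by
  have hftc : ∫ u in (0:ℝ)..a, exp (u • B) * B = exp (a • B) - 1 := by
    have := integral_eq_sub_of_hasDerivAt (f := fun u : ℝ => exp (u • B))
      (f' := fun u : ℝ => exp (u • B) * B) (a := 0) (b := a)
      (fun u _ => hd_exp B u) (((exp_cont' B).mul continuous_const).intervalIntegrable 0 a)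
    simpa using this
  rw [← hftc]
  have h := intervalIntegral.norm_integral_le_of_norm_le_const (a := 0) (b := a) (C := ‖B‖)
    (f := fun u => exp (u • B) * B) ?_
  · rw [sub_zero, abs_of_nonneg ha] at h; linarith [h, mul_comm ‖B‖ a]
  · intro x hx
    rw [Set.uIoc_of_le ha] at hx
    have hx1 := h1 x ⟨hx.1.le, hx.2⟩
    calc ‖exp (x • B) * B‖ ≤ ‖exp (x • B)‖ * ‖B‖ := norm_mul_le _ _
      _ ≤ ‖B‖ := mul_le_of_le_one_left (norm_nonneg B) hx1

private lemma comm_rep' (B D : A) (s : ℝ) :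
    exp (s • B) * D - D * exp (s • B)
      = ∫ u in (0:ℝ)..s, exp (u • B) * (B * D - D * B) * exp ((s - u) • B) := by
  have hder : ∀ u ∈ Set.uIcc (0:ℝ) s,
      HasDerivAt (fun u : ℝ => exp (u • B) * (D * exp ((s - u) • B)))
        (exp (u • B) * (B * D - D * B) * exp ((s - u) • B)) u := by
    intro u _
    have h2 : HasDerivAt (fun u : ℝ => exp ((s - u) • B))
        ((-1 : ℝ) • (exp ((s - u) • B) * B)) u :=
      HasDerivAt.scomp u (hd_exp B (s - u)) ((hasDerivAt_id u).const_sub s)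
    have h3 := (hd_exp B u).mul (h2.const_mul D)
    convert h3 using 1
    · rfl
    have hcomm := (comm_exp' B (s - u)).eq
    rw [neg_one_smul, ← hcomm]
    noncomm_ring
  have hint : IntervalIntegrable
      (fun u : ℝ => exp (u • B) * (B * D - D * B) * exp ((s - u) • B)) volume 0 s :=
    (((exp_cont' B).mul continuous_const).mul
      ((exp_cont' B).comp (continuous_const.sub continuous_id))).intervalIntegrable 0 s
  rw [integral_eq_sub_of_hasDerivAt hder hint]
  simp

private lemma int_mul_const' {f : ℝ → A} (c : A) {a b : ℝ}
    (hf : IntervalIntegrable f volume a b) :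
    ∫ x in a..b, f x * c = (∫ x in a..b, f x) * c := by
  simpa using ContinuousLinearMap.intervalIntegral_comp_comm
    ((ContinuousLinearMap.mul ℝ A).flip c) hf

private lemma int_const_mul' {f : ℝ → A} (c : A) {a b : ℝ}
    (hf : IntervalIntegrable f volume a b) :
    ∫ x in a..b, c * f x = c * ∫ x in a..b, f x := by
  simpa using ContinuousLinearMap.intervalIntegral_comp_comm
    ((ContinuousLinearMap.mul ℝ A) c) hf

private lemma lem_mul_sub_one' {U₁ U₂ : A} (h1 : ‖U₁‖ ≤ 1) :
    ‖U₁ * U₂ - 1‖ ≤ ‖U₁ - 1‖ + ‖U₂ - 1‖ := by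
  have he : U₁ * U₂ - 1 = U₁ * (U₂ - 1) + (U₁ - 1) := by noncomm_ring
  rw [he]
  refine (norm_add_le _ _).trans ?_
  nlinarith [norm_mul_le U₁ (U₂ - 1), norm_nonneg (U₂ - 1), norm_nonneg U₁]

private lemma lem_dev' {U Z V : A} (hV : ‖V‖ ≤ 1) :
    ‖U * Z * V - Z‖ ≤ (‖U - 1‖ + ‖V - 1‖) * ‖Z‖ := by
  have he : U * Z * V - Z = (U - 1) * Z * V + Z * (V - 1) := by noncomm_ring
  rw [he]
  have h1 : ‖(U - 1) * Z * V‖ ≤ ‖U - 1‖ * ‖Z‖ :=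
    ((norm_mul_le _ _).trans (mul_le_of_le_one_right (norm_nonneg _) hV)).trans (norm_mul_le _ _)
  have h2 : ‖Z * (V - 1)‖ ≤ ‖Z‖ * ‖V - 1‖ := norm_mul_le _ _
  refine (norm_add_le _ _).trans ?_
  nlinarith [norm_nonneg Z]

private lemma algebra_lemma' (X Y K' L W : A) (c2 : K' * X = X * K') :
    W * ((X * L - L * X) * (Y * X) + X * (Y * K' - K' * Y) * X)
      = (-1 : ℝ) • (W * (K' + K' + L)) * (X * Y * X)
        + W * (((X * K') * Y + X * (L * Y)) * X + (X * Y) * (X * K')) := by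
  have hswap : ∀ z : A, K' * (X * z) = X * (K' * z) := fun z => by
    rw [← mul_assoc, c2, mul_assoc]
  simp only [neg_one_smul, neg_mul, mul_assoc, mul_add, add_mul, sub_mul, mul_sub, hswap, c2]
  abel

private lemma deriv_lemma' (K' L : A) (t s : ℝ) :
    HasDerivAt
      (fun r : ℝ => exp ((t - r) • (K' + K' + L))
        * (exp (r • K') * exp (r • L) * exp (r • K')))
      (exp ((t - s) • (K' + K' + L))
        * ((exp (s • K') * L - L * exp (s • K')) * (exp (s • L) * exp (s • K'))
          + exp (s • K') * (exp (s • L) * K' - K' * exp (s • L)) * exp (s • K'))) s := by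
  have hW : HasDerivAt (fun r : ℝ => exp ((t - r) • (K' + K' + L)))
      ((-1 : ℝ) • (exp ((t - s) • (K' + K' + L)) * (K' + K' + L))) s :=
    HasDerivAt.scomp s (hd_exp (K' + K' + L) (t - s)) ((hasDerivAt_id s).const_sub t)
  have h := hW.mul (((hd_exp K' s).mul (hd_exp' L s)).mul (hd_exp K' s))
  convert h using 1
  · rfl
  exact algebra_lemma' _ _ _ _ _ (comm_exp' K' s).eq

private lemma Ebound_lemma {K' L : A} {t s : ℝ} (hs0 : 0 ≤ s) (hst : s ≤ t)
    (hXc : ∀ u ∈ Set.Icc (0:ℝ) t, ‖exp (u • K')‖ ≤ 1)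
    (hL : ∀ u ∈ Set.Icc (0:ℝ) t, ‖exp (u • L)‖ ≤ 1) :
    ‖(exp (s • K') * L - L * exp (s • K')) * (exp (s • L) * exp (s • K'))
      + exp (s • K') * (exp (s • L) * K' - K' * exp (s • L)) * exp (s • K')‖
      ≤ s ^ 2 * (2 * ‖K' * L - L * K'‖ * (‖L‖ + ‖K'‖)) := by
  have cX : Continuous fun u : ℝ => exp (u • K') := exp_cont' K'
  have cY : Continuous fun u : ℝ => exp (u • L) := exp_cont' L
  have cmsK : Continuous fun u : ℝ => exp ((s - u) • K') :=
    cX.comp (continuous_const.sub continuous_id)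
  have cmsL : Continuous fun u : ℝ => exp ((s - u) • L) :=
    cY.comp (continuous_const.sub continuous_id)
  have i1 : IntervalIntegrable
      (fun u : ℝ => exp (u • K') * (K' * L - L * K') * exp ((s - u) • K')) volume 0 s :=
    ((cX.mul continuous_const).mul cmsK).intervalIntegrable 0 s
  have i2 : IntervalIntegrable
      (fun u : ℝ => exp (u • L) * (L * K' - K' * L) * exp ((s - u) • L)) volume 0 s :=
    ((cY.mul continuous_const).mul cmsL).intervalIntegrable 0 s
  have i2' : IntervalIntegrable
      (fun u : ℝ => exp (s • K') * (exp (u • L) * (L * K' - K' * L) * exp ((s - u) • L)))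
      volume 0 s :=
    (continuous_const.mul ((cY.mul continuous_const).mul cmsL)).intervalIntegrable 0 s
  have iA : IntervalIntegrable
      (fun u : ℝ => exp (u • K') * (K' * L - L * K') * exp ((s - u) • K')
        * (exp (s • L) * exp (s • K'))) volume 0 s :=
    (((cX.mul continuous_const).mul cmsK).mul continuous_const).intervalIntegrable 0 s
  have iB : IntervalIntegrable
      (fun u : ℝ => exp (s • K') * (exp (u • L) * (L * K' - K' * L) * exp ((s - u) • L))
        * exp (s • K')) volume 0 s :=
    ((continuous_const.mul ((cY.mul continuous_const).mul cmsL)).mul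
      continuous_const).intervalIntegrable 0 s
  have hEeq :
      (exp (s • K') * L - L * exp (s • K')) * (exp (s • L) * exp (s • K'))
        + exp (s • K') * (exp (s • L) * K' - K' * exp (s • L)) * exp (s • K')
      = ∫ u in (0:ℝ)..s,
          (exp (u • K') * (K' * L - L * K') * exp ((s - u) • K')
              * (exp (s • L) * exp (s • K'))
            + exp (s • K') * (exp (u • L) * (L * K' - K' * L) * exp ((s - u) • L))
              * exp (s • K')) := by
    rw [comm_rep' K' L s, comm_rep' L K' s,
      ← int_mul_const' (exp (s • L) * exp (s • K')) i1,
      ← int_const_mul' (exp (s • K')) i2,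
      ← int_mul_const' (exp (s • K')) i2',
      ← intervalIntegral.integral_add iA iB]
  rw [hEeq]
  have hpoint : ∀ u ∈ Set.uIoc (0:ℝ) s,
      ‖exp (u • K') * (K' * L - L * K') * exp ((s - u) • K')
          * (exp (s • L) * exp (s • K'))
        + exp (s • K') * (exp (u • L) * (L * K' - K' * L) * exp ((s - u) • L))
          * exp (s • K')‖ ≤ s * (2 * ‖K' * L - L * K'‖ * (‖L‖ + ‖K'‖)) := by
    intro u hu
    rw [Set.uIoc_of_le hs0] at hu
    have hu0 : (0:ℝ) ≤ u := hu.1.le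
    have hus : u ≤ s := hu.2
    have hsu0 : (0:ℝ) ≤ s - u := by linarith
    have hut : u ≤ t := le_trans hus hst
    have hsut : s - u ≤ t := by linarith
    have key : exp (u • K') * (K' * L - L * K') * exp ((s - u) • K')
          * (exp (s • L) * exp (s • K'))
        + exp (s • K') * (exp (u • L) * (L * K' - K' * L) * exp ((s - u) • L))
          * exp (s • K')
        = (exp (u • K') * (K' * L - L * K') * (exp ((s - u) • K') * exp (s • L))
            - (exp (s • K') * exp (u • L)) * (K' * L - L * K') * exp ((s - u) • L))
          * exp (s • K') := by noncomm_ring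
    rw [key]
    have hXn : ‖exp (s • K')‖ ≤ 1 := hXc s ⟨hs0, hst⟩
    have hYn : ‖exp (s • L)‖ ≤ 1 := hL s ⟨hs0, hst⟩
    have hmsKn : ‖exp ((s - u) • K')‖ ≤ 1 := hXc (s - u) ⟨hsu0, hsut⟩
    have hmsLn : ‖exp ((s - u) • L)‖ ≤ 1 := hL (s - u) ⟨hsu0, hsut⟩
    have duK : ‖exp (u • K') - 1‖ ≤ u * ‖K'‖ :=
      norm_exp_sub_one_le' hu0 fun w hw => hXc w ⟨hw.1, le_trans hw.2 hut⟩
    have dsuK : ‖exp ((s - u) • K') - 1‖ ≤ (s - u) * ‖K'‖ :=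
      norm_exp_sub_one_le' hsu0 fun w hw => hXc w ⟨hw.1, le_trans hw.2 hsut⟩
    have dsK : ‖exp (s • K') - 1‖ ≤ s * ‖K'‖ :=
      norm_exp_sub_one_le' hs0 fun w hw => hXc w ⟨hw.1, le_trans hw.2 hst⟩
    have duL : ‖exp (u • L) - 1‖ ≤ u * ‖L‖ :=
      norm_exp_sub_one_le' hu0 fun w hw => hL w ⟨hw.1, le_trans hw.2 hut⟩
    have dsuL : ‖exp ((s - u) • L) - 1‖ ≤ (s - u) * ‖L‖ :=
      norm_exp_sub_one_le' hsu0 fun w hw => hL w ⟨hw.1, le_trans hw.2 hsut⟩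
    have dsL : ‖exp (s • L) - 1‖ ≤ s * ‖L‖ :=
      norm_exp_sub_one_le' hs0 fun w hw => hL w ⟨hw.1, le_trans hw.2 hst⟩
    have hd1 : ‖exp (u • K') * (K' * L - L * K') * (exp ((s - u) • K') * exp (s • L))
        - (K' * L - L * K')‖
        ≤ (u * ‖K'‖ + ((s - u) * ‖K'‖ + s * ‖L‖)) * ‖K' * L - L * K'‖ := by
      have hV : ‖exp ((s - u) • K') * exp (s • L)‖ ≤ 1 :=
        (norm_mul_le _ _).trans (mul_le_one₀ hmsKn (norm_nonneg _) hYn)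
      refine (lem_dev' hV).trans ?_
      refine mul_le_mul_of_nonneg_right ?_ (norm_nonneg _)
      exact add_le_add duK ((lem_mul_sub_one' hmsKn).trans (add_le_add dsuK dsL))
    have hd2 : ‖(exp (s • K') * exp (u • L)) * (K' * L - L * K') * exp ((s - u) • L)
        - (K' * L - L * K')‖
        ≤ ((s * ‖K'‖ + u * ‖L‖) + (s - u) * ‖L‖) * ‖K' * L - L * K'‖ := by
      refine (lem_dev' hmsLn).trans ?_
      refine mul_le_mul_of_nonneg_right ?_ (norm_nonneg _)
      exact add_le_add ((lem_mul_sub_one' hXn).trans (add_le_add dsK duL)) dsuL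
    calc ‖(exp (u • K') * (K' * L - L * K') * (exp ((s - u) • K') * exp (s • L))
            - (exp (s • K') * exp (u • L)) * (K' * L - L * K') * exp ((s - u) • L))
          * exp (s • K')‖
        ≤ ‖exp (u • K') * (K' * L - L * K') * (exp ((s - u) • K') * exp (s • L))
            - (exp (s • K') * exp (u • L)) * (K' * L - L * K') * exp ((s - u) • L)‖ :=
          (norm_mul_le _ _).trans (mul_le_of_le_one_right (norm_nonneg _) hXn)
      _ = ‖(exp (u • K') * (K' * L - L * K') * (exp ((s - u) • K') * exp (s • L))
            - (K' * L - L * K'))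
          - ((exp (s • K') * exp (u • L)) * (K' * L - L * K') * exp ((s - u) • L)
            - (K' * L - L * K'))‖ := by rw [sub_sub_sub_cancel_right]
      _ ≤ ‖exp (u • K') * (K' * L - L * K') * (exp ((s - u) • K') * exp (s • L))
            - (K' * L - L * K')‖
          + ‖(exp (s • K') * exp (u • L)) * (K' * L - L * K') * exp ((s - u) • L)
            - (K' * L - L * K')‖ := norm_sub_le _ _
      _ ≤ (u * ‖K'‖ + ((s - u) * ‖K'‖ + s * ‖L‖)) * ‖K' * L - L * K'‖
          + ((s * ‖K'‖ + u * ‖L‖) + (s - u) * ‖L‖) * ‖K' * L - L * K'‖ := add_le_add hd1 hd2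
      _ = s * (2 * ‖K' * L - L * K'‖ * (‖L‖ + ‖K'‖)) := by ring
  have hb := intervalIntegral.norm_integral_le_of_norm_le_const hpoint
  rw [sub_zero, abs_of_nonneg hs0] at hb
  refine hb.trans (le_of_eq (by ring))

end TrotterHelpers

/-- **Dissipative second-order Trotter–Suzuki product formula** (Lemma 4).
If `K, L` are elements of a complex Banach algebra whose exponentials
`exp(sK)`, `exp(sL)`, `exp(s(K+L))` are contractions for all `s ∈ [0,t]`, and
`t·(‖L‖ + ‖K‖/2) ≤ 1`, then
`‖exp(t(K+L)) − exp((t/2)K)·exp(tL)·exp((t/2)K)‖ ≤ (t³/3)·‖[K,L]‖·(‖L‖ + ‖K‖/2)`. -/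
theorem trotter_second_order_bound {A : Type*} [NormedRing A] [NormedAlgebra ℂ A]
    [CompleteSpace A] (K L : A) (t : ℝ) (ht : 0 ≤ t)
    (hK : ∀ s ∈ Set.Icc (0:ℝ) t, ‖exp (s • K)‖ ≤ 1)
    (hL : ∀ s ∈ Set.Icc (0:ℝ) t, ‖exp (s • L)‖ ≤ 1)
    (hKL : ∀ s ∈ Set.Icc (0:ℝ) t, ‖exp (s • (K + L))‖ ≤ 1)
    (ht' : t * (‖L‖ + ‖K‖ / 2) ≤ 1) :
    ‖exp (t • (K + L)) - exp ((t / 2) • K) * exp (t • L) * exp ((t / 2) • K)‖ ≤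
      t ^ 3 / 3 * ‖K * L - L * K‖ * (‖L‖ + ‖K‖ / 2) := by
  set K' : A := (2:ℝ)⁻¹ • K with hK'def
  have hK'u : ∀ u : ℝ, u • K' = (u / 2) • K := by
    intro u; rw [hK'def, smul_smul, div_eq_mul_inv]
  have hKsum : K + L = K' + K' + L := by
    rw [hK'def, ← two_smul ℝ ((2:ℝ)⁻¹ • K), smul_smul]; norm_num
  have hXc : ∀ u ∈ Set.Icc (0:ℝ) t, ‖exp (u • K')‖ ≤ 1 := by
    intro u hu; rw [hK'u]; exact hK (u / 2) ⟨by linarith [hu.1], by linarith [hu.1, hu.2]⟩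
  have hK'norm : ‖K'‖ = ‖K‖ / 2 := by
    rw [hK'def, norm_smul, Real.norm_eq_abs, abs_of_nonneg (by norm_num : (0:ℝ) ≤ (2:ℝ)⁻¹)]
    ring
  have hC'norm : ‖K' * L - L * K'‖ = ‖K * L - L * K‖ / 2 := by
    have : K' * L - L * K' = (2:ℝ)⁻¹ • (K * L - L * K) := by
      rw [hK'def, smul_mul_assoc, mul_smul_comm, smul_sub]
    rw [this, norm_smul, Real.norm_eq_abs, abs_of_nonneg (by norm_num : (0:ℝ) ≤ (2:ℝ)⁻¹)]
    ring
  rw [hKsum, ← hK'u t]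
  -- the FTC identity
  have cX : Continuous fun u : ℝ => exp (u • K') := exp_cont' K'
  have cY : Continuous fun u : ℝ => exp (u • L) := exp_cont' L
  have cW : Continuous fun s : ℝ => exp ((t - s) • (K' + K' + L)) :=
    (exp_cont' (K' + K' + L)).comp (continuous_const.sub continuous_id)
  have cE : Continuous fun s : ℝ =>
      (exp (s • K') * L - L * exp (s • K')) * (exp (s • L) * exp (s • K'))
        + exp (s • K') * (exp (s • L) * K' - K' * exp (s • L)) * exp (s • K') :=
    (((cX.mul continuous_const).sub (continuous_const.mul cX)).mul (cY.mul cX)).add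
      (((cX.mul ((cY.mul continuous_const).sub (continuous_const.mul cY)))).mul cX)
  have hint : IntervalIntegrable (fun s : ℝ =>
      exp ((t - s) • (K' + K' + L))
        * ((exp (s • K') * L - L * exp (s • K')) * (exp (s • L) * exp (s • K'))
          + exp (s • K') * (exp (s • L) * K' - K' * exp (s • L)) * exp (s • K')))
      volume 0 t := (cW.mul cE).intervalIntegrable 0 t
  have hftc := integral_eq_sub_of_hasDerivAt
    (f := fun r : ℝ => exp ((t - r) • (K' + K' + L))
      * (exp (r • K') * exp (r • L) * exp (r • K')))
    (fun s _ => deriv_lemma' K' L t s) hint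
  simp only [sub_self, zero_smul, NormedSpace.exp_zero, one_mul, sub_zero, mul_one] at hftc
  have herr : exp (t • (K' + K' + L)) - exp (t • K') * exp (t • L) * exp (t • K')
      = -(∫ s in (0:ℝ)..t,
          exp ((t - s) • (K' + K' + L))
            * ((exp (s • K') * L - L * exp (s • K')) * (exp (s • L) * exp (s • K'))
              + exp (s • K') * (exp (s • L) * K' - K' * exp (s • L))
                * exp (s • K'))) := by
    rw [hftc, neg_sub]
  rw [herr, norm_neg]
  have hb : ∀ᵐ s ∂volume.restrict (Set.uIoc (0:ℝ) t),
      ‖exp ((t - s) • (K' + K' + L))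
        * ((exp (s • K') * L - L * exp (s • K')) * (exp (s • L) * exp (s • K'))
          + exp (s • K') * (exp (s • L) * K' - K' * exp (s • L)) * exp (s • K'))‖
        ≤ s ^ 2 * (2 * ‖K' * L - L * K'‖ * (‖L‖ + ‖K'‖)) := by
    refine ae_restrict_of_forall_mem measurableSet_uIoc ?_
    intro s hs
    rw [Set.uIoc_of_le ht] at hs
    have hs0 : (0:ℝ) ≤ s := hs.1.le
    have hst : s ≤ t := hs.2
    have hWn : ‖exp ((t - s) • (K' + K' + L))‖ ≤ 1 := by
      rw [← hKsum]; exact hKL (t - s) ⟨by linarith, by linarith⟩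
    calc ‖exp ((t - s) • (K' + K' + L))
          * ((exp (s • K') * L - L * exp (s • K')) * (exp (s • L) * exp (s • K'))
            + exp (s • K') * (exp (s • L) * K' - K' * exp (s • L)) * exp (s • K'))‖
        ≤ ‖(exp (s • K') * L - L * exp (s • K')) * (exp (s • L) * exp (s • K'))
            + exp (s • K') * (exp (s • L) * K' - K' * exp (s • L)) * exp (s • K')‖ :=
          (norm_mul_le _ _).trans (mul_le_of_le_one_left (norm_nonneg _) hWn)
      _ ≤ s ^ 2 * (2 * ‖K' * L - L * K'‖ * (‖L‖ + ‖K'‖)) := Ebound_lemma hs0 hst hXc hL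
  have hgint : IntervalIntegrable
      (fun s : ℝ => s ^ 2 * (2 * ‖K' * L - L * K'‖ * (‖L‖ + ‖K'‖))) volume 0 t :=
    ((continuous_pow 2).mul continuous_const).intervalIntegrable 0 t
  have hfin := intervalIntegral.norm_integral_le_of_norm_le ht
    (by rw [Set.uIoc_of_le ht] at hb; exact (ae_restrict_iff' measurableSet_Ioc).1 hb) hgint
  have hval : ∫ s in (0:ℝ)..t, s ^ 2 * (2 * ‖K' * L - L * K'‖ * (‖L‖ + ‖K'‖))
      = t ^ 3 / 3 * (2 * ‖K' * L - L * K'‖ * (‖L‖ + ‖K'‖)) := by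
    rw [intervalIntegral.integral_mul_const, integral_pow]
    norm_num
  rw [hval] at hfin
  refine hfin.trans (le_of_eq ?_)
  rw [hC'norm, hK'norm]
  ring
end

section
/- Let A be a complex Banach algebra, let K, L ∈ A with a := ‖L‖ + ‖K‖/2 > 0, let t ≥ 0, and assume that ‖exp(sK)‖ ≤ 1, ‖exp(sL)‖ ≤ 1 and ‖exp(s(K+L))‖ ≤ 1 for all s ∈ [0,t]. Then ‖exp(t(K+L)) − exp((t/2)K)·exp(tL)·exp((t/2)K)‖ ≤ ((2(1 − e^{at}) + at(1 + e^{at}))/a²)·‖[K,L]‖. -/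
open NormedSpace

section Aux

variable {A : Type*} [NormedRing A] [NormedAlgebra ℝ A] [CompleteSpace A]

lemma hasDerivAt_exp_affine (x : A) (c d r : ℝ) :
    HasDerivAt (fun u : ℝ => exp ((c * u + d) • x))
      (c • (exp ((c * r + d) • x) * x)) r := by
  have h := hasDerivAt_exp_smul_const (𝕂 := ℝ) x (c * r + d)
  have ha : HasDerivAt (fun u : ℝ => c * u + d) c r := by
    simpa using ((hasDerivAt_id r).const_mul c).add_const d
  simpa [Function.comp_def] using HasDerivAt.scomp_of_eq r h ha rfl

lemma exp_smul_add (x : A) (v w : ℝ) :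
    exp ((v + w) • x) = exp (v • x) * exp (w • x) := by
  rw [add_smul]
  letI : NormedAlgebra ℚ A := .restrictScalars ℚ ℝ A
  exact exp_add_of_commute (((Commute.refl x).smul_left v).smul_right w)

lemma cont_exp_affine (x : A) (c d : ℝ) :
    Continuous fun u : ℝ => exp ((c * u + d) • x) := by
  letI : NormedAlgebra ℚ A := .restrictScalars ℚ ℝ A
  exact exp_continuous.comp (((continuous_const.mul continuous_id).add continuous_const).smul
    continuous_const)

lemma comm_exp_bound_s5 (x y : A) (u : ℝ) (hu : 0 ≤ u)
    (hx : ∀ v ∈ Set.Icc (0:ℝ) u, ‖exp (v • x)‖ ≤ 1) :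
    ‖exp (u • x) * y - y * exp (u • x)‖ ≤ u * ‖x * y - y * x‖ := by
  set f : ℝ → A := fun v => exp (v • x) * y * exp ((-1 * v + u) • x) with hf
  set f' : ℝ → A := fun v => exp (v • x) * (x * y - y * x) * exp ((-1 * v + u) • x) with hf'
  have hderiv : ∀ v ∈ Set.Icc (0:ℝ) u,
      HasDerivWithinAt f (f' v) (Set.Icc (0:ℝ) u) v := by
    intro v hv
    have h1 : HasDerivAt (fun w : ℝ => exp (w • x)) (exp (v • x) * x) v :=
      hasDerivAt_exp_smul_const x v
    have h2 := hasDerivAt_exp_affine x (-1) u v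
    have h3 := (h1.mul_const y).mul h2
    have hc : Commute x (exp ((-1 * v + u) • x)) :=
      (((Commute.refl x).smul_right (-1 * v + u)).exp_right)
    have heq : exp (v • x) * x * y * exp ((-1 * v + u) • x) +
        exp (v • x) * y * ((-1 : ℝ) • (exp ((-1 * v + u) • x) * x)) = f' v := by
      simp only [hf', neg_one_smul, mul_neg, ← hc.eq]
      simp only [mul_sub, sub_mul, mul_assoc]
      abel
    rw [← heq]
    exact h3.hasDerivWithinAt
  have hbound : ∀ v ∈ Set.Icc (0:ℝ) u, ‖f' v‖ ≤ ‖x * y - y * x‖ := by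
    intro v hv
    obtain ⟨hv0, hvu⟩ := hv
    simp only [hf']
    have e1 : ‖exp (v • x)‖ ≤ 1 := hx v ⟨hv0, hvu⟩
    have e2 : ‖exp ((-1 * v + u) • x)‖ ≤ 1 := hx _ ⟨by linarith, by linarith⟩
    have h1 := (norm_mul_le (exp (v • x) * (x * y - y * x)) (exp ((-1 * v + u) • x))).trans
      (mul_le_mul_of_nonneg_right (norm_mul_le _ _) (norm_nonneg _))
    have n1 : (0:ℝ) ≤ ‖x * y - y * x‖ := norm_nonneg _
    have n2 : (0:ℝ) ≤ ‖exp (v • x)‖ := norm_nonneg _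
    have n3 : (0:ℝ) ≤ ‖exp ((-1 * v + u) • x)‖ := norm_nonneg _
    have h2 : ‖exp (v • x)‖ * ‖x * y - y * x‖ ≤ ‖x * y - y * x‖ := by nlinarith
    have h3 : ‖exp (v • x)‖ * ‖x * y - y * x‖ * ‖exp ((-1 * v + u) • x)‖ ≤
        ‖x * y - y * x‖ := by nlinarith
    linarith
  have key := Convex.norm_image_sub_le_of_norm_hasDerivWithin_le hderiv hbound
    (convex_Icc (0:ℝ) u) (Set.left_mem_Icc.2 hu) (Set.right_mem_Icc.2 hu)
  have hfu : f u = exp (u • x) * y := by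
    simp [hf, show -1 * u + u = 0 by ring, exp_zero]
  have hf0 : f 0 = y * exp (u • x) := by
    simp [hf, exp_zero, show -1 * 0 + u = u by ring]
  rw [hfu, hf0] at key
  simpa [Real.norm_eq_abs, abs_of_nonneg hu, mul_comm] using key

lemma cube_div_six_le (x : ℝ) (hx : 0 ≤ x) :
    x ^ 3 / 6 ≤ 2 * (1 - Real.exp x) + x * (1 + Real.exp x) := by
  have hg1d : ∀ y : ℝ, HasDerivAt (fun y : ℝ => 1 - Real.exp y + y * Real.exp y - y ^ 2 / 2)
      (y * (Real.exp y - 1)) y := by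
    intro y
    have h := (((hasDerivAt_const y (1:ℝ)).sub (Real.hasDerivAt_exp y)).add
      ((hasDerivAt_id y).mul (Real.hasDerivAt_exp y))).sub ((hasDerivAt_pow 2 y).div_const 2)
    convert h using 1
    · rfl
    · rfl
    · rfl
    simp
    ring
  have hg1 : ∀ y : ℝ, 0 ≤ y → 0 ≤ 1 - Real.exp y + y * Real.exp y - y ^ 2 / 2 := by
    intro y hy
    have hmono : MonotoneOn (fun y : ℝ => 1 - Real.exp y + y * Real.exp y - y ^ 2 / 2)
        (Set.Ici (0:ℝ)) := by
      apply monotoneOn_of_deriv_nonneg (convex_Ici 0)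
      · exact (Differentiable.continuous (fun z => (hg1d z).differentiableAt)).continuousOn
      · exact (Differentiable.differentiableOn (fun z => (hg1d z).differentiableAt))
      · intro z hz
        rw [(hg1d z).deriv]
        have hz' : 0 < z := by simpa [interior_Ici] using hz
        have : 1 ≤ Real.exp z := by
          have := Real.add_one_le_exp z; linarith
        nlinarith
    have h0 := hmono (Set.self_mem_Ici) (Set.mem_Ici.2 hy) hy
    simpa using h0
  have hgd : ∀ y : ℝ, HasDerivAt
      (fun y : ℝ => 2 - 2 * Real.exp y + y + y * Real.exp y - y ^ 3 / 6)
      (1 - Real.exp y + y * Real.exp y - y ^ 2 / 2) y := by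
    intro y
    have h := ((((hasDerivAt_const y (2:ℝ)).sub ((Real.hasDerivAt_exp y).const_mul 2)).add
      (hasDerivAt_id y)).add ((hasDerivAt_id y).mul (Real.hasDerivAt_exp y))).sub
      ((hasDerivAt_pow 3 y).div_const 6)
    convert h using 1
    · rfl
    · rfl
    · rfl
    simp
    ring
  have hg : 0 ≤ 2 - 2 * Real.exp x + x + x * Real.exp x - x ^ 3 / 6 := by
    have hmono : MonotoneOn (fun y : ℝ => 2 - 2 * Real.exp y + y + y * Real.exp y - y ^ 3 / 6)
        (Set.Ici (0:ℝ)) := by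
      apply monotoneOn_of_deriv_nonneg (convex_Ici 0)
      · exact (Differentiable.continuous (fun z => (hgd z).differentiableAt)).continuousOn
      · exact (Differentiable.differentiableOn (fun z => (hgd z).differentiableAt))
      · intro z hz
        rw [(hgd z).deriv]
        have hz' : 0 < z := by simpa [interior_Ici] using hz
        exact hg1 z hz'.le
    have h0 := hmono (Set.self_mem_Ici) (Set.mem_Ici.2 hx) hx
    simpa using h0
  linarith

lemma hasDerivAt_exp_affine' (x : A) (c d r : ℝ) :
    HasDerivAt (fun u : ℝ => exp ((c * u + d) • x))
      (c • (x * exp ((c * r + d) • x))) r := by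
  have h := hasDerivAt_exp_smul_const' (𝕂 := ℝ) x (c * r + d)
  have ha : HasDerivAt (fun u : ℝ => c * u + d) c r := by
    simpa using ((hasDerivAt_id r).const_mul c).add_const d
  simpa [Function.comp_def] using HasDerivAt.scomp_of_eq r h ha rfl

lemma dExp (x : A) (r : ℝ) :
    HasDerivAt (fun u : ℝ => exp (u • x)) (exp (r • x) * x) r :=
  hasDerivAt_exp_smul_const x r

lemma dExpRev (x : A) (s r : ℝ) :
    HasDerivAt (fun u : ℝ => exp ((s - u) • x)) (-(x * exp ((s - r) • x))) r := by
  have h := hasDerivAt_exp_affine' x (-1) s r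
  have hfun : (fun u : ℝ => exp ((-1 * u + s) • x)) = fun u : ℝ => exp ((s - u) • x) := by
    funext u; congr 1; ring_nf
  have hval : (-1 * r + s) = s - r := by ring
  rw [hfun, hval] at h
  simpa using h

lemma dExpHalf (x : A) (r : ℝ) :
    HasDerivAt (fun u : ℝ => exp ((u / 2) • x)) ((1/2 : ℝ) • (x * exp ((r / 2) • x))) r := by
  have h := hasDerivAt_exp_affine' x (1/2) 0 r
  have hfun : (fun u : ℝ => exp ((1/2 * u + 0) • x)) = fun u : ℝ => exp ((u / 2) • x) := by
    funext u; congr 1; ring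
  have hval : (1/2 * r + 0) = r / 2 := by ring
  rw [hfun, hval] at h
  exact h

lemma dExpHalfRev (x : A) (s r : ℝ) :
    HasDerivAt (fun u : ℝ => exp (((s - u) / 2) • x))
      (-((1/2 : ℝ) • (exp (((s - r) / 2) • x) * x))) r := by
  have h := hasDerivAt_exp_affine x (-(1/2)) (s/2) r
  have hfun : (fun u : ℝ => exp ((-(1/2) * u + s/2) • x))
      = fun u : ℝ => exp (((s - u) / 2) • x) := by
    funext u; congr 1; ring
  have hval : (-(1/2) * r + s/2) = (s - r) / 2 := by ring
  rw [hfun, hval] at h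
  rw [show (-(1/2) : ℝ) • (exp (((s - r)/2) • x) * x)
      = -((1/2 : ℝ) • (exp (((s - r)/2) • x) * x)) by
    rw [neg_smul]] at h
  exact h

lemma E_bound (K L : A) (s t : ℝ) (hs0 : 0 ≤ s) (hst : s ≤ t)
    (hK : ∀ r ∈ Set.Icc (0:ℝ) t, ‖exp (r • K)‖ ≤ 1)
    (hL : ∀ r ∈ Set.Icc (0:ℝ) t, ‖exp (r • L)‖ ≤ 1) :
    ‖(1/2 : ℝ) • (exp ((s/2) • K) * K * exp (s • L) * exp ((s/2) • K)
        - exp ((s/2) • K) * exp (s • L) * K * exp ((s/2) • K))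
      + (L * exp ((s/2) • K) - exp ((s/2) • K) * L) * exp (s • L) * exp ((s/2) • K)‖
      ≤ (‖L‖ + ‖K‖ / 2) * (s ^ 2 / 2) * ‖K * L - L * K‖ := by
  have hmemK : ∀ r : ℝ, 0 ≤ r → r ≤ s → ‖exp (r • K)‖ ≤ 1 := fun r h1 h2 =>
    hK r ⟨h1, h2.trans hst⟩
  have hmemL : ∀ r : ℝ, 0 ≤ r → r ≤ s → ‖exp (r • L)‖ ≤ 1 := fun r h1 h2 =>
    hL r ⟨h1, h2.trans hst⟩
  set D : A := L * K - K * L with hD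
  set Ψ : ℝ → A := fun u =>
    (1/2 : ℝ) • (exp ((s/2) • K) * exp (u • L) * K * exp ((s - u) • L) * exp ((s/2) • K))
      - exp (((s - u)/2) • K) * L * exp ((u/2) • K) * exp (s • L) * exp ((s/2) • K)
    with hΨdef
  set Ψ' : ℝ → A := fun u =>
    (1/2 : ℝ) • (exp ((s/2) • K) * (exp (u • L) * D * exp ((s - u) • L)) * exp ((s/2) • K))
      - (1/2 : ℝ) • (exp (((s - u)/2) • K) * D * (exp ((u/2) • K) * (exp (s • L) * exp ((s/2) • K))))
    with hΨ'def
  have hderiv : ∀ u : ℝ, HasDerivAt Ψ (Ψ' u) u := by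
    intro u
    have d1 : HasDerivAt
        (fun u : ℝ => exp ((s/2) • K) * exp (u • L) * K * exp ((s - u) • L) * exp ((s/2) • K))
        ((((exp ((s/2) • K) * (exp (u • L) * L)) * K) * exp ((s - u) • L)
            + ((exp ((s/2) • K) * exp (u • L)) * K) * (-(L * exp ((s - u) • L))))
          * exp ((s/2) • K)) u := by
      exact (((((dExp L u).const_mul (exp ((s/2) • K))).mul_const K).mul
        (dExpRev L s u)).mul_const (exp ((s/2) • K)))
    have d2 : HasDerivAt
        (fun u : ℝ => exp (((s - u)/2) • K) * L * exp ((u/2) • K) * exp (s • L) * exp ((s/2) • K))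
        (((((-((1/2 : ℝ) • (exp (((s - u)/2) • K) * K))) * L) * exp ((u/2) • K)
            + (exp (((s - u)/2) • K) * L) * ((1/2 : ℝ) • (K * exp ((u/2) • K))))
          * exp (s • L)) * exp ((s/2) • K)) u := by
      exact (((((dExpHalfRev K s u).mul_const L).mul (dExpHalf K u)).mul_const
        (exp (s • L))).mul_const (exp ((s/2) • K)))
    have hcomb := (d1.const_smul ((1:ℝ)/2)).sub d2
    convert hcomb using 1
    · rfl
    · rfl
    simp only [hΨ'def, hD, smul_sub, smul_add, mul_smul_comm, smul_mul_assoc, neg_mul,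
      mul_neg, neg_smul, smul_neg, mul_sub, sub_mul, mul_add, add_mul, mul_assoc]
    abel
  -- FTC
  have hcont : Continuous Ψ' := by
    letI : NormedAlgebra ℚ A := .restrictScalars ℚ ℝ A
    have cK2 : Continuous fun _ : ℝ => exp ((s/2) • K) := continuous_const
    have c1 : Continuous fun u : ℝ => exp (u • L) :=
      exp_continuous.comp (continuous_id.smul continuous_const)
    have c2 : Continuous fun u : ℝ => exp ((s - u) • L) :=
      exp_continuous.comp (((continuous_const.sub continuous_id)).smul continuous_const)
    have c3 : Continuous fun u : ℝ => exp (((s - u)/2) • K) :=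
      exp_continuous.comp ((((continuous_const.sub continuous_id)).div_const 2).smul
        continuous_const)
    have c4 : Continuous fun u : ℝ => exp ((u/2) • K) :=
      exp_continuous.comp ((continuous_id.div_const 2).smul continuous_const)
    apply Continuous.sub
    · exact (((cK2.mul ((c1.mul continuous_const).mul c2)).mul cK2)).const_smul _
    · exact (((c3.mul continuous_const).mul (c4.mul continuous_const))).const_smul _
  have hint : IntervalIntegrable Ψ' MeasureTheory.volume 0 s :=
    hcont.intervalIntegrable 0 s
  have hFTC : ∫ u in (0:ℝ)..s, Ψ' u = Ψ s - Ψ 0 :=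
    intervalIntegral.integral_eq_sub_of_hasDerivAt (fun u _ => hderiv u) hint
  -- pointwise bound on the derivative
  have hDnorm : ‖D‖ = ‖K * L - L * K‖ := by
    rw [hD, show L * K - K * L = -(K * L - L * K) by noncomm_ring, norm_neg]
  have hpt : ∀ u : ℝ, 0 ≤ u → u ≤ s →
      ‖Ψ' u‖ ≤ (‖L‖ + ‖K‖ / 2) * ‖K * L - L * K‖ * u := by
    intro u hu0 hus
    have hu2 : (0:ℝ) ≤ u / 2 := by linarith
    have hsu2 : (0:ℝ) ≤ (s - u) / 2 := by linarith
    -- commutator bounds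
    have hcL := comm_exp_bound_s5 L D u hu0 (fun v hv => hmemL v hv.1 (hv.2.trans hus))
    have hcK := comm_exp_bound_s5 K D (u/2) hu2
      (fun v hv => hmemK v hv.1 (hv.2.trans (by linarith)))
    -- rewrite Ψ' u as (1/2) • (T1 - T2)
    have hsplit : Ψ' u = (1/2 : ℝ) •
        ((exp ((s/2) • K) * (exp (u • L) * D * exp ((s - u) • L)) * exp ((s/2) • K))
          - (exp (((s - u)/2) • K) * D * (exp ((u/2) • K) * (exp (s • L) * exp ((s/2) • K))))) := by
      rw [hΨ'def, smul_sub]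
    set T1 : A := exp ((s/2) • K) * (exp (u • L) * D * exp ((s - u) • L)) * exp ((s/2) • K) with hT1
    set T2 : A := exp (((s - u)/2) • K) * D * (exp ((u/2) • K) * (exp (s • L) * exp ((s/2) • K))) with hT2
    set Z : A := exp ((s/2) • K) * (D * exp (s • L)) * exp ((s/2) • K) with hZ
    have hLL : exp (u • L) * exp ((s - u) • L) = exp (s • L) := by
      rw [← exp_smul_add]; congr 1; ring
    have hKK : exp ((s/2) • K) = exp (((s - u)/2) • K) * exp ((u/2) • K) := by
      rw [← exp_smul_add]; congr 1; ring
    have h1 : T1 - Z = exp ((s/2) • K) *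
        ((exp (u • L) * D - D * exp (u • L)) * exp ((s - u) • L)) * exp ((s/2) • K) := by
      rw [hT1, hZ, ← hLL]; noncomm_ring
    have h2 : Z - T2 = exp (((s - u)/2) • K) *
        ((exp ((u/2) • K) * D - D * exp ((u/2) • K)) * (exp (s • L) * exp ((s/2) • K))) := by
      rw [hT2, hZ, hKK]; noncomm_ring
    -- norms
    have nK2 : ‖exp ((s/2) • K)‖ ≤ 1 := hmemK (s/2) (by linarith) (by linarith)
    have nLs : ‖exp (s • L)‖ ≤ 1 := hmemL s hs0 le_rfl
    have nL2 : ‖exp ((s - u) • L)‖ ≤ 1 := hmemL (s - u) (by linarith) (by linarith)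
    have nK3 : ‖exp (((s - u)/2) • K)‖ ≤ 1 := hmemK ((s - u)/2) hsu2 (by linarith)
    have hcomm1 : ‖exp (u • L) * D - D * exp (u • L)‖ ≤ u * (2 * ‖L‖ * ‖D‖) := by
      refine hcL.trans ?_
      have h : ‖L * D - D * L‖ ≤ 2 * ‖L‖ * ‖D‖ := by
        calc ‖L * D - D * L‖ ≤ ‖L * D‖ + ‖D * L‖ := norm_sub_le _ _
          _ ≤ ‖L‖ * ‖D‖ + ‖D‖ * ‖L‖ := add_le_add (norm_mul_le _ _) (norm_mul_le _ _)
          _ = 2 * ‖L‖ * ‖D‖ := by ring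
      exact mul_le_mul_of_nonneg_left h hu0
    have hcomm2 : ‖exp ((u/2) • K) * D - D * exp ((u/2) • K)‖ ≤ (u/2) * (2 * ‖K‖ * ‖D‖) := by
      refine hcK.trans ?_
      have h : ‖K * D - D * K‖ ≤ 2 * ‖K‖ * ‖D‖ := by
        calc ‖K * D - D * K‖ ≤ ‖K * D‖ + ‖D * K‖ := norm_sub_le _ _
          _ ≤ ‖K‖ * ‖D‖ + ‖D‖ * ‖K‖ := add_le_add (norm_mul_le _ _) (norm_mul_le _ _)
          _ = 2 * ‖K‖ * ‖D‖ := by ring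
      exact mul_le_mul_of_nonneg_left h hu2
    have hb1 : (0:ℝ) ≤ u * (2 * ‖L‖ * ‖D‖) := by positivity
    have hb2 : (0:ℝ) ≤ (u/2) * (2 * ‖K‖ * ‖D‖) := by positivity
    have hn1 : ‖T1 - Z‖ ≤ u * (2 * ‖L‖ * ‖D‖) := by
      rw [h1]
      have step1 := norm_mul_le_of_le hcomm1 nL2
      have step2 := norm_mul_le_of_le nK2 step1
      have step3 := norm_mul_le_of_le step2 nK2
      calc ‖exp ((s/2) • K) * ((exp (u • L) * D - D * exp (u • L)) * exp ((s - u) • L))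
            * exp ((s/2) • K)‖ ≤ 1 * (u * (2 * ‖L‖ * ‖D‖) * 1) * 1 := step3
        _ = u * (2 * ‖L‖ * ‖D‖) := by ring
    have hn2 : ‖Z - T2‖ ≤ (u/2) * (2 * ‖K‖ * ‖D‖) := by
      rw [h2]
      have nprod : ‖exp (s • L) * exp ((s/2) • K)‖ ≤ 1 * 1 :=
        norm_mul_le_of_le nLs nK2
      have step1 := norm_mul_le_of_le hcomm2 nprod
      have step2 := norm_mul_le_of_le nK3 step1
      calc ‖exp (((s - u)/2) • K) * ((exp ((u/2) • K) * D - D * exp ((u/2) • K))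
            * (exp (s • L) * exp ((s/2) • K)))‖
          ≤ 1 * ((u/2) * (2 * ‖K‖ * ‖D‖) * (1 * 1)) := step2
        _ = (u/2) * (2 * ‖K‖ * ‖D‖) := by ring
    have htot : ‖T1 - T2‖ ≤ u * (2 * ‖L‖ * ‖D‖) + (u/2) * (2 * ‖K‖ * ‖D‖) := by
      calc ‖T1 - T2‖ = ‖(T1 - Z) + (Z - T2)‖ := by abel_nf
        _ ≤ ‖T1 - Z‖ + ‖Z - T2‖ := norm_add_le _ _
        _ ≤ _ := add_le_add hn1 hn2
    rw [hsplit, norm_smul]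
    have hhalf : ‖(1/2 : ℝ)‖ = (1/2 : ℝ) := by norm_num [Real.norm_eq_abs]
    rw [hhalf, ← hDnorm]
    linarith [htot]
  -- integral bound
  have hgint : IntervalIntegrable
      (fun u : ℝ => (‖L‖ + ‖K‖ / 2) * ‖K * L - L * K‖ * u) MeasureTheory.volume 0 s :=
    (continuous_const.mul continuous_id).intervalIntegrable 0 s
  have hae : ∀ᵐ u ∂(MeasureTheory.volume.restrict (Set.uIoc (0:ℝ) s)),
      ‖Ψ' u‖ ≤ (‖L‖ + ‖K‖ / 2) * ‖K * L - L * K‖ * u := by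
    rw [Set.uIoc_of_le hs0]
    filter_upwards [MeasureTheory.ae_restrict_mem measurableSet_Ioc] with u hu
    exact hpt u hu.1.le hu.2
  have hnormint := intervalIntegral.norm_integral_le_of_norm_le hs0
    ((MeasureTheory.ae_restrict_iff' measurableSet_Ioc).1 (by rwa [Set.uIoc_of_le hs0] at hae)) hgint
  rw [hFTC] at hnormint
  have hval : ∫ u in (0:ℝ)..s, (‖L‖ + ‖K‖ / 2) * ‖K * L - L * K‖ * u
      = (‖L‖ + ‖K‖ / 2) * ‖K * L - L * K‖ * (s ^ 2 / 2) := by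
    rw [intervalIntegral.integral_const_mul, integral_id]
    ring
  rw [hval] at hnormint
  have habs : |(‖L‖ + ‖K‖ / 2) * ‖K * L - L * K‖ * (s ^ 2 / 2)|
      = (‖L‖ + ‖K‖ / 2) * ‖K * L - L * K‖ * (s ^ 2 / 2) := by
    apply abs_of_nonneg; positivity
  -- identify the goal expression with Ψ 0 - Ψ s
  have hgoal : (1/2 : ℝ) • (exp ((s/2) • K) * K * exp (s • L) * exp ((s/2) • K)
        - exp ((s/2) • K) * exp (s • L) * K * exp ((s/2) • K))
      + (L * exp ((s/2) • K) - exp ((s/2) • K) * L) * exp (s • L) * exp ((s/2) • K)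
      = Ψ 0 - Ψ s := by
    rw [hΨdef]
    simp only [zero_smul, exp_zero, sub_zero, sub_self, zero_div, one_mul, mul_one, zero_smul]
    simp only [smul_sub, mul_sub, sub_mul, mul_assoc]
    abel
  rw [hgoal]
  calc ‖Ψ 0 - Ψ s‖ = ‖Ψ s - Ψ 0‖ := norm_sub_rev _ _
    _ ≤ (‖L‖ + ‖K‖ / 2) * ‖K * L - L * K‖ * (s ^ 2 / 2) := hnormint
    _ = (‖L‖ + ‖K‖ / 2) * (s ^ 2 / 2) * ‖K * L - L * K‖ := by ring

lemma dExp' (x : A) (r : ℝ) :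
    HasDerivAt (fun u : ℝ => exp (u • x)) (x * exp (r • x)) r :=
  hasDerivAt_exp_smul_const' x r

lemma dExpHalf' (x : A) (r : ℝ) :
    HasDerivAt (fun u : ℝ => exp ((u / 2) • x)) ((1/2 : ℝ) • (exp ((r / 2) • x) * x)) r := by
  have h := hasDerivAt_exp_affine x (1/2) 0 r
  have hfun : (fun u : ℝ => exp ((1/2 * u + 0) • x)) = fun u : ℝ => exp ((u / 2) • x) := by
    funext u; congr 1; ring
  have hval : (1/2 * r + 0) = r / 2 := by ring
  rw [hfun, hval] at h
  exact h

lemma trotter_real (K L : A) (a : ℝ)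
    (ha : a = ‖L‖ + ‖K‖ / 2) (ha' : 0 < a) (t : ℝ) (ht : 0 ≤ t)
    (hK : ∀ s ∈ Set.Icc (0:ℝ) t, ‖exp (s • K)‖ ≤ 1)
    (hL : ∀ s ∈ Set.Icc (0:ℝ) t, ‖exp (s • L)‖ ≤ 1)
    (hKL : ∀ s ∈ Set.Icc (0:ℝ) t, ‖exp (s • (K + L))‖ ≤ 1) :
    ‖exp (t • (K + L)) - exp ((t / 2) • K) * exp (t • L) * exp ((t / 2) • K)‖ ≤
      (2 * (1 - Real.exp (a * t)) + a * t * (1 + Real.exp (a * t))) / a ^ 2 *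
        ‖K * L - L * K‖ := by
  set M : A := K + L with hM
  -- commutation facts
  have hKe : ∀ r : ℝ, K * exp (r • K) = exp (r • K) * K := fun r =>
    (((Commute.refl K).smul_right r).exp_right).eq
  have hMe : ∀ r : ℝ, M * exp (r • M) = exp (r • M) * M := fun r =>
    (((Commute.refl M).smul_right r).exp_right).eq
  set S : ℝ → A := fun s => exp ((s/2) • K) * exp (s • L) * exp ((s/2) • K) with hS
  set Econ : ℝ → A := fun s =>
    (1/2 : ℝ) • (exp ((s/2) • K) * K * exp (s • L) * exp ((s/2) • K)
        - exp ((s/2) • K) * exp (s • L) * K * exp ((s/2) • K))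
      + (L * exp ((s/2) • K) - exp ((s/2) • K) * L) * exp (s • L) * exp ((s/2) • K)
    with hEcon
  set G : ℝ → A := fun s => exp ((t - s) • M) * S s with hG
  have hderiv : ∀ s : ℝ, HasDerivAt G (-(exp ((t - s) • M) * Econ s)) s := by
    intro s
    have dS : HasDerivAt S
        ((((1/2 : ℝ) • (exp ((s/2) • K) * K)) * exp (s • L)
            + exp ((s/2) • K) * (L * exp (s • L))) * exp ((s/2) • K)
          + (exp ((s/2) • K) * exp (s • L)) * ((1/2 : ℝ) • (K * exp ((s/2) • K)))) s :=
      ((dExpHalf' K s).mul (dExp' L s)).mul (dExpHalf K s)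
    have dG := (dExpRev M t s).mul dS
    convert dG using 1
    · rfl
    -- -(expM * Econ s) = (-(M * expM)) * S s + expM * S'
    rw [show (-(M * exp ((t - s) • M))) = -(exp ((t - s) • M) * M) by rw [hMe]]
    have hfact : (((1/2 : ℝ) • (exp ((s/2) • K) * K)) * exp (s • L)
            + exp ((s/2) • K) * (L * exp (s • L))) * exp ((s/2) • K)
          + (exp ((s/2) • K) * exp (s • L)) * ((1/2 : ℝ) • (K * exp ((s/2) • K)))
          - M * S s = -(Econ s) := by
      simp only [hM, hS, hEcon]
      have hx1 : K * (exp ((s/2) • K) * exp (s • L) * exp ((s/2) • K))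
          = exp ((s/2) • K) * K * exp (s • L) * exp ((s/2) • K) := by
        rw [← mul_assoc, ← mul_assoc, hKe]
      rw [add_mul K L (exp ((s/2) • K) * exp (s • L) * exp ((s/2) • K)), hx1]
      simp only [smul_sub, smul_add, mul_smul_comm, smul_mul_assoc, neg_mul, mul_neg,
        neg_smul, smul_neg, mul_sub, sub_mul, mul_add, add_mul, ← mul_assoc, neg_add_rev]
      module
    have : exp ((t - s) • M) * ((((1/2 : ℝ) • (exp ((s/2) • K) * K)) * exp (s • L)
            + exp ((s/2) • K) * (L * exp (s • L))) * exp ((s/2) • K)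
          + (exp ((s/2) • K) * exp (s • L)) * ((1/2 : ℝ) • (K * exp ((s/2) • K)))
          - M * S s) = exp ((t - s) • M) * (-(Econ s)) := by rw [hfact]
    rw [mul_sub, mul_neg] at this
    rw [← this]
    noncomm_ring
  -- continuity of the derivative
  have hcont : Continuous fun s => -(exp ((t - s) • M) * Econ s) := by
    letI : NormedAlgebra ℚ A := .restrictScalars ℚ ℝ A
    have cM : Continuous fun s : ℝ => exp ((t - s) • M) :=
      exp_continuous.comp ((continuous_const.sub continuous_id).smul continuous_const)
    have cK2 : Continuous fun s : ℝ => exp ((s/2) • K) :=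
      exp_continuous.comp ((continuous_id.div_const 2).smul continuous_const)
    have cLs : Continuous fun s : ℝ => exp (s • L) :=
      exp_continuous.comp (continuous_id.smul continuous_const)
    have cE : Continuous Econ := by
      rw [hEcon]
      apply Continuous.add
      · exact ((((cK2.mul continuous_const).mul cLs).mul cK2).sub
          (((cK2.mul cLs).mul continuous_const).mul cK2)).const_smul _
      · exact (((continuous_const.mul cK2).sub (cK2.mul continuous_const)).mul cLs).mul cK2
    exact (cM.mul cE).neg
  have hint : IntervalIntegrable (fun s => -(exp ((t - s) • M) * Econ s))
      MeasureTheory.volume 0 t := hcont.intervalIntegrable 0 t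
  have hFTC : ∫ s in (0:ℝ)..t, -(exp ((t - s) • M) * Econ s) = G t - G 0 :=
    intervalIntegral.integral_eq_sub_of_hasDerivAt (fun s _ => hderiv s) hint
  -- pointwise bound
  have hpt : ∀ s : ℝ, 0 ≤ s → s ≤ t →
      ‖-(exp ((t - s) • M) * Econ s)‖ ≤ (‖L‖ + ‖K‖/2) * ‖K * L - L * K‖ / 2 * s ^ 2 := by
    intro s h0 h1
    rw [norm_neg]
    have hE := E_bound K L s t h0 h1 hK hL
    have hMn : ‖exp ((t - s) • M)‖ ≤ 1 := hKL (t - s) ⟨by linarith, by linarith⟩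
    have := norm_mul_le_of_le hMn hE
    calc ‖exp ((t - s) • M) * Econ s‖
        ≤ 1 * ((‖L‖ + ‖K‖ / 2) * (s ^ 2 / 2) * ‖K * L - L * K‖) := this
      _ = (‖L‖ + ‖K‖/2) * ‖K * L - L * K‖ / 2 * s ^ 2 := by ring
  have hgint : IntervalIntegrable
      (fun s : ℝ => (‖L‖ + ‖K‖/2) * ‖K * L - L * K‖ / 2 * s ^ 2) MeasureTheory.volume 0 t :=
    (continuous_const.mul (continuous_pow 2)).intervalIntegrable 0 t
  have hae : ∀ᵐ s ∂(MeasureTheory.volume.restrict (Set.uIoc (0:ℝ) t)),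
      ‖-(exp ((t - s) • M) * Econ s)‖ ≤ (‖L‖ + ‖K‖/2) * ‖K * L - L * K‖ / 2 * s ^ 2 := by
    rw [Set.uIoc_of_le ht]
    filter_upwards [MeasureTheory.ae_restrict_mem measurableSet_Ioc] with s hs
    exact hpt s hs.1.le hs.2
  have hnormint := intervalIntegral.norm_integral_le_of_norm_le ht
    ((MeasureTheory.ae_restrict_iff' measurableSet_Ioc).1 (by rwa [Set.uIoc_of_le ht] at hae)) hgint
  rw [hFTC] at hnormint
  have hval : ∫ s in (0:ℝ)..t, (‖L‖ + ‖K‖/2) * ‖K * L - L * K‖ / 2 * s ^ 2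
      = (‖L‖ + ‖K‖/2) * ‖K * L - L * K‖ / 2 * (t ^ 3 / 3) := by
    rw [intervalIntegral.integral_const_mul, integral_pow]
    norm_num
  rw [hval] at hnormint
  have habs : |(‖L‖ + ‖K‖/2) * ‖K * L - L * K‖ / 2 * (t ^ 3 / 3)|
      = (‖L‖ + ‖K‖/2) * ‖K * L - L * K‖ / 2 * (t ^ 3 / 3) := by
    apply abs_of_nonneg; positivity
  -- endpoints
  have hG0 : G 0 = exp (t • M) := by
    rw [hG, hS]
    norm_num [exp_zero]
  have hGt : G t = exp ((t/2) • K) * exp (t • L) * exp ((t/2) • K) := by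
    rw [hG, hS]
    norm_num [exp_zero]
  have hmain : ‖exp (t • M) - exp ((t/2) • K) * exp (t • L) * exp ((t/2) • K)‖
      ≤ a * ‖K * L - L * K‖ * t ^ 3 / 6 := by
    rw [← hG0, ← hGt]
    calc ‖G 0 - G t‖ = ‖G t - G 0‖ := norm_sub_rev _ _
      _ ≤ (‖L‖ + ‖K‖/2) * ‖K * L - L * K‖ / 2 * (t ^ 3 / 3) := hnormint
      _ = a * ‖K * L - L * K‖ * t ^ 3 / 6 := by rw [ha]; ring
  refine hmain.trans ?_
  -- real comparison
  have hx := cube_div_six_le (a * t) (by positivity)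
  have ha2 : (0:ℝ) < a ^ 2 := by positivity
  have hdiv : a * ‖K * L - L * K‖ * t ^ 3 / 6
      = ((a * t) ^ 3 / 6) / a ^ 2 * ‖K * L - L * K‖ := by
    field_simp
  rw [hdiv]
  have hfrac : ((a * t) ^ 3 / 6) / a ^ 2
      ≤ (2 * (1 - Real.exp (a * t)) + a * t * (1 + Real.exp (a * t))) / a ^ 2 :=
    (div_le_div_iff_of_pos_right ha2).mpr hx
  exact mul_le_mul_of_nonneg_right hfrac (norm_nonneg _)

end Aux

/-- **Intermediate second-order Trotter–Suzuki bound** (proof of Lemma 4).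
If `K, L` are elements of a complex Banach algebra with `a := ‖L‖ + ‖K‖/2 > 0`
whose exponentials `exp(sK)`, `exp(sL)`, `exp(s(K+L))` are contractions for all
`s ∈ [0,t]`, then
`‖exp(t(K+L)) − exp((t/2)K)·exp(tL)·exp((t/2)K)‖
  ≤ ((2(1 − e^{at}) + at(1 + e^{at}))/a²)·‖[K,L]‖`. -/
theorem trotter_second_order_intermediate_bound {A : Type*} [NormedRing A]
    [NormedAlgebra ℂ A] [CompleteSpace A] (K L : A) (a : ℝ)
    (ha : a = ‖L‖ + ‖K‖ / 2) (ha' : 0 < a) (t : ℝ) (ht : 0 ≤ t)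
    (hK : ∀ s ∈ Set.Icc (0:ℝ) t, ‖exp (s • K)‖ ≤ 1)
    (hL : ∀ s ∈ Set.Icc (0:ℝ) t, ‖exp (s • L)‖ ≤ 1)
    (hKL : ∀ s ∈ Set.Icc (0:ℝ) t, ‖exp (s • (K + L))‖ ≤ 1) :
    ‖exp (t • (K + L)) - exp ((t / 2) • K) * exp (t • L) * exp ((t / 2) • K)‖ ≤
      (2 * (1 - Real.exp (a * t)) + a * t * (1 + Real.exp (a * t))) / a ^ 2 *
        ‖K * L - L * K‖ := by
  exact trotter_real K L a ha ha' t ht hK hL hKL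
end

section
/- Let X and Y be d×K complex matrices such that ρ := XX† and σ := YY† both have trace 1. Then the fidelity satisfies F(ρ,σ) ≥ (2 − ‖X − Y‖₂²)/2, i.e. F(ρ,σ) ≥ 1 − ‖X − Y‖₂²/2. -/
open scoped Matrix ComplexOrder

open scoped Classical in
/-- The positive semidefinite square root of a matrix: the PSD square root if the
matrix is positive semidefinite, and `0` otherwise (junk value). -/
noncomputable def psdSqrt {n : Type*} [Fintype n] [DecidableEq n]
    (M : Matrix n n ℂ) : Matrix n n ℂ :=
  if h : M.PosSemidef then
    (h.1.eigenvectorUnitary : Matrix n n ℂ) *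
      Matrix.diagonal ((↑) ∘ (Real.sqrt ·) ∘ h.1.eigenvalues) *
      (star h.1.eigenvectorUnitary : Matrix n n ℂ)
  else 0

/-- The fidelity `F(ρ,σ) := Tr((√σ ρ √σ)^{1/2})` of two (positive semidefinite)
matrices, as a real number. -/
noncomputable def fidelity {n : Type*} [Fintype n] [DecidableEq n]
    (ρ σ : Matrix n n ℂ) : ℝ :=
  (Matrix.trace (psdSqrt (psdSqrt σ * ρ * psdSqrt σ))).re

/-- The trace norm `‖M‖₁ := Tr((M†M)^{1/2})` of a complex matrix. -/
noncomputable def traceNorm {m n : Type*} [Fintype m] [Fintype n] [DecidableEq n]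
    (M : Matrix m n ℂ) : ℝ :=
  (Matrix.trace (psdSqrt (Mᴴ * M))).re

/-- The Frobenius norm `‖M‖₂ := (Tr(M†M))^{1/2}` of a complex matrix. -/
noncomputable def frobeniusNorm' {m n : Type*} [Fintype m] [Fintype n]
    (M : Matrix m n ℂ) : ℝ :=
  Real.sqrt (Matrix.trace (Mᴴ * M)).re

/-! ### Auxiliary functional calculus for Hermitian matrices -/

/-- Functional calculus for a Hermitian matrix, via its spectral decomposition. -/
noncomputable def mcfc {n : Type*} [Fintype n] [DecidableEq n] {M : Matrix n n ℂ}
    (hM : M.IsHermitian) (f : ℝ → ℝ) : Matrix n n ℂ :=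
  hM.eigenvectorUnitary.1 * Matrix.diagonal ((↑) ∘ f ∘ hM.eigenvalues) *
  (star hM.eigenvectorUnitary : Matrix n n ℂ)

/-- The PSD square root via `mcfc`. -/
noncomputable def Matrix.PosSemidef.sqrt {n : Type*} [Fintype n] [DecidableEq n]
    {M : Matrix n n ℂ} (hM : M.PosSemidef) : Matrix n n ℂ :=
  mcfc hM.1 Real.sqrt

lemma Matrix.PosSemidef.posSemidef_sqrt {n : Type*} [Fintype n] [DecidableEq n]
    {M : Matrix n n ℂ} (hM : M.PosSemidef) : hM.sqrt.PosSemidef := by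
  have hd : (Matrix.diagonal ((↑) ∘ Real.sqrt ∘ hM.1.eigenvalues : n → ℂ)).PosSemidef := by
    refine Matrix.PosSemidef.diagonal fun i => ?_
    simp only [Function.comp_apply, Pi.zero_apply]
    exact_mod_cast Real.sqrt_nonneg _
  exact hd.mul_mul_conjTranspose_same _

lemma psdSqrt_eq_mcfc {n : Type*} [Fintype n] [DecidableEq n] {M : Matrix n n ℂ}
    (hM : M.PosSemidef) : hM.sqrt = mcfc hM.1 Real.sqrt := rfl

lemma mcfc_mul {n : Type*} [Fintype n] [DecidableEq n] {M : Matrix n n ℂ}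
    (hM : M.IsHermitian) (f g : ℝ → ℝ) :
    mcfc hM f * mcfc hM g = mcfc hM (fun x => f x * g x) := by
  have h1 : (star hM.eigenvectorUnitary : Matrix n n ℂ) * hM.eigenvectorUnitary.1 = 1 :=
    Matrix.mem_unitaryGroup_iff'.mp hM.eigenvectorUnitary.2
  have hcan : ∀ Z : Matrix n n ℂ, (star hM.eigenvectorUnitary : Matrix n n ℂ) *
      (hM.eigenvectorUnitary.1 * Z) = Z := by
    intro Z; rw [← Matrix.mul_assoc, h1, Matrix.one_mul]
  unfold mcfc
  simp only [Matrix.mul_assoc]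
  rw [hcan, ← Matrix.mul_assoc (Matrix.diagonal _), Matrix.diagonal_mul_diagonal]
  have : (fun i => (((↑) ∘ f ∘ hM.eigenvalues : n → ℂ)) i * (((↑) ∘ g ∘ hM.eigenvalues : n → ℂ)) i)
      = ((↑) ∘ (fun x => f x * g x) ∘ hM.eigenvalues : n → ℂ) := by
    funext i; simp [Function.comp]
  rw [this]

lemma mcfc_congr {n : Type*} [Fintype n] [DecidableEq n] {M : Matrix n n ℂ}
    (hM : M.IsHermitian) {f g : ℝ → ℝ}
    (h : ∀ i, f (hM.eigenvalues i) = g (hM.eigenvalues i)) : mcfc hM f = mcfc hM g := by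
  have : ((↑) ∘ f ∘ hM.eigenvalues : n → ℂ) = (↑) ∘ g ∘ hM.eigenvalues := by
    funext i; simp [Function.comp, h i]
  unfold mcfc
  rw [this]

lemma mcfc_id {n : Type*} [Fintype n] [DecidableEq n] {M : Matrix n n ℂ}
    (hM : M.IsHermitian) : mcfc hM (fun x => x) = M := by
  have := hM.spectral_theorem
  rw [Unitary.conjStarAlgAut_apply] at this
  unfold mcfc
  exact this.symm

lemma mcfc_conjTranspose {n : Type*} [Fintype n] [DecidableEq n] {M : Matrix n n ℂ}
    (hM : M.IsHermitian) (f : ℝ → ℝ) : (mcfc hM f)ᴴ = mcfc hM f := by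
  have hd : (Matrix.diagonal ((↑) ∘ f ∘ hM.eigenvalues : n → ℂ))ᴴ
      = Matrix.diagonal ((↑) ∘ f ∘ hM.eigenvalues) := by
    have hst : star ((↑) ∘ f ∘ hM.eigenvalues : n → ℂ) = ((↑) ∘ f ∘ hM.eigenvalues : n → ℂ) := by
      funext i
      simp only [Pi.star_apply, Function.comp_apply, Complex.star_def, Complex.conj_ofReal]
    rw [Matrix.diagonal_conjTranspose, hst]
  unfold mcfc
  rw [Matrix.conjTranspose_mul, Matrix.conjTranspose_mul, hd]
  simp only [← Matrix.star_eq_conjTranspose, star_star, Matrix.mul_assoc]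

/-! ### Trace lemmas -/

lemma trace_re_nonneg {n : Type*} [Fintype n] [DecidableEq n] {M : Matrix n n ℂ}
    (hM : M.PosSemidef) : 0 ≤ (Matrix.trace M).re := by
  have h : ∀ i, 0 ≤ (M i i).re := by
    intro i
    have := hM.re_dotProduct_nonneg (Pi.single i 1)
    simpa [dotProduct, Matrix.mulVec, Pi.single_apply, Finset.sum_ite_eq] using this
  rw [Matrix.trace]
  simp only [Complex.re_sum]
  exact Finset.sum_nonneg fun i _ => h i

lemma trace_conjTranspose_mul_re {m k : Type*} [Fintype m] [Fintype k] (B : Matrix m k ℂ) :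
    (Matrix.trace (Bᴴ * B)).re = ∑ p : m × k, ‖B p.1 p.2‖ ^ 2 := by
  rw [Matrix.trace]
  simp only [Complex.re_sum, Matrix.diag_apply, Matrix.mul_apply, Matrix.conjTranspose_apply]
  rw [Fintype.sum_prod_type, Finset.sum_comm]
  refine Finset.sum_congr rfl fun j _ => Finset.sum_congr rfl fun i _ => ?_
  rw [Complex.star_def, mul_comm, Complex.mul_conj]
  simp [Complex.normSq_eq_norm_sq]
  norm_cast

/-- Cauchy–Schwarz for the Frobenius inner product. -/
lemma trace_cs {m k : Type*} [Fintype m] [Fintype k] (B C : Matrix m k ℂ) :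
    (Matrix.trace (Bᴴ * C)).re ≤
      Real.sqrt (Matrix.trace (Bᴴ * B)).re * Real.sqrt (Matrix.trace (Cᴴ * C)).re := by
  have h1 : (Matrix.trace (Bᴴ * C)).re ≤ ∑ p : m × k, ‖B p.1 p.2‖ * ‖C p.1 p.2‖ := by
    rw [Matrix.trace]
    simp only [Complex.re_sum, Matrix.diag_apply, Matrix.mul_apply, Matrix.conjTranspose_apply]
    rw [Fintype.sum_prod_type, Finset.sum_comm]
    refine Finset.sum_le_sum fun j _ => ?_
    refine Finset.sum_le_sum fun i _ => ?_
    refine le_trans (Complex.re_le_norm _) (le_of_eq ?_)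
    rw [norm_mul, norm_star]
  have h2 : ∑ p : m × k, ‖B p.1 p.2‖ * ‖C p.1 p.2‖ ≤
      Real.sqrt (∑ p : m × k, ‖B p.1 p.2‖ ^ 2) * Real.sqrt (∑ p : m × k, ‖C p.1 p.2‖ ^ 2) := by
    rw [← Real.sqrt_mul (Finset.sum_nonneg fun p _ => sq_nonneg _)]
    rw [Real.le_sqrt (Finset.sum_nonneg fun p _ => mul_nonneg (norm_nonneg _) (norm_nonneg _))]
    · exact Finset.sum_mul_sq_le_sq_mul_sq _ _ _
    · positivity
  rw [trace_conjTranspose_mul_re, trace_conjTranspose_mul_re]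
  exact h1.trans h2

/-! ### Spectral functions used in the proof -/

noncomputable def fsi0 : ℝ → ℝ := fun x => if x = 0 then 0 else (Real.sqrt x)⁻¹
noncomputable def fqi0 : ℝ → ℝ := fun x => if x = 0 then 0 else (Real.sqrt (Real.sqrt x))⁻¹
noncomputable def fq0 : ℝ → ℝ := fun x => Real.sqrt (Real.sqrt x)
noncomputable def fch0 : ℝ → ℝ := fun x => if x = 0 then 0 else 1

set_option maxHeartbeats 2000000 in
/-- **Fidelity bound of Lemma 1.** If `X, Y` are `d × K` complex matrices such
that `ρ := XX†` and `σ := YY†` both have trace `1`, then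
`F(ρ,σ) ≥ 1 − ‖X − Y‖₂²/2`. -/
theorem fidelity_ge_of_purifications {d K : ℕ} (X Y : Matrix (Fin d) (Fin K) ℂ)
    (hX : Matrix.trace (X * Xᴴ) = 1) (hY : Matrix.trace (Y * Yᴴ) = 1) :
    fidelity (X * Xᴴ) (Y * Yᴴ) ≥ 1 - frobeniusNorm' (X - Y) ^ 2 / 2 := by
  classical
  have econ : ∀ {M : Matrix (Fin d) (Fin d) ℂ} (hM : M.PosSemidef) (f g : ℝ → ℝ),
      (∀ x, 0 ≤ x → f x = g x) → mcfc hM.1 f = mcfc hM.1 g := by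
    intro M hM f g h
    exact mcfc_congr _ fun i => h _ (hM.eigenvalues_nonneg i)
  -- σ side
  have hσ : (Y * Yᴴ).PosSemidef := Matrix.posSemidef_self_mul_conjTranspose Y
  set S : Matrix (Fin d) (Fin d) ℂ := hσ.sqrt with hSdef
  have hSm : S = mcfc hσ.1 Real.sqrt := rfl
  have hSherm : Sᴴ = S := hσ.posSemidef_sqrt.1
  set Si : Matrix (Fin d) (Fin d) ℂ := mcfc hσ.1 fsi0 with hSidef
  set P : Matrix (Fin d) (Fin d) ℂ := mcfc hσ.1 fch0 with hPdef
  have hPherm : Pᴴ = P := mcfc_conjTranspose _ _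
  have hSiherm : Siᴴ = Si := mcfc_conjTranspose _ _
  have hSSi : S * Si = P := by
    rw [hSm, hSidef, hPdef, mcfc_mul]
    refine econ hσ _ _ fun x hx => ?_
    by_cases h : x = 0
    · simp [h, fsi0, fch0]
    · have hx' : 0 < x := lt_of_le_of_ne hx (Ne.symm h)
      simp only [fsi0, fch0, if_neg h]
      exact mul_inv_cancel₀ (ne_of_gt (Real.sqrt_pos.mpr hx'))
  have hidσ : mcfc hσ.1 (fun x => x) = Y * Yᴴ := mcfc_id hσ.1
  have hPσ : P * (Y * Yᴴ) = Y * Yᴴ := by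
    conv_lhs => rw [← hidσ]
    rw [hPdef, mcfc_mul]
    conv_rhs => rw [← hidσ]
    refine econ hσ _ _ fun x hx => ?_
    by_cases h : x = 0 <;> simp [fch0, h]
  have h1PY : (1 - P) * Y = 0 := by
    have h0 : ((1 - P) * Y) * ((1 - P) * Y)ᴴ = 0 := by
      rw [Matrix.conjTranspose_mul, Matrix.conjTranspose_sub, Matrix.conjTranspose_one, hPherm]
      rw [← Matrix.mul_assoc, Matrix.mul_assoc (1 - P) Y Yᴴ]
      have h1Pσ : (1 - P) * (Y * Yᴴ) = 0 := by
        rw [Matrix.sub_mul, Matrix.one_mul, hPσ, sub_self]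
      rw [h1Pσ, Matrix.zero_mul]
    exact Matrix.self_mul_conjTranspose_eq_zero.mp h0
  have hPY : P * Y = Y := by
    have h := h1PY
    rw [Matrix.sub_mul, Matrix.one_mul, sub_eq_zero] at h
    exact h.symm
  set W : Matrix (Fin d) (Fin K) ℂ := Si * Y with hWdef
  have hSW : S * W = Y := by
    rw [hWdef, ← Matrix.mul_assoc, hSSi, hPY]
  have hWW : W * Wᴴ = P := by
    rw [hWdef, Matrix.conjTranspose_mul, hSiherm, ← Matrix.mul_assoc,
      Matrix.mul_assoc Si Y Yᴴ, ← hidσ, hSidef, mcfc_mul, mcfc_mul, hPdef]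
    refine econ hσ _ _ fun x hx => ?_
    by_cases h : x = 0
    · simp [fsi0, fch0, h]
    · have hx' : 0 < x := lt_of_le_of_ne hx (Ne.symm h)
      have hs : Real.sqrt x ≠ 0 := ne_of_gt (Real.sqrt_pos.mpr hx')
      simp only [fsi0, fch0, if_neg h]
      field_simp
      rw [Real.sq_sqrt hx]
  -- A side
  set A : Matrix (Fin d) (Fin K) ℂ := S * X with hAdef
  have hAA : (A * Aᴴ).PosSemidef := Matrix.posSemidef_self_mul_conjTranspose A
  set H : Matrix (Fin d) (Fin d) ℂ := hAA.sqrt with hHdef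
  have hHm : H = mcfc hAA.1 Real.sqrt := rfl
  have hHpsd : H.PosSemidef := hAA.posSemidef_sqrt
  set G : Matrix (Fin d) (Fin d) ℂ := mcfc hAA.1 fq0 with hGdef
  set Gi : Matrix (Fin d) (Fin d) ℂ := mcfc hAA.1 fqi0 with hGidef
  set Q : Matrix (Fin d) (Fin d) ℂ := mcfc hAA.1 fch0 with hQdef
  have hGherm : Gᴴ = G := mcfc_conjTranspose _ _
  have hGiherm : Giᴴ = Gi := mcfc_conjTranspose _ _
  have hGGi : G * Gi = Q := by
    rw [hGdef, hGidef, hQdef, mcfc_mul]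
    refine econ hAA _ _ fun x hx => ?_
    by_cases h : x = 0
    · simp [fq0, fqi0, fch0, h]
    · have hx' : 0 < x := lt_of_le_of_ne hx (Ne.symm h)
      have hs : 0 < Real.sqrt (Real.sqrt x) :=
        Real.sqrt_pos.mpr (Real.sqrt_pos.mpr hx')
      simp only [fq0, fqi0, fch0, if_neg h]
      exact mul_inv_cancel₀ (ne_of_gt hs)
  have hidA : mcfc hAA.1 (fun x => x) = A * Aᴴ := mcfc_id hAA.1
  have hQAA : Q * (A * Aᴴ) = A * Aᴴ := by
    conv_lhs => rw [← hidA]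
    rw [hQdef, mcfc_mul]
    conv_rhs => rw [← hidA]
    refine econ hAA _ _ fun x hx => ?_
    by_cases h : x = 0 <;> simp [fch0, h]
  have hQA : Q * A = A := by
    have h0 : ((1 - Q) * A) * ((1 - Q) * A)ᴴ = 0 := by
      rw [Matrix.conjTranspose_mul, Matrix.conjTranspose_sub, Matrix.conjTranspose_one,
        mcfc_conjTranspose]
      rw [← Matrix.mul_assoc, Matrix.mul_assoc (1 - Q) A Aᴴ]
      have h1QAA : (1 - Q) * (A * Aᴴ) = 0 := by
        rw [Matrix.sub_mul, Matrix.one_mul, hQAA, sub_self]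
      rw [show (1 - mcfc hAA.1 fch0) = 1 - Q from rfl, h1QAA, Matrix.zero_mul]
    have h := Matrix.self_mul_conjTranspose_eq_zero.mp h0
    rw [Matrix.sub_mul, Matrix.one_mul, sub_eq_zero] at h
    exact h.symm
  set R : Matrix (Fin d) (Fin K) ℂ := Gi * A with hRdef
  have hGR : G * R = A := by
    rw [hRdef, ← Matrix.mul_assoc, hGGi, hQA]
  have hGG : G * G = H := by
    rw [hGdef, hHm, mcfc_mul]
    refine econ hAA _ _ fun x hx => ?_
    exact Real.mul_self_sqrt (Real.sqrt_nonneg x)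
  -- trace identities
  have hTrR : Matrix.trace (Rᴴ * R) = Matrix.trace H := by
    rw [hRdef, Matrix.conjTranspose_mul, hGiherm,
      Matrix.trace_mul_comm (Aᴴ * Gi) (Gi * A)]
    have e1 : (Gi * A) * (Aᴴ * Gi) = (Gi * (A * Aᴴ)) * Gi := by
      simp only [Matrix.mul_assoc]
    rw [e1, Matrix.trace_mul_comm (Gi * (A * Aᴴ)) Gi, ← Matrix.mul_assoc, ← hidA,
      hGidef, mcfc_mul, mcfc_mul, hHm]
    congr 1
    refine econ hAA _ _ fun x hx => ?_
    by_cases h : x = 0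
    · simp [fqi0, h]
    · have hx' : 0 < x := lt_of_le_of_ne hx (Ne.symm h)
      have hmm : Real.sqrt (Real.sqrt x) * Real.sqrt (Real.sqrt x) = Real.sqrt x :=
        Real.mul_self_sqrt (Real.sqrt_nonneg x)
      simp only [fqi0, if_neg h]
      rw [← mul_inv, hmm, inv_mul_eq_div, Real.div_sqrt]
  have hTrGW : Matrix.trace ((G * W)ᴴ * (G * W)) = Matrix.trace (H * P) := by
    rw [Matrix.conjTranspose_mul, hGherm]
    have e1 : G * (G * W) = H * W := by rw [← Matrix.mul_assoc, hGG]
    rw [Matrix.mul_assoc Wᴴ G (G * W), e1, Matrix.trace_mul_comm Wᴴ (H * W),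
      Matrix.mul_assoc, hWW]
  -- Tr(HP) ≤ Tr(H)
  have hPP : P * P = P := by
    rw [hPdef, mcfc_mul]
    refine econ hσ _ _ fun x hx => ?_
    by_cases h : x = 0 <;> simp [fch0, h]
  have h1P1P : (1 - P) * (1 - P) = 1 - P := by
    rw [Matrix.sub_mul, Matrix.one_mul, Matrix.mul_sub, Matrix.mul_one, hPP, sub_self, sub_zero]
  have hHP_le : (Matrix.trace (H * P)).re ≤ (Matrix.trace H).re := by
    have hpsd2 : ((1 - P) * H * (1 - P)ᴴ).PosSemidef := hHpsd.mul_mul_conjTranspose_same (1 - P)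
    have h0 := trace_re_nonneg hpsd2
    have h1Ph : (1 - P)ᴴ = 1 - P := by
      rw [Matrix.conjTranspose_sub, Matrix.conjTranspose_one, hPherm]
    have htr : Matrix.trace ((1 - P) * H * (1 - P)ᴴ)
        = Matrix.trace H - Matrix.trace (H * P) := by
      rw [h1Ph, Matrix.trace_mul_comm ((1 - P) * H) (1 - P), ← Matrix.mul_assoc, h1P1P,
        Matrix.sub_mul, Matrix.one_mul, Matrix.trace_sub, Matrix.trace_mul_comm P H]
    rw [htr, Complex.sub_re] at h0
    linarith
  -- main inequality
  have hXYRGW : Xᴴ * Y = Rᴴ * (G * W) := by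
    have hAH : Aᴴ = Xᴴ * S := by rw [hAdef, Matrix.conjTranspose_mul, hSherm]
    have h1 : Xᴴ * Y = Aᴴ * W := by rw [hAH, Matrix.mul_assoc, hSW]
    have h2 : Aᴴ = Rᴴ * G := by
      conv_lhs => rw [← hGR]
      rw [Matrix.conjTranspose_mul, hGherm]
    rw [h1, h2, Matrix.mul_assoc]
  have main : (Matrix.trace (Xᴴ * Y)).re ≤ (Matrix.trace H).re := by
    rw [hXYRGW]
    refine (trace_cs R (G * W)).trans ?_
    rw [hTrR, hTrGW]
    calc Real.sqrt (Matrix.trace H).re * Real.sqrt (Matrix.trace (H * P)).re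
        ≤ Real.sqrt (Matrix.trace H).re * Real.sqrt (Matrix.trace H).re :=
          mul_le_mul_of_nonneg_left (Real.sqrt_le_sqrt hHP_le) (Real.sqrt_nonneg _)
      _ = (Matrix.trace H).re := Real.mul_self_sqrt (trace_re_nonneg hHpsd)
  -- fidelity identity
  have hfid : fidelity (X * Xᴴ) (Y * Yᴴ) = (Matrix.trace H).re := by
    rw [fidelity]
    have hps : psdSqrt (Y * Yᴴ) = S := by unfold psdSqrt; exact dif_pos hσ
    have h2 : S * (X * Xᴴ) * S = A * Aᴴ := by
      rw [hAdef, Matrix.conjTranspose_mul, hSherm]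
      simp only [Matrix.mul_assoc]
    rw [hps, h2]
    have hps2 : psdSqrt (A * Aᴴ) = H := by unfold psdSqrt; exact dif_pos hAA
    rw [hps2]
  -- Frobenius norm computation
  have hpsdXY : ((X - Y)ᴴ * (X - Y)).PosSemidef := Matrix.posSemidef_conjTranspose_mul_self _
  have hfro : frobeniusNorm' (X - Y) ^ 2 = 2 - 2 * (Matrix.trace (Xᴴ * Y)).re := by
    rw [frobeniusNorm', Real.sq_sqrt (trace_re_nonneg hpsdXY)]
    have hexp : Matrix.trace ((X - Y)ᴴ * (X - Y)) =
        Matrix.trace (Xᴴ * X) + Matrix.trace (Yᴴ * Y)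
          - Matrix.trace (Xᴴ * Y) - Matrix.trace (Yᴴ * X) := by
      rw [Matrix.conjTranspose_sub, Matrix.sub_mul, Matrix.mul_sub, Matrix.mul_sub]
      rw [Matrix.trace_sub, Matrix.trace_sub, Matrix.trace_sub]
      ring
    have e1 : Matrix.trace (Xᴴ * X) = 1 := by rw [Matrix.trace_mul_comm]; exact hX
    have e2 : Matrix.trace (Yᴴ * Y) = 1 := by rw [Matrix.trace_mul_comm]; exact hY
    have e3 : Matrix.trace (Yᴴ * X) = star (Matrix.trace (Xᴴ * Y)) := by
      rw [← Matrix.trace_conjTranspose, Matrix.conjTranspose_mul,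
        Matrix.conjTranspose_conjTranspose]
    rw [hexp, e1, e2, e3]
    simp only [Complex.sub_re, Complex.add_re, Complex.one_re, Complex.star_def,
      Complex.conj_re]
    ring
  rw [ge_iff_le, hfid, hfro]
  linarith [main]
end

section
/- Let A be a complex Banach algebra, let N ≥ 2, and let K₁, …, K_{N−1} ∈ A satisfy ‖Kₗ‖ ≤ b for all l and [Kᵢ, Kⱼ] = 0 whenever |i − j| ≥ 2. Define O := Σ_{l odd} Kₗ and E := Σ_{l even} Kₗ (sums over 1 ≤ l ≤ N−1), and let τ ≥ 0 satisfy τ·(‖E‖ + ‖O‖/2) ≤ 1. Assume ‖exp(sO)‖ ≤ 1, ‖exp(sE)‖ ≤ 1 and ‖exp(s(O+E))‖ ≤ 1 for all s ∈ [0,τ]. Then the one-step second-order Trotter–Suzuki error satisfies ‖exp(τ(O+E)) − exp((τ/2)O)·exp(τE)·exp((τ/2)O)‖ ≤ τ³·N²·b³/2. -/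
open NormedSpace

section TrotterAux

open intervalIntegral MeasureTheory

variable {A : Type*} [NormedRing A] [NormedAlgebra ℂ A] [CompleteSpace A]

lemma expDerivR (X : A) (t : ℝ) :
    HasDerivAt (fun u : ℝ => exp (u • X)) (exp (t • X) * X) t := by
  have h : HasDerivAt (fun z : ℂ => exp (z • X)) (exp ((t:ℂ) • X) * X) ((t:ℝ) : ℂ) :=
    hasDerivAt_exp_smul_const X (t : ℂ)
  have h3 := (h.hasFDerivAt.restrictScalars ℝ).comp (t:ℝ) Complex.ofRealCLM.hasFDerivAt
  have h4 := h3.hasDerivAt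
  simpa [Complex.coe_smul, Function.comp_def] using h4

lemma expContR (X : A) : Continuous (fun u : ℝ => exp (u • X)) :=
  continuous_iff_continuousAt.2 fun t => (expDerivR X t).continuousAt

omit [CompleteSpace A] in
lemma expCommR (X : A) (t : ℝ) : exp (t • X) * X = X * exp (t • X) :=
  (((Commute.refl X).smul_left t).exp_left).eq

lemma shift_left (X Z : A) (u : ℝ) (hu : 0 ≤ u)
    (hc : ∀ v ∈ Set.Icc (0:ℝ) u, ‖exp (v • X)‖ ≤ 1) :
    ‖exp (u • X) * Z - Z‖ ≤ u * (‖X‖ * ‖Z‖) := by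
  have hd : ∀ v ∈ Set.uIcc (0:ℝ) u,
      HasDerivAt (fun v : ℝ => exp (v • X) * Z) (exp (v • X) * X * Z) v :=
    fun v _ => (expDerivR X v).mul_const Z
  have hcont : Continuous fun v : ℝ => exp (v • X) * X * Z :=
    ((expContR X).mul continuous_const).mul continuous_const
  have heq := integral_eq_sub_of_hasDerivAt hd (hcont.intervalIntegrable 0 u)
  rw [zero_smul, exp_zero, one_mul] at heq
  rw [← heq]
  have hb := intervalIntegral.norm_integral_le_of_norm_le_const
    (a := (0:ℝ)) (b := u) (C := ‖X‖ * ‖Z‖)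
    (f := fun v => exp (v • X) * X * Z) ?_
  · calc ‖∫ v in (0:ℝ)..u, exp (v • X) * X * Z‖ ≤ ‖X‖ * ‖Z‖ * |u - 0| := hb
    _ = u * (‖X‖ * ‖Z‖) := by rw [sub_zero, abs_of_nonneg hu]; ring
  · intro v hv
    rw [Set.uIoc_of_le hu] at hv
    have h1 : ‖exp (v • X)‖ ≤ 1 := hc v ⟨le_of_lt hv.1, hv.2⟩
    calc ‖exp (v • X) * X * Z‖ ≤ ‖exp (v • X) * X‖ * ‖Z‖ := norm_mul_le _ _
      _ ≤ ‖exp (v • X)‖ * ‖X‖ * ‖Z‖ := by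
          gcongr; exact norm_mul_le _ _
      _ ≤ 1 * ‖X‖ * ‖Z‖ := by gcongr
      _ = ‖X‖ * ‖Z‖ := by ring

lemma shift_right (X Z : A) (u : ℝ) (hu : 0 ≤ u)
    (hc : ∀ v ∈ Set.Icc (0:ℝ) u, ‖exp (v • X)‖ ≤ 1) :
    ‖Z * exp (u • X) - Z‖ ≤ u * (‖X‖ * ‖Z‖) := by
  have hd : ∀ v ∈ Set.uIcc (0:ℝ) u,
      HasDerivAt (fun v : ℝ => Z * exp (v • X)) (Z * (exp (v • X) * X)) v :=
    fun v _ => (expDerivR X v).const_mul Z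
  have hcont : Continuous fun v : ℝ => Z * (exp (v • X) * X) :=
    continuous_const.mul ((expContR X).mul continuous_const)
  have heq := integral_eq_sub_of_hasDerivAt hd (hcont.intervalIntegrable 0 u)
  rw [zero_smul, exp_zero, mul_one] at heq
  rw [← heq]
  have hb := intervalIntegral.norm_integral_le_of_norm_le_const
    (a := (0:ℝ)) (b := u) (C := ‖X‖ * ‖Z‖)
    (f := fun v => Z * (exp (v • X) * X)) ?_
  · calc ‖∫ v in (0:ℝ)..u, Z * (exp (v • X) * X)‖ ≤ ‖X‖ * ‖Z‖ * |u - 0| := hb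
    _ = u * (‖X‖ * ‖Z‖) := by rw [sub_zero, abs_of_nonneg hu]; ring
  · intro v hv
    rw [Set.uIoc_of_le hu] at hv
    have h1 : ‖exp (v • X)‖ ≤ 1 := hc v ⟨le_of_lt hv.1, hv.2⟩
    calc ‖Z * (exp (v • X) * X)‖ ≤ ‖Z‖ * (‖exp (v • X)‖ * ‖X‖) := by
          refine (norm_mul_le _ _).trans ?_; gcongr; exact norm_mul_le _ _
      _ ≤ ‖Z‖ * (1 * ‖X‖) := by gcongr
      _ = ‖X‖ * ‖Z‖ := by ring

lemma comm_integral (X B : A) (t : ℝ) :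
    exp (t • X) * B - B * exp (t • X)
      = ∫ s in (0:ℝ)..t, exp (s • X) * (X * B - B * X) * exp ((t - s) • X) := by
  have hd : ∀ s ∈ Set.uIcc (0:ℝ) t,
      HasDerivAt (fun s : ℝ => exp (s • X) * B * exp ((t - s) • X))
        (exp (s • X) * (X * B - B * X) * exp ((t - s) • X)) s := by
    intro s _
    have h1 : HasDerivAt (fun s : ℝ => exp (s • X) * B) (exp (s • X) * X * B) s :=
      (expDerivR X s).mul_const B
    have h2 : HasDerivAt (fun s : ℝ => exp ((t - s) • X)) (-(exp ((t - s) • X) * X)) s := by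
      have hi : HasDerivAt (fun s : ℝ => t - s) (-1) s := (hasDerivAt_id s).const_sub t
      have h3 := (expDerivR X (t - s)).scomp s hi
      simpa [Function.comp_def] using h3
    have h4 := h1.mul h2
    convert h4 using 1
    · rfl
    rw [expCommR X (t - s)]
    noncomm_ring
  have hcont : Continuous fun s : ℝ => exp (s • X) * (X * B - B * X) * exp ((t - s) • X) := by
    refine ((expContR X).mul continuous_const).mul ?_
    exact (expContR X).comp (continuous_const.sub continuous_id)
  have heq := integral_eq_sub_of_hasDerivAt hd (hcont.intervalIntegrable 0 t)
  simp only [sub_self, sub_zero, zero_smul, exp_zero, mul_one, one_mul] at heq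
  exact heq.symm

lemma Hbound (o E D : A) (hD : D = o * E - E * o) (τ s t : ℝ)
    (hs : 0 ≤ s) (hst : s ≤ t) (ht : t ≤ τ)
    (hoc : ∀ v ∈ Set.Icc (0:ℝ) τ, ‖exp (v • o)‖ ≤ 1)
    (hEc : ∀ v ∈ Set.Icc (0:ℝ) τ, ‖exp (v • E)‖ ≤ 1) :
    ‖exp (s • o) * D * exp ((t - s) • o) * (exp (t • E) * exp (t • o))
      + exp (t • o) * (exp (s • E) * (E * o - o * E) * exp ((t - s) • E)) * exp (t • o)‖
    ≤ 2 * t * ‖D‖ * (‖o‖ + ‖E‖) := by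
  have ht0 : 0 ≤ t := le_trans hs hst
  have hts : 0 ≤ t - s := by linarith
  -- contraction hypotheses on subintervals
  have hocs : ∀ w, 0 ≤ w → w ≤ τ → ∀ v ∈ Set.Icc (0:ℝ) w, ‖exp (v • o)‖ ≤ 1 :=
    fun w _ hw v hv => hoc v ⟨hv.1, le_trans hv.2 hw⟩
  have hEcs : ∀ w, 0 ≤ w → w ≤ τ → ∀ v ∈ Set.Icc (0:ℝ) w, ‖exp (v • E)‖ ≤ 1 :=
    fun w _ hw v hv => hEc v ⟨hv.1, le_trans hv.2 hw⟩
  set p := exp (s • o)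
  set q := exp ((t - s) • o)
  set r := exp (t • E)
  set w := exp (t • o)
  set u := exp (s • E)
  set v := exp ((t - s) • E)
  have hp : ‖p‖ ≤ 1 := hoc s ⟨hs, le_trans hst ht⟩
  have hq : ‖q‖ ≤ 1 := hoc (t - s) ⟨hts, by linarith⟩
  have hr : ‖r‖ ≤ 1 := hEc t ⟨ht0, ht⟩
  have hw : ‖w‖ ≤ 1 := hoc t ⟨ht0, ht⟩
  have hu : ‖u‖ ≤ 1 := hEc s ⟨hs, le_trans hst ht⟩
  have hv : ‖v‖ ≤ 1 := hEc (t - s) ⟨hts, by linarith⟩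
  set W := D * w with hW
  -- rewrite the sum as T - U
  have hEo : E * o - o * E = -D := by rw [hD]; noncomm_ring
  rw [hEo]
  have hre : p * D * q * (r * w) + w * (u * -D * v) * w
      = (p * (D * q * (r * w)) - D * q * (r * w))
          + ((D * q * r - D * q) * w + (D * q - D) * w)
        - ((w * (u * (D * v) * w) - u * (D * v) * w)
          + ((u * (D * v) - D * v) * w + (D * v - D) * w)) := by
    noncomm_ring
  rw [hre]
  have nZ1 : ‖D * q * (r * w)‖ ≤ ‖D‖ := by
    calc ‖D * q * (r * w)‖ ≤ ‖D * q‖ * ‖r * w‖ := norm_mul_le _ _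
      _ ≤ ‖D‖ * ‖q‖ * (‖r‖ * ‖w‖) := by gcongr <;> exact norm_mul_le _ _
      _ ≤ ‖D‖ * 1 * (1 * 1) := by gcongr
      _ = ‖D‖ := by ring
  have nDq : ‖D * q‖ ≤ ‖D‖ := by
    calc ‖D * q‖ ≤ ‖D‖ * ‖q‖ := norm_mul_le _ _
      _ ≤ ‖D‖ * 1 := by gcongr
      _ = ‖D‖ := by ring
  have nDv : ‖D * v‖ ≤ ‖D‖ := by
    calc ‖D * v‖ ≤ ‖D‖ * ‖v‖ := norm_mul_le _ _
      _ ≤ ‖D‖ * 1 := by gcongr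
      _ = ‖D‖ := by ring
  have nZ2 : ‖u * (D * v) * w‖ ≤ ‖D‖ := by
    calc ‖u * (D * v) * w‖ ≤ ‖u * (D * v)‖ * ‖w‖ := norm_mul_le _ _
      _ ≤ ‖u‖ * ‖D * v‖ * ‖w‖ := by gcongr; exact norm_mul_le _ _
      _ ≤ 1 * ‖D‖ * 1 := by gcongr
      _ = ‖D‖ := by ring
  have n1 : ‖p * (D * q * (r * w)) - D * q * (r * w)‖ ≤ s * (‖o‖ * ‖D‖) := by
    refine (shift_left o _ s hs (hocs s hs (by linarith))).trans ?_
    gcongr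
  have n2 : ‖(D * q * r - D * q) * w‖ ≤ t * (‖E‖ * ‖D‖) := by
    calc ‖(D * q * r - D * q) * w‖ ≤ ‖D * q * r - D * q‖ * ‖w‖ := norm_mul_le _ _
      _ ≤ ‖D * q * r - D * q‖ * 1 := by gcongr
      _ = ‖(D * q) * r - D * q‖ := by ring_nf
      _ ≤ t * (‖E‖ * ‖D * q‖) := shift_right E (D * q) t ht0 (hEcs t ht0 ht)
      _ ≤ t * (‖E‖ * ‖D‖) := by gcongr
  have n3 : ‖(D * q - D) * w‖ ≤ (t - s) * (‖o‖ * ‖D‖) := by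
    calc ‖(D * q - D) * w‖ ≤ ‖D * q - D‖ * ‖w‖ := norm_mul_le _ _
      _ ≤ ‖D * q - D‖ * 1 := by gcongr
      _ = ‖D * q - D‖ := by ring
      _ ≤ (t - s) * (‖o‖ * ‖D‖) := shift_right o D (t - s) hts (hocs (t - s) hts (by linarith))
  have n4 : ‖w * (u * (D * v) * w) - u * (D * v) * w‖ ≤ t * (‖o‖ * ‖D‖) := by
    refine (shift_left o _ t ht0 (hocs t ht0 ht)).trans ?_
    gcongr
  have n5 : ‖(u * (D * v) - D * v) * w‖ ≤ s * (‖E‖ * ‖D‖) := by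
    calc ‖(u * (D * v) - D * v) * w‖ ≤ ‖u * (D * v) - D * v‖ * ‖w‖ := norm_mul_le _ _
      _ ≤ ‖u * (D * v) - D * v‖ * 1 := by gcongr
      _ = ‖u * (D * v) - D * v‖ := by ring
      _ ≤ s * (‖E‖ * ‖D * v‖) := shift_left E (D * v) s hs (hEcs s hs (by linarith))
      _ ≤ s * (‖E‖ * ‖D‖) := by gcongr
  have n6 : ‖(D * v - D) * w‖ ≤ (t - s) * (‖E‖ * ‖D‖) := by
    calc ‖(D * v - D) * w‖ ≤ ‖D * v - D‖ * ‖w‖ := norm_mul_le _ _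
      _ ≤ ‖D * v - D‖ * 1 := by gcongr
      _ = ‖D * v - D‖ := by ring
      _ ≤ (t - s) * (‖E‖ * ‖D‖) := shift_right E D (t - s) hts (hEcs (t - s) hts (by linarith))
  have tri := norm_sub_le ((p * (D * q * (r * w)) - D * q * (r * w))
          + ((D * q * r - D * q) * w + (D * q - D) * w))
        ((w * (u * (D * v) * w) - u * (D * v) * w)
          + ((u * (D * v) - D * v) * w + (D * v - D) * w))
  have tri1 := norm_add_le (p * (D * q * (r * w)) - D * q * (r * w))
    ((D * q * r - D * q) * w + (D * q - D) * w)
  have tri1' := norm_add_le ((D * q * r - D * q) * w) ((D * q - D) * w)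
  have tri2 := norm_add_le (w * (u * (D * v) * w) - u * (D * v) * w)
    ((u * (D * v) - D * v) * w + (D * v - D) * w)
  have tri2' := norm_add_le ((u * (D * v) - D * v) * w) ((D * v - D) * w)
  nlinarith [tri, tri1, tri1', tri2, tri2', n1, n2, n3, n4, n5, n6]

-- the pointwise bound on G
lemma Gbound (O E : A) (τ : ℝ) (hτ : 0 ≤ τ)
    (hOexp : ∀ s ∈ Set.Icc (0:ℝ) τ, ‖exp (s • O)‖ ≤ 1)
    (hEexp : ∀ s ∈ Set.Icc (0:ℝ) τ, ‖exp (s • E)‖ ≤ 1)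
    (t : ℝ) (ht0 : 0 ≤ t) (htτ : t ≤ τ) :
    ‖(exp (t • ((2⁻¹:ℝ) • O)) * E - E * exp (t • ((2⁻¹:ℝ) • O)))
        * (exp (t • E) * exp (t • ((2⁻¹:ℝ) • O)))
      + (exp (t • ((2⁻¹:ℝ) • O)) * exp (t • E) * ((2⁻¹:ℝ) • O)
          - ((2⁻¹:ℝ) • O) * (exp (t • ((2⁻¹:ℝ) • O)) * exp (t • E)))
        * exp (t • ((2⁻¹:ℝ) • O))‖
    ≤ ‖O * E - E * O‖ * (‖E‖ + ‖O‖ / 2) * t ^ 2 := by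
  set o : A := (2⁻¹ : ℝ) • O with ho
  have expo : ∀ u : ℝ, exp (u • o) = exp ((u / 2) • O) := by
    intro u; rw [ho, smul_smul]; norm_num [div_eq_mul_inv]
  have hoc : ∀ v ∈ Set.Icc (0:ℝ) τ, ‖exp (v • o)‖ ≤ 1 := by
    intro v hv; rw [expo]
    exact hOexp (v / 2) ⟨by linarith [hv.1], by linarith [hv.1, hv.2]⟩
  have hno : ‖o‖ = ‖O‖ / 2 := by
    rw [ho, norm_smul, Real.norm_eq_abs, abs_of_nonneg (by norm_num : (0:ℝ) ≤ 2⁻¹)]; ring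
  have hDC : ‖o * E - E * o‖ = ‖O * E - E * O‖ / 2 := by
    have hh : o * E - E * o = (2⁻¹ : ℝ) • (O * E - E * O) := by
      rw [ho, smul_sub, smul_mul_assoc, mul_smul_comm]
    rw [hh, norm_smul, Real.norm_eq_abs, abs_of_nonneg (by norm_num : (0:ℝ) ≤ 2⁻¹)]; ring
  have hI1 := comm_integral o E t
  have hI2 := comm_integral E o t
  have h3 : exp (t • o) * exp (t • E) * o - o * (exp (t • o) * exp (t • E))
      = exp (t • o) * (exp (t • E) * o - o * exp (t • E)) := by
    have h3' : o * (exp (t • o) * exp (t • E))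
        = exp (t • o) * (o * exp (t • E)) := by
      rw [← mul_assoc, ← expCommR o t, mul_assoc]
    rw [h3']; noncomm_ring
  rw [h3, hI1, hI2]
  have c1 : Continuous fun s : ℝ => exp (s • o) * (o * E - E * o) * exp ((t - s) • o) :=
    ((expContR o).mul continuous_const).mul ((expContR o).comp (continuous_const.sub continuous_id))
  have c2 : Continuous fun s : ℝ => exp (s • E) * (E * o - o * E) * exp ((t - s) • E) :=
    ((expContR E).mul continuous_const).mul ((expContR E).comp (continuous_const.sub continuous_id))
  have m1 : (∫ s in (0:ℝ)..t, exp (s • o) * (o * E - E * o) * exp ((t - s) • o))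
        * (exp (t • E) * exp (t • o))
      = ∫ s in (0:ℝ)..t, exp (s • o) * (o * E - E * o) * exp ((t - s) • o)
        * (exp (t • E) * exp (t • o)) := by
    have := ((ContinuousLinearMap.mul ℝ A).flip
        (exp (t • E) * exp (t • o))).intervalIntegral_comp_comm
      (c1.intervalIntegrable (μ := MeasureTheory.volume) 0 t)
    simpa [ContinuousLinearMap.flip_apply, ContinuousLinearMap.mul_apply'] using this.symm
  have m2 : exp (t • o)
        * (∫ s in (0:ℝ)..t, exp (s • E) * (E * o - o * E) * exp ((t - s) • E))
        * exp (t • o)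
      = ∫ s in (0:ℝ)..t, exp (t • o)
          * (exp (s • E) * (E * o - o * E) * exp ((t - s) • E)) * exp (t • o) := by
    have := (((ContinuousLinearMap.mul ℝ A).flip (exp (t • o))).comp
        ((ContinuousLinearMap.mul ℝ A) (exp (t • o)))).intervalIntegral_comp_comm
      (c2.intervalIntegrable (μ := MeasureTheory.volume) 0 t)
    simpa [ContinuousLinearMap.flip_apply, ContinuousLinearMap.mul_apply',
      ContinuousLinearMap.comp_apply] using this.symm
  rw [m1, m2, ← intervalIntegral.integral_add
    (f := fun s => exp (s • o) * (o * E - E * o) * exp ((t - s) • o) * (exp (t • E) * exp (t • o)))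
    (g := fun s => exp (t • o) * (exp (s • E) * (E * o - o * E) * exp ((t - s) • E)) * exp (t • o))
    ((c1.mul continuous_const).intervalIntegrable 0 t)
    (((continuous_const.mul c2).mul continuous_const).intervalIntegrable 0 t)]
  have hb := intervalIntegral.norm_integral_le_of_norm_le_const
    (a := (0:ℝ)) (b := t) (C := 2 * t * ‖o * E - E * o‖ * (‖o‖ + ‖E‖)) (fun s hs => by
      rw [Set.uIoc_of_le ht0] at hs
      exact Hbound o E (o * E - E * o) rfl τ s t (le_of_lt hs.1) hs.2 htτ hoc hEexp)
  refine hb.trans ?_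
  rw [hDC, hno, sub_zero, abs_of_nonneg ht0]
  ring_nf
  exact le_refl _

lemma trotter_abstract (O E : A) (τ : ℝ) (hτ : 0 ≤ τ)
    (hOexp : ∀ s ∈ Set.Icc (0:ℝ) τ, ‖exp (s • O)‖ ≤ 1)
    (hEexp : ∀ s ∈ Set.Icc (0:ℝ) τ, ‖exp (s • E)‖ ≤ 1)
    (hOEexp : ∀ s ∈ Set.Icc (0:ℝ) τ, ‖exp (s • (O + E))‖ ≤ 1) :
    ‖exp (τ • (O + E)) - exp ((τ / 2) • O) * exp (τ • E) * exp ((τ / 2) • O)‖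
      ≤ ‖O * E - E * O‖ * (‖E‖ + ‖O‖ / 2) * τ ^ 3 / 3 := by
  set o : A := (2⁻¹ : ℝ) • O with ho
  have expo : ∀ u : ℝ, exp (u • o) = exp ((u / 2) • O) := by
    intro u; rw [ho, smul_smul]; norm_num [div_eq_mul_inv]
  have hoo : o + o = O := by rw [ho, ← add_smul]; norm_num
  -- the Trotter product and the error generator
  set P : ℝ → A := fun t => exp (t • o) * exp (t • E) * exp (t • o) with hP
  set G : ℝ → A := fun t =>
    (exp (t • o) * E - E * exp (t • o)) * (exp (t • E) * exp (t • o))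
      + (exp (t • o) * exp (t • E) * o - o * (exp (t • o) * exp (t • E)))
        * exp (t • o) with hG
  have hPd : ∀ t : ℝ, HasDerivAt P ((O + E) * P t + G t) t := by
    intro t
    have h1 := ((expDerivR o t).mul (expDerivR E t)).mul (expDerivR o t)
    convert h1 using 1
    · rfl
    rw [hP, hG]
    simp only [Pi.mul_apply]
    rw [← hoo, expCommR o t, expCommR E t]
    noncomm_ring
  have hFd : ∀ t ∈ Set.uIcc (0:ℝ) τ,
      HasDerivAt (fun t => exp ((τ - t) • (O + E)) * P t)
        (exp ((τ - t) • (O + E)) * G t) t := by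
    intro t _
    have hq : HasDerivAt (fun s : ℝ => exp ((τ - s) • (O + E)))
        (-(exp ((τ - t) • (O + E)) * (O + E))) t := by
      have h3 := (expDerivR (O + E) (τ - t)).scomp t ((hasDerivAt_id t).const_sub τ)
      simpa [Function.comp_def] using h3
    have hF := hq.mul (hPd t)
    convert hF using 1
    · rfl
    noncomm_ring
  have cG : Continuous G := by
    rw [hG]
    have ca := expContR o
    have cb := expContR E
    exact (((ca.mul continuous_const).sub (continuous_const.mul ca)).mul (cb.mul ca)).add
      ((((ca.mul cb).mul continuous_const).sub (continuous_const.mul (ca.mul cb))).mul ca)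
  have cF' : Continuous fun t => exp ((τ - t) • (O + E)) * G t :=
    ((expContR (O + E)).comp (continuous_const.sub continuous_id)).mul cG
  have heq := integral_eq_sub_of_hasDerivAt hFd
    (cF'.intervalIntegrable (μ := MeasureTheory.volume) 0 τ)
  simp only [sub_self, sub_zero, zero_smul, exp_zero, one_mul, mul_one, hP] at heq
  -- heq : ∫ t in 0..τ, exp((τ-t)•(O+E)) * G t = P τ - exp (τ•(O+E))
  have hrw : exp (τ • (O + E)) - exp ((τ / 2) • O) * exp (τ • E) * exp ((τ / 2) • O)
      = -∫ t in (0:ℝ)..τ, exp ((τ - t) • (O + E)) * G t := by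
    rw [heq, ← expo τ]
    abel
  rw [hrw, norm_neg]
  have step1 : ‖∫ t in (0:ℝ)..τ, exp ((τ - t) • (O + E)) * G t‖
      ≤ ∫ t in (0:ℝ)..τ, ‖exp ((τ - t) • (O + E)) * G t‖ :=
    intervalIntegral.norm_integral_le_integral_norm hτ
  refine step1.trans ?_
  have step2 : ∫ t in (0:ℝ)..τ, ‖exp ((τ - t) • (O + E)) * G t‖
      ≤ ∫ t in (0:ℝ)..τ, ‖O * E - E * O‖ * (‖E‖ + ‖O‖ / 2) * t ^ 2 := by
    refine intervalIntegral.integral_mono_on hτ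
      (cF'.norm.intervalIntegrable 0 τ)
      ((continuous_const.mul (continuous_pow 2)).intervalIntegrable 0 τ) ?_
    intro t htmem
    obtain ⟨ht0, htτ⟩ := htmem
    have h1 : ‖exp ((τ - t) • (O + E))‖ ≤ 1 :=
      hOEexp (τ - t) ⟨by linarith, by linarith⟩
    have h2 : ‖G t‖ ≤ ‖O * E - E * O‖ * (‖E‖ + ‖O‖ / 2) * t ^ 2 := by
      rw [hG]
      exact Gbound O E τ hτ hOexp hEexp t ht0 htτ
    calc ‖exp ((τ - t) • (O + E)) * G t‖
        ≤ ‖exp ((τ - t) • (O + E))‖ * ‖G t‖ := norm_mul_le _ _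
      _ ≤ 1 * (‖O * E - E * O‖ * (‖E‖ + ‖O‖ / 2) * t ^ 2) :=
          mul_le_mul h1 h2 (norm_nonneg _) zero_le_one
      _ = ‖O * E - E * O‖ * (‖E‖ + ‖O‖ / 2) * t ^ 2 := one_mul _
  refine step2.trans ?_
  rw [intervalIntegral.integral_const_mul, integral_pow]
  norm_num
  ring_nf
  exact le_refl _

end TrotterAux

/-- **One-step second-order Trotter–Suzuki error for a nearest-neighbor
Liouvillian** (proof of Theorem 1). If `K₁, …, K_{N−1}` are elements of a
complex Banach algebra with `‖Kₗ‖ ≤ b` that commute whenever `|i − j| ≥ 2`,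
`O` and `E` are the odd and even parts, `τ ≥ 0` satisfies
`τ(‖E‖ + ‖O‖/2) ≤ 1`, and the exponentials `exp(sO)`, `exp(sE)`,
`exp(s(O+E))` are contractions for `s ∈ [0,τ]`, then
`‖exp(τ(O+E)) − exp((τ/2)O)·exp(τE)·exp((τ/2)O)‖ ≤ τ³N²b³/2`. -/
theorem trotter_one_step_nearest_neighbor_bound {A : Type*} [NormedRing A]
    [NormedAlgebra ℂ A] [CompleteSpace A] (N : ℕ) (hN : 2 ≤ N) (K : ℕ → A) (b : ℝ)
    (hb : ∀ l ∈ Finset.Icc 1 (N - 1), ‖K l‖ ≤ b)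
    (hcomm : ∀ i ∈ Finset.Icc 1 (N - 1), ∀ j ∈ Finset.Icc 1 (N - 1),
      2 ≤ |(i : ℤ) - (j : ℤ)| → K i * K j = K j * K i)
    (O E : A)
    (hO : O = ∑ l ∈ (Finset.Icc 1 (N - 1)).filter (fun l => Odd l), K l)
    (hE : E = ∑ l ∈ (Finset.Icc 1 (N - 1)).filter (fun l => Even l), K l)
    (τ : ℝ) (hτ : 0 ≤ τ) (hτ' : τ * (‖E‖ + ‖O‖ / 2) ≤ 1)
    (hOexp : ∀ s ∈ Set.Icc (0:ℝ) τ, ‖exp (s • O)‖ ≤ 1)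
    (hEexp : ∀ s ∈ Set.Icc (0:ℝ) τ, ‖exp (s • E)‖ ≤ 1)
    (hOEexp : ∀ s ∈ Set.Icc (0:ℝ) τ, ‖exp (s • (O + E))‖ ≤ 1) :
    ‖exp (τ • (O + E)) -
        exp ((τ / 2) • O) * exp (τ • E) * exp ((τ / 2) • O)‖ ≤
      τ ^ 3 * (N : ℝ) ^ 2 * b ^ 3 / 2 := by
  have hb0 : 0 ≤ b :=
    le_trans (norm_nonneg (K 1)) (hb 1 (by rw [Finset.mem_Icc]; omega))
  have hN2 : (2:ℝ) ≤ (N:ℝ) := by exact_mod_cast hN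
  set S := Finset.Icc 1 (N - 1) with hS
  set Ev := S.filter (fun l => Even l) with hEv
  set Od := S.filter (fun l => Odd l) with hOd
  -- cardinalities
  have hcards : Od.card + Ev.card = N - 1 := by
    rw [hOd, hEv]
    have hoe : ∀ l, Odd l ↔ ¬ Even l := fun l => Nat.not_even_iff_odd.symm
    rw [Finset.filter_congr (fun l _ => hoe l)]
    have hSc : S.card = N - 1 := by rw [hS, Nat.card_Icc]; omega
    have hcc := Finset.card_filter_add_card_filter_not (s := S) (p := fun l => Even l)
    rw [hSc] at hcc
    omega
  have hEvcard : 2 * Ev.card ≤ N - 1 := by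
    have hinj := Finset.card_le_card_of_injOn (s := Ev) (f := fun e => e / 2)
      (t := Finset.Icc 1 ((N - 1) / 2)) ?_ ?_
    · have hc : (Finset.Icc 1 ((N - 1) / 2)).card = (N - 1) / 2 := by
        rw [Nat.card_Icc]; omega
      rw [hc] at hinj
      omega
    · intro e he
      rw [hEv, hS, Finset.mem_coe, Finset.mem_filter, Finset.mem_Icc, Nat.even_iff] at he
      rw [Finset.mem_coe, Finset.mem_Icc]
      dsimp only
      omega
    · intro x hx y hy hxy
      simp only [hEv, hS, Finset.coe_filter, Set.mem_setOf_eq, Finset.mem_Icc,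
        Nat.even_iff] at hx hy
      dsimp only at hxy
      omega
  -- norm bounds for O and E
  have hEnorm : ‖E‖ ≤ (Ev.card : ℝ) * b := by
    rw [hE]
    refine (norm_sum_le _ _).trans ?_
    have := Finset.sum_le_card_nsmul Ev (fun l => ‖K l‖) b
      (fun l hl => hb l (Finset.mem_of_mem_filter l hl))
    simpa [nsmul_eq_mul] using this
  have hOnorm : ‖O‖ ≤ (Od.card : ℝ) * b := by
    rw [hO]
    refine (norm_sum_le _ _).trans ?_
    have := Finset.sum_le_card_nsmul Od (fun l => ‖K l‖) b
      (fun l hl => hb l (Finset.mem_of_mem_filter l hl))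
    simpa [nsmul_eq_mul] using this
  have hM : ‖E‖ + ‖O‖ / 2 ≤ 3 * (N:ℝ) / 4 * b := by
    have h1 : Od.card + Ev.card + 1 = N := by omega
    have h2 : 2 * Ev.card + 1 ≤ N := by omega
    have h1' : (Od.card : ℝ) + (Ev.card : ℝ) + 1 = (N:ℝ) := by exact_mod_cast h1
    have h2' : 2 * (Ev.card : ℝ) + 1 ≤ (N:ℝ) := by exact_mod_cast h2
    have hOdnn : (0:ℝ) ≤ (Od.card : ℝ) := Nat.cast_nonneg _
    nlinarith [hEnorm, hOnorm, hb0]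
  -- commutator bound
  have hCbound : ‖O * E - E * O‖ ≤ 2 * ((N:ℝ) - 2) * b ^ 2 := by
    have hOE : O * E - E * O = ∑ p ∈ Od ×ˢ Ev, (K p.1 * K p.2 - K p.2 * K p.1) := by
      rw [hO, hE, Finset.sum_mul_sum, Finset.sum_mul_sum, Finset.sum_comm (s := Ev),
        ← Finset.sum_sub_distrib, Finset.sum_product]
      refine Finset.sum_congr rfl fun i _ => ?_
      simp [Finset.sum_sub_distrib]
    set T := (Od ×ˢ Ev).filter (fun p => |(p.1:ℤ) - (p.2:ℤ)| < 2) with hT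
    have hTsum : ∑ p ∈ Od ×ˢ Ev, (K p.1 * K p.2 - K p.2 * K p.1)
        = ∑ p ∈ T, (K p.1 * K p.2 - K p.2 * K p.1) := by
      refine (Finset.sum_filter_of_ne ?_).symm
      intro p hp hne
      by_contra hlt
      push_neg at hlt
      rw [Finset.mem_product] at hp
      have := hcomm p.1 (Finset.mem_of_mem_filter _ hp.1)
        p.2 (Finset.mem_of_mem_filter _ hp.2) hlt
      exact hne (by rw [this, sub_self])
    have hterm : ∀ p ∈ T, ‖K p.1 * K p.2 - K p.2 * K p.1‖ ≤ 2 * b ^ 2 := by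
      intro p hp
      rw [hT, Finset.mem_filter, Finset.mem_product] at hp
      have h1 : ‖K p.1‖ ≤ b := hb _ (Finset.mem_of_mem_filter _ hp.1.1)
      have h2 : ‖K p.2‖ ≤ b := hb _ (Finset.mem_of_mem_filter _ hp.1.2)
      calc ‖K p.1 * K p.2 - K p.2 * K p.1‖
          ≤ ‖K p.1 * K p.2‖ + ‖K p.2 * K p.1‖ := norm_sub_le _ _
        _ ≤ ‖K p.1‖ * ‖K p.2‖ + ‖K p.2‖ * ‖K p.1‖ := by
            gcongr <;> exact norm_mul_le _ _
        _ ≤ b * b + b * b := by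
            gcongr <;> first | exact norm_nonneg _ | assumption
        _ = 2 * b ^ 2 := by ring
    have hTcard : T.card ≤ N - 2 := by
      have hinj := Finset.card_le_card_of_injOn (s := T) (f := fun p : ℕ × ℕ => (p.1 + p.2 - 1) / 2)
        (t := Finset.Icc 1 (N - 2)) ?_ ?_
      · rwa [Nat.card_Icc, show N - 2 + 1 - 1 = N - 2 by omega] at hinj
      · intro p hp
        simp only [hT, hOd, hEv, hS, Finset.mem_coe, Finset.mem_filter, Finset.mem_product,
          Finset.mem_Icc, Nat.odd_iff, Nat.even_iff, abs_lt] at hp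
        rw [Finset.mem_coe, Finset.mem_Icc]
        dsimp only
        omega
      · intro p hp q hq hpq
        simp only [hT, hOd, hEv, hS, Finset.coe_filter, Set.mem_setOf_eq,
          Finset.mem_product, Finset.mem_filter, Finset.mem_Icc,
          Nat.odd_iff, Nat.even_iff, abs_lt] at hp hq
        dsimp only at hpq
        have hcomp : p.1 = q.1 ∧ p.2 = q.2 := by omega
        exact Prod.ext hcomp.1 hcomp.2
    have hTcast : (T.card : ℝ) ≤ (N:ℝ) - 2 := by
      have h2N : ((N - 2 : ℕ) : ℝ) = (N:ℝ) - 2 := by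
        rw [Nat.cast_sub hN]; norm_num
      rw [← h2N]
      exact_mod_cast hTcard
    calc ‖O * E - E * O‖ = ‖∑ p ∈ T, (K p.1 * K p.2 - K p.2 * K p.1)‖ := by
          rw [hOE, hTsum]
      _ ≤ ∑ p ∈ T, ‖K p.1 * K p.2 - K p.2 * K p.1‖ := norm_sum_le _ _
      _ ≤ T.card • (2 * b ^ 2) := Finset.sum_le_card_nsmul _ _ _ hterm
      _ = (T.card : ℝ) * (2 * b ^ 2) := by rw [nsmul_eq_mul]
      _ ≤ ((N:ℝ) - 2) * (2 * b ^ 2) := by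
          have : (0:ℝ) ≤ 2 * b ^ 2 := by positivity
          exact mul_le_mul_of_nonneg_right hTcast this
      _ = 2 * ((N:ℝ) - 2) * b ^ 2 := by ring
  -- combine
  have habs := trotter_abstract O E τ hτ hOexp hEexp hOEexp
  refine habs.trans ?_
  have hτ3 : (0:ℝ) ≤ τ ^ 3 := by positivity
  have hM0 : (0:ℝ) ≤ ‖E‖ + ‖O‖ / 2 := by positivity
  have hxy : ‖O * E - E * O‖ * (‖E‖ + ‖O‖ / 2)
      ≤ (2 * ((N:ℝ) - 2) * b ^ 2) * (3 * (N:ℝ) / 4 * b) := by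
    refine mul_le_mul hCbound hM hM0 ?_
    have : (0:ℝ) ≤ (N:ℝ) - 2 := by linarith
    positivity
  have hxy2 : ‖O * E - E * O‖ * (‖E‖ + ‖O‖ / 2) ≤ 3 / 2 * (N:ℝ) ^ 2 * b ^ 3 := by
    refine hxy.trans ?_
    have hb3 : (0:ℝ) ≤ b ^ 3 := by positivity
    nlinarith [hb3, hN2]
  have := mul_le_mul_of_nonneg_right hxy2 hτ3
  linarith
end

section
/- Let A be a complex Banach algebra, let N ≥ 2, and let K₁, …, K_{N−1} ∈ A satisfy ‖Kₗ‖ ≤ b for all l and [Kᵢ, Kⱼ] = 0 whenever |i − j| ≥ 2. Define O := Σ_{l odd} Kₗ and E := Σ_{l even} Kₗ (sums over 1 ≤ l ≤ N−1). Let t ≥ 0, let m ≥ 1 be an integer, set Δt := t/m, and suppose Δt·(‖E‖ + ‖O‖/2) ≤ 1. Assume ‖exp(sO)‖ ≤ 1, ‖exp(sE)‖ ≤ 1 and ‖exp(s(O+E))‖ ≤ 1 for all s ∈ [0,Δt]. Then the accumulated second-order Trotter–Suzuki error satisfies ‖exp(t(O+E)) − (exp((Δt/2)O)·exp(Δt·E)·exp((Δt/2)O))ᵐ‖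 ≤ (t·b)³·N²/(2m²). -/
open NormedSpace

set_option linter.unusedSectionVars false
set_option linter.unusedVariables false
set_option maxHeartbeats 1000000

open NormedSpace intervalIntegral MeasureTheory

namespace TrotterAux

variable {A : Type*} [NormedRing A] [NormedAlgebra ℝ A] [CompleteSpace A]

lemma expc (x : A) : Continuous fun s : ℝ => exp (s • x) :=
  letI : NormedAlgebra ℚ A := .restrictScalars ℚ ℝ A
  exp_continuous.comp (continuous_id.smul continuous_const)

lemma expd (x : A) (s : ℝ) :
    HasDerivAt (fun u : ℝ => exp (u • x)) (x * exp (s • x)) s :=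
  hasDerivAt_exp_smul_const' x s

lemma expd' (x : A) (s : ℝ) :
    HasDerivAt (fun u : ℝ => exp (u • x)) (exp (s • x) * x) s :=
  hasDerivAt_exp_smul_const x s

lemma exp_comm (x : A) (s : ℝ) : x * exp (s • x) = exp (s • x) * x :=
  (((Commute.refl x).smul_right s).exp_right).eq

lemma expd_rev (x : A) (s v : ℝ) :
    HasDerivAt (fun u : ℝ => exp ((s - u) • x)) (-(x * exp ((s - v) • x))) v := by
  have h := HasDerivAt.scomp (x := v) (h := fun u : ℝ => s - u)
    (g₁ := fun u : ℝ => exp (u • x)) (expd x (s - v)) ((hasDerivAt_id v).const_sub s)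
  simpa [Function.comp_def] using h

lemma exp_split (x : A) (s u : ℝ) :
    exp ((s + u) • x) = exp (s • x) * exp (u • x) := by
  rw [add_smul]
  letI : NormedAlgebra ℚ A := .restrictScalars ℚ ℝ A
  exact exp_add_of_commute (((Commute.refl x).smul_left s).smul_right u)

/-- `‖exp(s x) - 1‖ ≤ s ‖x‖` under contraction hypotheses on `[0,τ]`. -/
lemma norm_exp_sub_one {x : A} {τ : ℝ} (hc : ∀ u ∈ Set.Icc (0:ℝ) τ, ‖exp (u • x)‖ ≤ 1)
    {s : ℝ} (hs : s ∈ Set.Icc (0:ℝ) τ) : ‖exp (s • x) - 1‖ ≤ s * ‖x‖ := by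
  obtain ⟨h0, hsτ⟩ := hs
  have key : exp (s • x) - 1 = ∫ u in (0:ℝ)..s, x * exp (u • x) := by
    rw [intervalIntegral.integral_eq_sub_of_hasDerivAt (fun u _ => expd x u)
      (((continuous_const.mul (expc x))).intervalIntegrable 0 s)]
    simp
  rw [key]
  have := intervalIntegral.norm_integral_le_of_norm_le_const (C := ‖x‖ * 1)
    (f := fun u => x * exp (u • x)) (a := 0) (b := s) ?_
  · calc _ ≤ ‖x‖ * 1 * |s - 0| := this
    _ = ‖x‖ * s := by rw [sub_zero, abs_of_nonneg h0]; ring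
    _ = s * ‖x‖ := by ring
  · intro u hu
    rw [Set.uIoc_of_le h0] at hu
    exact norm_mul_le _ _ |>.trans
      (mul_le_mul_of_nonneg_left (hc u ⟨hu.1.le, hu.2.trans hsτ⟩) (norm_nonneg x))

lemma norm_exp_sub_exp {x : A} {τ : ℝ} (hc : ∀ u ∈ Set.Icc (0:ℝ) τ, ‖exp (u • x)‖ ≤ 1)
    {u s : ℝ} (h0 : 0 ≤ u) (hus : u ≤ s) (hsτ : s ≤ τ) :
    ‖exp (s • x) - exp (u • x)‖ ≤ (s - u) * ‖x‖ := by
  have hτ0 : 0 ≤ τ := h0.trans (hus.trans hsτ)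
  have hs : exp (s • x) = exp ((s - u) • x) * exp (u • x) := by
    rw [← exp_split]; ring_nf
  rw [hs, ← sub_one_mul]
  calc ‖(exp ((s-u) • x) - 1) * exp (u • x)‖
      ≤ ‖exp ((s-u) • x) - 1‖ * ‖exp (u • x)‖ := norm_mul_le _ _
    _ ≤ ((s-u) * ‖x‖) * 1 := by
        have hsu : (0:ℝ) ≤ s - u := by linarith
        exact mul_le_mul (norm_exp_sub_one hc ⟨by linarith, by linarith⟩)
          (hc u ⟨h0, by linarith⟩) (norm_nonneg _) (by positivity)
    _ = (s - u) * ‖x‖ := by ring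

/-- Integral representation of the commutator `[X, exp(s y)]`. -/
lemma comm_exp_integral (X y : A) {s : ℝ} (hs : 0 ≤ s) :
    X * exp (s • y) - exp (s • y) * X
      = ∫ u in (0:ℝ)..s, exp ((s - u) • y) * (X * y - y * X) * exp (u • y) := by
  have hder : ∀ v : ℝ, HasDerivAt (fun u : ℝ => exp ((s - u) • y) * X * exp (u • y))
      (exp ((s - v) • y) * (X * y - y * X) * exp (v • y)) v := by
    intro v
    have h1 := ((expd_rev y s v).mul (hasDerivAt_const v X)).mul (expd' y v)
    convert h1 using 1
    · rfl
    have hc := exp_comm y (s - v)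
    simp only [Pi.mul_apply]
    rw [hc, ← exp_comm y v]
    noncomm_ring
  have hcont : Continuous fun u : ℝ => exp ((s - u) • y) * (X * y - y * X) * exp (u • y) := by
    exact (((expc y).comp (continuous_const.sub continuous_id)).mul continuous_const).mul (expc y)
  rw [intervalIntegral.integral_eq_sub_of_hasDerivAt (fun u _ => hder u)
    (hcont.intervalIntegrable 0 s)]
  simp
variable {A : Type*} [NormedRing A] [NormedAlgebra ℝ A] [CompleteSpace A]

lemma mul_integral_mul (p q : A) {f : ℝ → A} {x y : ℝ} (hf : Continuous f) :
    p * (∫ u in x..y, f u) * q = ∫ u in x..y, p * f u * q := by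
  let L : A →L[ℝ] A :=
    (ContinuousLinearMap.mul ℝ A p).comp ((ContinuousLinearMap.mul ℝ A).flip q)
  have h := L.intervalIntegral_comp_comm (μ := volume) (hf.intervalIntegrable x y)
  simp only [L, ContinuousLinearMap.coe_comp', Function.comp_apply,
    ContinuousLinearMap.flip_apply, ContinuousLinearMap.mul_apply'] at h
  rw [mul_assoc]
  refine h.symm.trans ?_
  simp only [mul_assoc]

lemma sandwich_identity (a e p q : A) (h : a * p = p * a) :
    (a + a + e) * (p * q * p) - (a * (p*q*p) + p * (e*q) * p + (p*q*p) * a)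
      = p * (a*q - q*a) * p + (e*p - p*e) * (q*p) := by
  have h2 : a * (p*q*p) = p * (a*q) * p := by
    have e1 : a * (p*q*p) = (a*p)*(q*p) := by noncomm_ring
    rw [e1, h]; noncomm_ring
  have h3 : (p*q*p) * a = p * (q*a) * p := by
    have e1 : (p*q*p) * a = (p*q)*(p*a) := by noncomm_ring
    rw [e1, ← h]; noncomm_ring
  calc (a + a + e) * (p * q * p) - (a * (p*q*p) + p * (e*q) * p + (p*q*p) * a)
      = (a * (p*q*p) - (p*q*p) * a) + (a * (p*q*p) + (e * (p*q*p) - p * (e*q) * p)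
          - a * (p*q*p)) := by noncomm_ring
    _ = (p * (a*q) * p - p * (q*a) * p) + (a * (p*q*p) + (e * (p*q*p) - p * (e*q) * p)
          - a * (p*q*p)) := by rw [h2, h3]
    _ = p * (a*q - q*a) * p + (e*p - p*e) * (q*p) := by noncomm_ring

/-- The key second-order defect bound. -/
lemma defect_bound (O2 E : A) {τ : ℝ}
    (hPc : ∀ u ∈ Set.Icc (0:ℝ) τ, ‖exp (u • O2)‖ ≤ 1)
    (hQc : ∀ u ∈ Set.Icc (0:ℝ) τ, ‖exp (u • E)‖ ≤ 1)
    {s : ℝ} (hs : s ∈ Set.Icc (0:ℝ) τ) :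
    ‖(O2 + O2 + E) * (exp (s • O2) * exp (s • E) * exp (s • O2))
      - (O2 * (exp (s • O2) * exp (s • E) * exp (s • O2))
        + exp (s • O2) * (E * exp (s • E)) * exp (s • O2)
        + (exp (s • O2) * exp (s • E) * exp (s • O2)) * O2)‖
      ≤ ‖O2 * E - E * O2‖ * ((2 * ‖O2‖ + ‖E‖) * s ^ 2) := by
  obtain ⟨hs0, hsτ⟩ := hs
  set P : ℝ → A := fun u => exp (u • O2) with hP
  set Q : ℝ → A := fun u => exp (u • E) with hQ
  -- rewrite the defect as a single integral
  have hid : (O2 + O2 + E) * (P s * Q s * P s)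
      - (O2 * (P s * Q s * P s) + P s * (E * Q s) * P s + (P s * Q s * P s) * O2)
      = P s * (O2 * Q s - Q s * O2) * P s + (E * P s - P s * E) * (Q s * P s) :=
    sandwich_identity O2 E (P s) (Q s) (exp_comm O2 s)
  have hc1 : O2 * Q s - Q s * O2
      = ∫ u in (0:ℝ)..s, Q (s - u) * (O2 * E - E * O2) * Q u :=
    comm_exp_integral O2 E hs0
  have hc2 : E * P s - P s * E
      = ∫ u in (0:ℝ)..s, P (s - u) * (E * O2 - O2 * E) * P u :=
    comm_exp_integral E O2 hs0
  have contQ3 : Continuous fun u : ℝ => Q (s - u) * (O2 * E - E * O2) * Q u :=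
    (((expc E).comp (continuous_const.sub continuous_id)).mul continuous_const).mul (expc E)
  have contP3 : Continuous fun u : ℝ => P (s - u) * (E * O2 - O2 * E) * P u :=
    (((expc O2).comp (continuous_const.sub continuous_id)).mul continuous_const).mul (expc O2)
  have hpull1 : P s * (O2 * Q s - Q s * O2) * P s
      = ∫ u in (0:ℝ)..s, P s * (Q (s - u) * (O2 * E - E * O2) * Q u) * P s := by
    rw [hc1]; exact mul_integral_mul _ _ contQ3
  have hpull2 : (E * P s - P s * E) * (Q s * P s)
      = ∫ u in (0:ℝ)..s, (P (s - u) * (E * O2 - O2 * E) * P u) * (Q s * P s) := by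
    rw [hc2]
    have := mul_integral_mul (1:A) (Q s * P s) contP3 (x := 0) (y := s)
    simpa using this
  have hsum : (O2 + O2 + E) * (P s * Q s * P s)
      - (O2 * (P s * Q s * P s) + P s * (E * Q s) * P s + (P s * Q s * P s) * O2)
      = ∫ u in (0:ℝ)..s,
          (P s * (Q (s - u) * (O2 * E - E * O2) * Q u) * P s
            + (P (s - u) * (E * O2 - O2 * E) * P u) * (Q s * P s)) := by
    rw [hid, hpull1, hpull2, intervalIntegral.integral_add
      (f := fun u => P s * (Q (s - u) * (O2 * E - E * O2) * Q u) * P s)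
      (g := fun u => (P (s - u) * (E * O2 - O2 * E) * P u) * (Q s * P s))
      (((continuous_const.mul contQ3).mul continuous_const).intervalIntegrable 0 s)
      ((contP3.mul continuous_const).intervalIntegrable 0 s)]
  rw [hsum]
  -- each exponential appearing is a contraction
  have memIcc : ∀ u : ℝ, u ∈ Set.Icc (0:ℝ) s → u ∈ Set.Icc (0:ℝ) τ :=
    fun u hu => ⟨hu.1, hu.2.trans hsτ⟩
  -- pointwise bound
  have hbound : ∀ u ∈ Set.Ioc (0:ℝ) s,
      ‖P s * (Q (s - u) * (O2 * E - E * O2) * Q u) * P s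
        + (P (s - u) * (E * O2 - O2 * E) * P u) * (Q s * P s)‖
      ≤ ‖O2 * E - E * O2‖ * (2 * ‖O2‖ * s + 2 * ‖E‖ * (s - u)) := by
    intro u hu
    obtain ⟨hu0, hus⟩ := hu
    have hu0' := hu0.le
    have hsmem : s ∈ Set.Icc (0:ℝ) τ := ⟨hs0, hsτ⟩
    have humem : u ∈ Set.Icc (0:ℝ) τ := memIcc u ⟨hu0', hus⟩
    have hsu : s - u ∈ Set.Icc (0:ℝ) τ := memIcc _ ⟨by linarith, by linarith⟩
    set C : A := O2 * E - E * O2 with hC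
    have hsplit : P s * (Q (s - u) * C * Q u) * P s + (P (s - u) * (E * O2 - O2 * E) * P u) * (Q s * P s)
        = (P s * Q (s - u) - P (s - u)) * C * (Q u * P s)
          + P (s - u) * C * (Q u * P s - P u * (Q s * P s)) := by
      rw [hC]; noncomm_ring
    rw [hsplit]
    have hsu' : (0:ℝ) ≤ s - u := by linarith
    have hL12 : ‖P s * Q (s - u) - P (s - u)‖ ≤ s * ‖O2‖ + (s - u) * ‖E‖ + (s - u) * ‖O2‖ := by
      calc ‖P s * Q (s - u) - P (s - u)‖
          = ‖(P s - 1) * Q (s - u) + ((Q (s - u) - 1) + (1 - P (s - u)))‖ := by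
            congr 1; noncomm_ring
        _ ≤ ‖(P s - 1) * Q (s - u)‖ + (‖Q (s - u) - 1‖ + ‖1 - P (s - u)‖) :=
            (norm_add_le _ _).trans (by gcongr; exact norm_add_le _ _)
        _ ≤ s * ‖O2‖ + ((s - u) * ‖E‖ + (s - u) * ‖O2‖) := by
            gcongr ?_ + (?_ + ?_)
            · calc ‖(P s - 1) * Q (s - u)‖ ≤ ‖P s - 1‖ * ‖Q (s - u)‖ := norm_mul_le _ _
                _ ≤ (s * ‖O2‖) * 1 := by
                    apply mul_le_mul (norm_exp_sub_one hPc hsmem) (hQc _ hsu) (norm_nonneg _)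
                    positivity
                _ = s * ‖O2‖ := by ring
            · exact norm_exp_sub_one hQc hsu
            · rw [norm_sub_rev]; exact norm_exp_sub_one hPc hsu
        _ = s * ‖O2‖ + (s - u) * ‖E‖ + (s - u) * ‖O2‖ := by ring
    have hR12 : ‖Q u * P s - P u * (Q s * P s)‖ ≤ (s - u) * ‖E‖ + u * ‖O2‖ := by
      calc ‖Q u * P s - P u * (Q s * P s)‖
          = ‖((Q u - Q s) + (1 - P u) * Q s) * P s‖ := by congr 1; noncomm_ring
        _ ≤ (‖Q u - Q s‖ + ‖(1 - P u) * Q s‖) * ‖P s‖ :=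
            (norm_mul_le _ _).trans (by gcongr; exact norm_add_le _ _)
        _ ≤ ((s - u) * ‖E‖ + u * ‖O2‖) * 1 := by
            have hsu' : (0:ℝ) ≤ s - u := by linarith
            apply mul_le_mul _ (hPc _ hsmem) (norm_nonneg _) (by positivity)
            gcongr ?_ + ?_
            · rw [norm_sub_rev]; exact norm_exp_sub_exp hQc hu0' hus hsτ
            · calc ‖(1 - P u) * Q s‖ ≤ ‖1 - P u‖ * ‖Q s‖ := norm_mul_le _ _
                _ ≤ (u * ‖O2‖) * 1 := by
                    apply mul_le_mul _ (hQc _ hsmem) (norm_nonneg _) (by positivity)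
                    rw [norm_sub_rev]; exact norm_exp_sub_one hPc humem
                _ = u * ‖O2‖ := by ring
        _ = (s - u) * ‖E‖ + u * ‖O2‖ := by ring
    have hQuPs : ‖Q u * P s‖ ≤ 1 := by
      calc ‖Q u * P s‖ ≤ ‖Q u‖ * ‖P s‖ := norm_mul_le _ _
        _ ≤ 1 * 1 := mul_le_mul (hQc _ humem) (hPc _ hsmem) (norm_nonneg _) zero_le_one
        _ = 1 := by ring
    have hsu' : (0:ℝ) ≤ s - u := by linarith
    have norm3 : ∀ a b c : A, ‖a * b * c‖ ≤ ‖a‖ * ‖b‖ * ‖c‖ := fun a b c =>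
      (norm_mul_le _ _).trans (mul_le_mul_of_nonneg_right (norm_mul_le _ _) (norm_nonneg _))
    have hB : (0:ℝ) ≤ s * ‖O2‖ + (s - u) * ‖E‖ + (s - u) * ‖O2‖ :=
      add_nonneg (add_nonneg (mul_nonneg hs0 (norm_nonneg _))
        (mul_nonneg hsu' (norm_nonneg _))) (mul_nonneg hsu' (norm_nonneg _))
    have t1 : ‖(P s * Q (s - u) - P (s - u)) * C * (Q u * P s)‖
        ≤ (s * ‖O2‖ + (s - u) * ‖E‖ + (s - u) * ‖O2‖) * ‖C‖ * 1 := by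
      refine (norm3 _ _ _).trans ?_
      exact mul_le_mul (mul_le_mul_of_nonneg_right hL12 (norm_nonneg _)) hQuPs
        (norm_nonneg _) (mul_nonneg hB (norm_nonneg _))
    have t2 : ‖P (s - u) * C * (Q u * P s - P u * (Q s * P s))‖
        ≤ 1 * ‖C‖ * ((s - u) * ‖E‖ + u * ‖O2‖) := by
      refine (norm3 _ _ _).trans ?_
      exact mul_le_mul (mul_le_mul_of_nonneg_right (hPc _ hsu) (norm_nonneg _)) hR12
        (norm_nonneg _) (mul_nonneg zero_le_one (norm_nonneg _))
    calc ‖(P s * Q (s - u) - P (s - u)) * C * (Q u * P s)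
          + P (s - u) * C * (Q u * P s - P u * (Q s * P s))‖
        ≤ (s * ‖O2‖ + (s - u) * ‖E‖ + (s - u) * ‖O2‖) * ‖C‖ * 1
          + 1 * ‖C‖ * ((s - u) * ‖E‖ + u * ‖O2‖) :=
          (norm_add_le _ _).trans (add_le_add t1 t2)
      _ = ‖C‖ * (2 * ‖O2‖ * s + 2 * ‖E‖ * (s - u)) := by ring
  -- integrate the bound
  have hgint : IntervalIntegrable
      (fun u : ℝ => ‖O2 * E - E * O2‖ * (2 * ‖O2‖ * s + 2 * ‖E‖ * (s - u))) volume 0 s := by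
    exact (continuous_const.mul (continuous_const.add
      (continuous_const.mul (continuous_const.sub continuous_id)))).intervalIntegrable 0 s
  have := intervalIntegral.norm_integral_le_of_norm_le (μ := volume)
    (f := fun u => P s * (Q (s - u) * (O2 * E - E * O2) * Q u) * P s
      + (P (s - u) * (E * O2 - O2 * E) * P u) * (Q s * P s))
    (g := fun u => ‖O2 * E - E * O2‖ * (2 * ‖O2‖ * s + 2 * ‖E‖ * (s - u)))
    hs0 ?_ hgint
  · have hval : ∫ u in (0:ℝ)..s, ‖O2 * E - E * O2‖ * (2 * ‖O2‖ * s + 2 * ‖E‖ * (s - u))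
        = ‖O2 * E - E * O2‖ * (2 * ‖O2‖ * s ^ 2 + 2 * ‖E‖ * (s ^ 2 / 2)) := by
      rw [intervalIntegral.integral_const_mul]
      congr 1
      rw [intervalIntegral.integral_comp_sub_left
        (fun x : ℝ => 2 * ‖O2‖ * s + 2 * ‖E‖ * x) s]
      rw [sub_self, sub_zero,
        intervalIntegral.integral_add (f := fun _ => 2 * ‖O2‖ * s) (g := fun x => 2 * ‖E‖ * x)
          (continuous_const.intervalIntegrable 0 s)
          ((continuous_const.mul continuous_id').intervalIntegrable 0 s),
        intervalIntegral.integral_const, intervalIntegral.integral_const_mul,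
        integral_id]
      simp
      ring
    rw [hval] at this
    refine this.trans (le_of_eq (by ring))
  · exact ae_of_all _ (fun u hu => hbound u hu)

/-- One-step second-order Trotter bound. -/
lemma one_step (O E : A) {τ : ℝ} (hτ : 0 ≤ τ)
    (hOc : ∀ s ∈ Set.Icc (0:ℝ) τ, ‖exp (s • O)‖ ≤ 1)
    (hEc : ∀ s ∈ Set.Icc (0:ℝ) τ, ‖exp (s • E)‖ ≤ 1)
    (hLc : ∀ s ∈ Set.Icc (0:ℝ) τ, ‖exp (s • (O + E))‖ ≤ 1) :
    ‖exp (τ • (O + E)) - exp ((τ/2) • O) * exp (τ • E) * exp ((τ/2) • O)‖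
      ≤ ‖O * E - E * O‖ * (‖O‖ + ‖E‖) * τ ^ 3 / 6 := by
  set O2 : A := (2:ℝ)⁻¹ • O with hO2
  have hexpO2 : ∀ s : ℝ, exp (s • O2) = exp ((s/2) • O) := by
    intro s; rw [hO2, smul_smul, div_eq_mul_inv]
  have hPc : ∀ u ∈ Set.Icc (0:ℝ) τ, ‖exp (u • O2)‖ ≤ 1 := by
    intro u hu
    rw [hexpO2]
    exact hOc _ ⟨by linarith [hu.1], by linarith [hu.1, hu.2]⟩
  have hOsum : O2 + O2 + E = O + E := by
    rw [hO2, ← add_smul]; norm_num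
  set S : ℝ → A := fun s => exp (s • O2) * exp (s • E) * exp (s • O2) with hS
  set D : ℝ → A := fun s => (O2 + O2 + E) * S s
    - (O2 * S s + exp (s • O2) * (E * exp (s • E)) * exp (s • O2) + S s * O2) with hD
  -- Duhamel
  have hF : ∀ s : ℝ, HasDerivAt (fun v => exp ((τ - v) • (O + E)) * S v)
      (-(exp ((τ - s) • (O + E)) * D s)) s := by
    intro s
    have hSder : HasDerivAt S
        (O2 * S s + exp (s • O2) * (E * exp (s • E)) * exp (s • O2) + S s * O2) s := by
      have h := ((expd O2 s).mul (expd E s)).mul (expd' O2 s)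
      convert h using 1
      · rfl
      simp only [hS, Pi.mul_apply]
      noncomm_ring
    have h := (expd_rev (O + E) τ s).mul hSder
    convert h using 1
    · rfl
    simp only [hD]
    rw [hOsum, exp_comm (O + E) (τ - s)]
    noncomm_ring
  have contS : Continuous S := ((expc O2).mul (expc E)).mul (expc O2)
  have contD : Continuous D := by
    apply Continuous.sub
    · exact continuous_const.mul contS
    · exact ((continuous_const.mul contS).add
        (((expc O2).mul (continuous_const.mul (expc E))).mul (expc O2))).add
        (contS.mul continuous_const)
  have contG : Continuous fun s : ℝ => exp ((τ - s) • (O + E)) * D s :=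
    ((expc (O + E)).comp (continuous_const.sub continuous_id)).mul contD
  have hFTC := intervalIntegral.integral_eq_sub_of_hasDerivAt (a := 0) (b := τ)
    (f' := fun s => -(exp ((τ - s) • (O + E)) * D s))
    (fun s _ => hF s) (contG.neg.intervalIntegrable 0 τ)
  have h0 : exp ((τ - τ) • (O + E)) * S τ = S τ := by
    rw [sub_self, zero_smul, exp_zero, one_mul]
  have h1 : exp ((τ - 0) • (O + E)) * S 0 = exp (τ • (O + E)) := by
    simp only [hS, sub_zero, zero_smul, exp_zero, one_mul, mul_one]
  rw [intervalIntegral.integral_neg] at hFTC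
  rw [h0, h1] at hFTC
  have key : exp (τ • (O + E)) - S τ
      = ∫ s in (0:ℝ)..τ, exp ((τ - s) • (O + E)) * D s := by
    have h2 := congrArg Neg.neg hFTC
    rw [neg_neg, neg_sub] at h2
    exact h2.symm
  -- norm estimate
  have hbound : ‖exp (τ • (O + E)) - S τ‖
      ≤ ∫ s in (0:ℝ)..τ, ‖O2 * E - E * O2‖ * ((2 * ‖O2‖ + ‖E‖) * s ^ 2) := by
    rw [key]
    have habs : |∫ s in (0:ℝ)..τ, ‖O2 * E - E * O2‖ * ((2 * ‖O2‖ + ‖E‖) * s ^ 2)|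
        = ∫ s in (0:ℝ)..τ, ‖O2 * E - E * O2‖ * ((2 * ‖O2‖ + ‖E‖) * s ^ 2) := by
      apply abs_of_nonneg
      apply intervalIntegral.integral_nonneg hτ
      intro u _; positivity
    refine le_trans (intervalIntegral.norm_integral_le_of_norm_le (μ := volume) hτ ?_
      ((continuous_const.mul (continuous_const.mul (continuous_pow 2))).intervalIntegrable 0 τ))
      le_rfl
    refine ae_of_all _ (fun s hs => ?_)
    have hsmem : s ∈ Set.Icc (0:ℝ) τ := ⟨hs.1.le, hs.2⟩
    have hts : τ - s ∈ Set.Icc (0:ℝ) τ := ⟨by linarith [hs.2], by linarith [hs.1]⟩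
    calc ‖exp ((τ - s) • (O + E)) * D s‖
        ≤ ‖exp ((τ - s) • (O + E))‖ * ‖D s‖ := norm_mul_le _ _
      _ ≤ 1 * (‖O2 * E - E * O2‖ * ((2 * ‖O2‖ + ‖E‖) * s ^ 2)) := by
          apply mul_le_mul (hLc _ hts) ?_ (norm_nonneg _) zero_le_one
          simp only [hD, hS]
          exact defect_bound O2 E hPc hEc hsmem
      _ = ‖O2 * E - E * O2‖ * ((2 * ‖O2‖ + ‖E‖) * s ^ 2) := one_mul _
  have hval : ∫ s in (0:ℝ)..τ, ‖O2 * E - E * O2‖ * ((2 * ‖O2‖ + ‖E‖) * s ^ 2)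
      = ‖O2 * E - E * O2‖ * ((2 * ‖O2‖ + ‖E‖) * (τ ^ 3 / 3)) := by
    rw [intervalIntegral.integral_const_mul, intervalIntegral.integral_const_mul,
      integral_pow]
    norm_num
  have hCn : ‖O2 * E - E * O2‖ = ‖O * E - E * O‖ / 2 := by
    rw [hO2, smul_mul_assoc, mul_smul_comm, ← smul_sub, norm_smul]
    rw [Real.norm_eq_abs, abs_of_pos (by norm_num : (0:ℝ) < 2⁻¹)]
    ring
  have hO2n : ‖O2‖ = ‖O‖ / 2 := by
    rw [hO2, norm_smul, Real.norm_eq_abs, abs_of_pos (by norm_num : (0:ℝ) < 2⁻¹)]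
    ring
  have hgoal : S τ = exp ((τ/2) • O) * exp (τ • E) * exp ((τ/2) • O) := by
    simp only [hS, hexpO2]
  rw [← hgoal]
  refine hbound.trans (le_of_eq ?_)
  rw [hval, hCn, hO2n]
  ring

lemma norm_pow_le_one (h1 : ‖(1:A)‖ ≤ 1) {a : A} (ha : ‖a‖ ≤ 1) (m : ℕ) : ‖a ^ m‖ ≤ 1 := by
  induction m with
  | zero => simpa using h1
  | succ n ih =>
    rw [pow_succ]
    calc ‖a ^ n * a‖ ≤ ‖a ^ n‖ * ‖a‖ := norm_mul_le _ _
      _ ≤ 1 * 1 := mul_le_mul ih ha (norm_nonneg _) zero_le_one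
      _ = 1 := mul_one 1

lemma norm_pow_sub_pow (h1 : ‖(1:A)‖ ≤ 1) {a b : A} (ha : ‖a‖ ≤ 1) (hb : ‖b‖ ≤ 1) (m : ℕ) :
    ‖a ^ m - b ^ m‖ ≤ m * ‖a - b‖ := by
  induction m with
  | zero => simp
  | succ n ih =>
    have hsplit : a ^ (n+1) - b ^ (n+1) = a * (a ^ n - b ^ n) + (a - b) * b ^ n := by
      rw [pow_succ', pow_succ']; noncomm_ring
    rw [hsplit]
    calc ‖a * (a ^ n - b ^ n) + (a - b) * b ^ n‖
        ≤ ‖a * (a ^ n - b ^ n)‖ + ‖(a - b) * b ^ n‖ := norm_add_le _ _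
      _ ≤ ‖a‖ * ‖a ^ n - b ^ n‖ + ‖a - b‖ * ‖b ^ n‖ :=
          add_le_add (norm_mul_le _ _) (norm_mul_le _ _)
      _ ≤ 1 * (n * ‖a - b‖) + ‖a - b‖ * 1 := by
          apply add_le_add
          · exact mul_le_mul ha ih (norm_nonneg _) zero_le_one
          · exact mul_le_mul_of_nonneg_left (norm_pow_le_one h1 hb n) (norm_nonneg _)
      _ = (↑(n + 1)) * ‖a - b‖ := by push_cast; ring

end TrotterAux

open TrotterAux

/-- **Accumulated second-order Trotter–Suzuki error for a nearest-neighbor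
Liouvillian** (Trotter–Suzuki part of the trace-norm certificate, Theorem 1).
If `K₁, …, K_{N−1}` are elements of a complex Banach algebra with `‖Kₗ‖ ≤ b`
that commute whenever `|i − j| ≥ 2`, `O` and `E` are the odd and even parts,
`t ≥ 0`, `m ≥ 1`, `Δt := t/m` satisfies `Δt(‖E‖ + ‖O‖/2) ≤ 1`, and the
exponentials `exp(sO)`, `exp(sE)`, `exp(s(O+E))` are contractions for
`s ∈ [0,Δt]`, then
`‖exp(t(O+E)) − (exp((Δt/2)O)·exp(ΔtE)·exp((Δt/2)O))ᵐ‖ ≤ (tb)³N²/(2m²)`. -/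
theorem trotter_accumulated_nearest_neighbor_bound {A : Type*} [NormedRing A]
    [NormedAlgebra ℂ A] [CompleteSpace A] (N : ℕ) (hN : 2 ≤ N) (K : ℕ → A) (b : ℝ)
    (hb : ∀ l ∈ Finset.Icc 1 (N - 1), ‖K l‖ ≤ b)
    (hcomm : ∀ i ∈ Finset.Icc 1 (N - 1), ∀ j ∈ Finset.Icc 1 (N - 1),
      2 ≤ |(i : ℤ) - (j : ℤ)| → K i * K j = K j * K i)
    (O E : A)
    (hO : O = ∑ l ∈ (Finset.Icc 1 (N - 1)).filter (fun l => Odd l), K l)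
    (hE : E = ∑ l ∈ (Finset.Icc 1 (N - 1)).filter (fun l => Even l), K l)
    (t : ℝ) (ht : 0 ≤ t) (m : ℕ) (hm : 1 ≤ m) (Δt : ℝ) (hΔt : Δt = t / m)
    (hstep : Δt * (‖E‖ + ‖O‖ / 2) ≤ 1)
    (hOexp : ∀ s ∈ Set.Icc (0:ℝ) Δt, ‖exp (s • O)‖ ≤ 1)
    (hEexp : ∀ s ∈ Set.Icc (0:ℝ) Δt, ‖exp (s • E)‖ ≤ 1)
    (hOEexp : ∀ s ∈ Set.Icc (0:ℝ) Δt, ‖exp (s • (O + E))‖ ≤ 1) :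
    ‖exp (t • (O + E)) -
        (exp ((Δt / 2) • O) * exp (Δt • E) * exp ((Δt / 2) • O)) ^ m‖ ≤
      (t * b) ^ 3 * (N : ℝ) ^ 2 / (2 * (m : ℝ) ^ 2) := by
  have hm0 : (0:ℝ) < m := by exact_mod_cast Nat.lt_of_lt_of_le Nat.zero_lt_one hm
  have hΔt0 : 0 ≤ Δt := by rw [hΔt]; positivity
  have h1A : ‖(1:A)‖ ≤ 1 := by
    have := hOEexp 0 ⟨le_refl 0, hΔt0⟩
    simpa using this
  have hb0 : 0 ≤ b :=
    le_trans (norm_nonneg (K 1)) (hb 1 (by rw [Finset.mem_Icc]; omega))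
  -- telescoping
  have hsplit : exp (t • (O + E)) = (exp (Δt • (O + E))) ^ m := by
    have ht' : t = Δt * m := by rw [hΔt]; field_simp
    letI : NormedAlgebra ℚ A := .restrictScalars ℚ ℝ A
    rw [ht', mul_comm Δt, mul_smul, Nat.cast_smul_eq_nsmul, NormedSpace.exp_nsmul]
  have ha1 : ‖exp (Δt • (O + E))‖ ≤ 1 := hOEexp Δt ⟨hΔt0, le_refl _⟩
  have hhalf : Δt / 2 ∈ Set.Icc (0:ℝ) Δt := ⟨by linarith, by linarith⟩
  have hc1 : ‖exp ((Δt / 2) • O) * exp (Δt • E) * exp ((Δt / 2) • O)‖ ≤ 1 := by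
    calc ‖exp ((Δt / 2) • O) * exp (Δt • E) * exp ((Δt / 2) • O)‖
        ≤ ‖exp ((Δt / 2) • O) * exp (Δt • E)‖ * ‖exp ((Δt / 2) • O)‖ := norm_mul_le _ _
      _ ≤ (‖exp ((Δt / 2) • O)‖ * ‖exp (Δt • E)‖) * ‖exp ((Δt / 2) • O)‖ :=
          mul_le_mul_of_nonneg_right (norm_mul_le _ _) (norm_nonneg _)
      _ ≤ (1 * 1) * 1 := by
          apply mul_le_mul _ (hOexp _ hhalf) (norm_nonneg _) (by norm_num)
          exact mul_le_mul (hOexp _ hhalf) (hEexp Δt ⟨hΔt0, le_refl _⟩)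
            (norm_nonneg _) zero_le_one
      _ = 1 := by norm_num
  have honestep := one_step O E hΔt0 hOexp hEexp hOEexp
  have hpow := norm_pow_sub_pow h1A ha1 hc1 m
  -- combinatorial bound on ‖O‖ + ‖E‖
  have hcardIcc : (Finset.Icc 1 (N - 1)).card = N - 1 := by rw [Nat.card_Icc]; omega
  have hOn : ‖O‖ ≤ (((Finset.Icc 1 (N - 1)).filter (fun l => Odd l)).card : ℝ) * b := by
    rw [hO]
    refine (norm_sum_le _ _).trans ?_
    have := Finset.sum_le_card_nsmul ((Finset.Icc 1 (N - 1)).filter (fun l => Odd l))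
      (fun l => ‖K l‖) b (fun l hl => hb l (Finset.mem_filter.1 hl).1)
    simpa [nsmul_eq_mul] using this
  have hEn : ‖E‖ ≤ (((Finset.Icc 1 (N - 1)).filter (fun l => Even l)).card : ℝ) * b := by
    rw [hE]
    refine (norm_sum_le _ _).trans ?_
    have := Finset.sum_le_card_nsmul ((Finset.Icc 1 (N - 1)).filter (fun l => Even l))
      (fun l => ‖K l‖) b (fun l hl => hb l (Finset.mem_filter.1 hl).1)
    simpa [nsmul_eq_mul] using this
  have hcards : ((Finset.Icc 1 (N - 1)).filter (fun l => Odd l)).card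
      + ((Finset.Icc 1 (N - 1)).filter (fun l => Even l)).card = N - 1 := by
    have heq : (Finset.Icc 1 (N - 1)).filter (fun l => Even l)
        = (Finset.Icc 1 (N - 1)).filter (fun l => ¬ Odd l) := by
      apply Finset.filter_congr
      intro x _
      exact (Nat.not_odd_iff_even).symm
    rw [heq, Finset.card_filter_add_card_filter_not, hcardIcc]
  have hsum_norm : ‖O‖ + ‖E‖ ≤ ((N:ℝ) - 1) * b := by
    have := add_le_add hOn hEn
    refine this.trans ?_
    rw [← add_mul]
    apply mul_le_mul_of_nonneg_right _ hb0
    rw [← Nat.cast_add, hcards]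
    push_cast [Nat.cast_sub (by omega : 1 ≤ N)]
    exact le_refl _
  -- bound on the commutator norm
  have hOE : O * E - E * O
      = ∑ l ∈ (Finset.Icc 1 (N - 1)).filter (fun l => Odd l),
          ∑ k ∈ (Finset.Icc 1 (N - 1)).filter (fun k => Even k),
            (K l * K k - K k * K l) := by
    rw [hO, hE, Finset.sum_mul_sum, Finset.sum_mul_sum,
      Finset.sum_comm (s := (Finset.Icc 1 (N - 1)).filter (fun k => Even k))]
    rw [← Finset.sum_sub_distrib]
    exact Finset.sum_congr rfl fun l _ => (Finset.sum_sub_distrib ..).symm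
  have keybound : ∀ l ∈ (Finset.Icc 1 (N - 1)).filter (fun l => Odd l),
      ‖∑ k ∈ (Finset.Icc 1 (N - 1)).filter (fun k => Even k), (K l * K k - K k * K l)‖
        ≤ 3 * (2 * b ^ 2) := by
    intro l hl
    obtain ⟨hlIcc, hlodd⟩ := Finset.mem_filter.1 hl
    obtain ⟨hl1, hl2⟩ := Finset.mem_Icc.1 hlIcc
    set evens := (Finset.Icc 1 (N - 1)).filter (fun k => Even k) with hevens
    have hfilter : ∑ k ∈ evens.filter (fun k : ℕ => (l:ℤ) - 1 ≤ (k:ℤ) ∧ (k:ℤ) ≤ (l:ℤ) + 1),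
        (K l * K k - K k * K l) = ∑ k ∈ evens, (K l * K k - K k * K l) := by
      apply Finset.sum_filter_of_ne
      intro k hk hne
      by_contra hp
      apply hne
      rw [sub_eq_zero]
      apply hcomm l hlIcc k (Finset.mem_filter.1 hk).1
      rw [le_abs]
      push_neg at hp
      omega
    rw [← hfilter]
    refine (norm_sum_le _ _).trans ?_
    have hsub : evens.filter (fun k : ℕ => (l:ℤ) - 1 ≤ (k:ℤ) ∧ (k:ℤ) ≤ (l:ℤ) + 1)
        ⊆ ({l - 1, l, l + 1} : Finset ℕ) := by
      intro k hk
      have hk2 := (Finset.mem_filter.1 hk).2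
      simp only [Finset.mem_insert, Finset.mem_singleton]
      omega
    have hcard : (evens.filter (fun k : ℕ => (l:ℤ) - 1 ≤ (k:ℤ) ∧ (k:ℤ) ≤ (l:ℤ) + 1)).card ≤ 3 := by
      refine (Finset.card_le_card hsub).trans ?_
      refine (Finset.card_insert_le _ _).trans ?_
      have h2 := Finset.card_insert_le l ({l + 1} : Finset ℕ)
      simp only [Finset.card_singleton] at h2
      omega
    have hterm : ∀ k ∈ evens.filter (fun k : ℕ => (l:ℤ) - 1 ≤ (k:ℤ) ∧ (k:ℤ) ≤ (l:ℤ) + 1),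
        ‖K l * K k - K k * K l‖ ≤ 2 * b ^ 2 := by
      intro k hk
      have hkIcc := (Finset.mem_filter.1 (Finset.mem_filter.1 hk).1).1
      calc ‖K l * K k - K k * K l‖ ≤ ‖K l * K k‖ + ‖K k * K l‖ := norm_sub_le _ _
        _ ≤ ‖K l‖ * ‖K k‖ + ‖K k‖ * ‖K l‖ := add_le_add (norm_mul_le _ _) (norm_mul_le _ _)
        _ ≤ 2 * b ^ 2 := by
            have h1 := hb l hlIcc
            have h2 := hb k hkIcc
            have n1 := norm_nonneg (K l)
            have n2 := norm_nonneg (K k)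
            nlinarith
    calc (∑ k ∈ evens.filter (fun k : ℕ => (l:ℤ) - 1 ≤ (k:ℤ) ∧ (k:ℤ) ≤ (l:ℤ) + 1),
            ‖K l * K k - K k * K l‖)
        ≤ (evens.filter (fun k : ℕ => (l:ℤ) - 1 ≤ (k:ℤ) ∧ (k:ℤ) ≤ (l:ℤ) + 1)).card • (2 * b ^ 2) :=
          Finset.sum_le_card_nsmul _ _ _ hterm
      _ ≤ 3 * (2 * b ^ 2) := by
          rw [nsmul_eq_mul]
          apply mul_le_mul_of_nonneg_right _ (by positivity)
          exact_mod_cast hcard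
  have hcomm_norm : ‖O * E - E * O‖
      ≤ ((((Finset.Icc 1 (N - 1)).filter (fun l => Odd l)).card : ℝ)) * (3 * (2 * b ^ 2)) := by
    rw [hOE]
    refine (norm_sum_le _ _).trans ?_
    have := Finset.sum_le_card_nsmul ((Finset.Icc 1 (N - 1)).filter (fun l => Odd l))
      _ (3 * (2 * b ^ 2)) keybound
    simpa [nsmul_eq_mul] using this
  have hoddcard : 2 * ((Finset.Icc 1 (N - 1)).filter (fun l => Odd l)).card ≤ N := by
    have hinj : Set.InjOn (fun l => l / 2)
        ↑((Finset.Icc 1 (N - 1)).filter (fun l => Odd l)) := by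
      intro x hx y hy hxy
      simp only [Finset.coe_filter, Set.mem_setOf_eq, Finset.mem_Icc, Nat.odd_iff] at hx hy
      have hxy2 : x / 2 = y / 2 := hxy
      omega
    have hmaps : ∀ l ∈ (Finset.Icc 1 (N - 1)).filter (fun l => Odd l),
        l / 2 ∈ Finset.range (N / 2) := by
      intro l hl
      simp only [Finset.mem_filter, Finset.mem_Icc, Nat.odd_iff] at hl
      rw [Finset.mem_range]
      omega
    have hcardle := Finset.card_le_card_of_injOn (fun l => l / 2) hmaps hinj
    rw [Finset.card_range] at hcardle
    omega
  have hX : ‖O * E - E * O‖ ≤ 3 * (N:ℝ) * b ^ 2 := by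
    refine hcomm_norm.trans ?_
    have hcast : (2:ℝ) * ((((Finset.Icc 1 (N - 1)).filter (fun l => Odd l)).card : ℝ)) ≤ N := by
      exact_mod_cast hoddcard
    nlinarith [sq_nonneg b]
  -- final assembly
  rw [hsplit]
  have hYnonneg : (0:ℝ) ≤ ‖O‖ + ‖E‖ := by positivity
  have hXnonneg : (0:ℝ) ≤ ‖O * E - E * O‖ := norm_nonneg _
  have hNc : (0:ℝ) ≤ (N:ℝ) := Nat.cast_nonneg N
  have hN1 : (1:ℝ) ≤ (N:ℝ) := by exact_mod_cast (by omega : 1 ≤ N)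
  calc ‖(exp (Δt • (O + E))) ^ m
        - (exp ((Δt / 2) • O) * exp (Δt • E) * exp ((Δt / 2) • O)) ^ m‖
      ≤ m * ‖exp (Δt • (O + E))
          - exp ((Δt / 2) • O) * exp (Δt • E) * exp ((Δt / 2) • O)‖ := hpow
    _ ≤ m * (‖O * E - E * O‖ * (‖O‖ + ‖E‖) * Δt ^ 3 / 6) :=
        mul_le_mul_of_nonneg_left honestep (by positivity)
    _ ≤ m * ((3 * (N:ℝ) * b ^ 2) * (((N:ℝ) - 1) * b) * Δt ^ 3 / 6) := by
        apply mul_le_mul_of_nonneg_left _ (by positivity)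
        have hprod : ‖O * E - E * O‖ * (‖O‖ + ‖E‖)
            ≤ (3 * (N:ℝ) * b ^ 2) * (((N:ℝ) - 1) * b) :=
          mul_le_mul hX hsum_norm hYnonneg (by positivity)
        have hΔ3 : (0:ℝ) ≤ Δt ^ 3 := by positivity
        have := mul_le_mul_of_nonneg_right hprod hΔ3
        linarith
    _ ≤ (t * b) ^ 3 * (N : ℝ) ^ 2 / (2 * (m : ℝ) ^ 2) := by
        rw [hΔt]
        have hid : (m:ℝ) * ((3 * (N:ℝ) * b ^ 2) * (((N:ℝ) - 1) * b) * (t / m) ^ 3 / 6)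
            = t ^ 3 * b ^ 3 * ((N:ℝ) * ((N:ℝ) - 1)) / (2 * (m:ℝ) ^ 2) := by
          field_simp
          ring
        rw [hid, mul_pow]
        have hpos : (0:ℝ) < 2 * (m:ℝ) ^ 2 := by positivity
        rw [div_le_div_iff₀ hpos hpos]
        have ht3 : (0:ℝ) ≤ t ^ 3 * b ^ 3 := by
          exact mul_nonneg (pow_nonneg ht 3) (pow_nonneg hb0 3)
        nlinarith [mul_nonneg (mul_nonneg ht3 hNc) (le_of_lt hpos)]
end
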